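/- arXiv:2106.05175 — 6 statements merged into one kernel-verified Lean document; each statement's English description precedes it below -/
import Mathlib

section
/- Let G be a connected graph and e an edge of G that is not a cut-edge (i.e., G with e deleted is still connected). Then any cycle of minimum length among all cycles of G containing e is a min-cycle. -/
open SimpleGraph

/-- A cycle `c` in `G` is a min-cycle if for every two vertices `u,v` on the cycle,
the distance between `u` and `v` in the graph consisting of the edges of the cycle
(i.e. the distance along the cycle) equals their distance in `G`. -/
def IsMinCycle {V : Type*} {G : SimpleGraph V} {a : V} (c : G.Walk a a) : Prop :=
  c.IsCycle ∧ ∀ u ∈ c.support, ∀ v ∈ c.support,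
    (SimpleGraph.fromEdgeSet {e | e ∈ c.edges}).dist u v = G.dist u v

section Aux

variable {V : Type*} {G : SimpleGraph V}

private lemma aux_end_mem_tail {x : V} (p : G.Walk x x) (hp : p ≠ SimpleGraph.Walk.nil) :
    x ∈ p.support.tail := by
  cases p with
  | nil => exact (hp rfl).elim
  | cons h q => simpa using q.end_mem_support

/-- Two internally disjoint paths with distinct endpoints and disjoint edges form a cycle. -/
private lemma aux_cycle {x y : V} (A : G.Walk x y) (P : G.Walk y x)
    (hA : A.IsPath) (hP : P.IsPath) (hxy : x ≠ y)
    (hsup : ∀ w, w ∈ A.support → w ∈ P.support → w = x ∨ w = y)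
    (hedg : ∀ f ∈ A.edges, f ∉ P.edges) :
    (A.append P).IsCycle := by
  refine ⟨⟨⟨?_⟩, ?_⟩, ?_⟩
  · rw [SimpleGraph.Walk.edges_append]
    exact List.Nodup.append hA.isTrail.edges_nodup hP.isTrail.edges_nodup
      (fun f hf hf' => hedg f hf hf')
  · intro h
    have h0 : (A.append P).length = 0 := by rw [h]; rfl
    rw [SimpleGraph.Walk.length_append] at h0
    exact hxy (SimpleGraph.Walk.eq_of_length_eq_zero
      (show A.length = 0 by omega))
  · rw [SimpleGraph.Walk.tail_support_append]
    have hAx : x ∉ A.support.tail := by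
      intro hx
      have := hA.support_nodup
      rw [SimpleGraph.Walk.support_eq_cons] at this
      exact (List.nodup_cons.1 this).1 hx
    have hPy : y ∉ P.support.tail := by
      intro hy
      have := hP.support_nodup
      rw [SimpleGraph.Walk.support_eq_cons] at this
      exact (List.nodup_cons.1 this).1 hy
    refine List.Nodup.append ?_ ?_ ?_
    · exact hA.support_nodup.sublist (List.tail_sublist _)
    · exact hP.support_nodup.sublist (List.tail_sublist _)
    · intro w hw1 hw2
      rcases hsup w (List.mem_of_mem_tail hw1) (List.mem_of_mem_tail hw2) with rfl | rfl
      · exact hAx hw1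
      · exact hPy hw2

private lemma aux_takeUntil_isPath [DecidableEq V] {x : V} (p : G.Walk x x) (hp : p.IsCycle)
    {y : V} (h : y ∈ p.support) (hxy : y ≠ x) : (p.takeUntil y h).IsPath := by
  have htail : (p.takeUntil y h).support.tail ++ (p.dropUntil y h).support.tail
      = p.support.tail := by
    rw [← SimpleGraph.Walk.tail_support_append, p.take_spec h]
  have hnd := hp.support_nodup
  rw [← htail, List.nodup_append] at hnd
  rw [SimpleGraph.Walk.isPath_def, SimpleGraph.Walk.support_eq_cons, List.nodup_cons]
  refine ⟨?_, hnd.1⟩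
  intro hxT
  exact hnd.2.2 x hxT x (SimpleGraph.Walk.end_mem_tail_support_of_ne hxy _) rfl

private lemma aux_dropUntil_isPath [DecidableEq V] {x : V} (p : G.Walk x x) (hp : p.IsCycle)
    {y : V} (h : y ∈ p.support) (hxy : y ≠ x) : (p.dropUntil y h).IsPath := by
  have htail : (p.takeUntil y h).support.tail ++ (p.dropUntil y h).support.tail
      = p.support.tail := by
    rw [← SimpleGraph.Walk.tail_support_append, p.take_spec h]
  have hnd := hp.support_nodup
  rw [← htail, List.nodup_append] at hnd
  rw [SimpleGraph.Walk.isPath_def, SimpleGraph.Walk.support_eq_cons, List.nodup_cons]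
  refine ⟨?_, hnd.2.1⟩
  intro hyD
  exact hnd.2.2 y (SimpleGraph.Walk.end_mem_tail_support_of_ne hxy.symm _) y hyD rfl

end Aux

/-- If `e` is an edge of a connected graph `G` that is not a cut-edge, then any cycle of
minimum length among all cycles of `G` containing `e` is a min-cycle. -/
theorem min_length_cycle_is_min_cycle {V : Type*} [Fintype V]
    (G : SimpleGraph V) (hG : G.Connected)
    (e : Sym2 V) (he : e ∈ G.edgeSet)
    (hnotcut : (G.deleteEdges {e}).Connected)
    (a : V) (c : G.Walk a a) (hc : c.IsCycle) (hec : e ∈ c.edges)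
    (hmin : ∀ (b : V) (c' : G.Walk b b), c'.IsCycle → e ∈ c'.edges →
      c.length ≤ c'.length) :
    IsMinCycle c := by
  classical
  set H := SimpleGraph.fromEdgeSet {f | f ∈ c.edges} with hHdef
  have hsubE : ∀ f ∈ c.edges, f ∈ H.edgeSet := by
    intro f hf
    rw [hHdef, SimpleGraph.edgeSet_fromEdgeSet]
    exact ⟨hf, G.not_isDiag_of_mem_edgeSet (c.edges_subset_edgeSet hf)⟩
  have hHG : H ≤ G := by
    intro x y hxy
    rw [hHdef, SimpleGraph.fromEdgeSet_adj] at hxy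
    exact c.adj_of_mem_edges hxy.1
  have hreach : ∀ x ∈ c.support, ∀ y ∈ c.support, H.Reachable x y := by
    intro x hx y hy
    have hx' : x ∈ (c.transfer H hsubE).support := by rwa [SimpleGraph.Walk.support_transfer]
    have hy' : y ∈ (c.transfer H hsubE).support := by rwa [SimpleGraph.Walk.support_transfer]
    exact (((c.transfer H hsubE).takeUntil x hx').reverse.append
      ((c.transfer H hsubE).takeUntil y hy')).reachable
  have key : ∀ n : ℕ, ∀ u ∈ c.support, ∀ v ∈ c.support, G.dist u v = n → H.dist u v ≤ n := by
    intro n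
    induction n using Nat.strong_induction_on with
    | _ n IH =>
    intro u hu v hv hduv
    by_contra hlt
    push_neg at hlt
    have hne : u ≠ v := by
      rintro rfl
      rw [SimpleGraph.dist_self] at hlt
      omega
    have hdist0 : G.dist u v ≠ 0 :=
      SimpleGraph.dist_ne_zero_iff_ne_and_reachable.2 ⟨hne, hG.preconnected u v⟩
    have hn1 : 1 ≤ n := by omega
    obtain ⟨P, hP, hPlen⟩ := (hG.preconnected u v).exists_path_of_dist
    rw [hduv] at hPlen
    by_cases hmid : ∃ w ∈ P.support, w ∈ c.support ∧ w ≠ u ∧ w ≠ v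
    · obtain ⟨w, hwP, hwc, hwu, hwv⟩ := hmid
      have h1 : G.dist u w ≤ (P.takeUntil w hwP).length := SimpleGraph.dist_le _
      have h2 : G.dist w v ≤ (P.dropUntil w hwP).length := SimpleGraph.dist_le _
      have hsum : (P.takeUntil w hwP).length + (P.dropUntil w hwP).length = n := by
        rw [← SimpleGraph.Walk.length_append, P.take_spec hwP, hPlen]
      have hl1 : 1 ≤ (P.takeUntil w hwP).length := by
        by_contra h
        exact hwu (SimpleGraph.Walk.eq_of_length_eq_zero
          (show (P.takeUntil w hwP).length = 0 by omega)).symm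
      have hl2 : 1 ≤ (P.dropUntil w hwP).length := by
        by_contra h
        exact hwv (SimpleGraph.Walk.eq_of_length_eq_zero
          (show (P.dropUntil w hwP).length = 0 by omega))
      have k1 : H.dist u w ≤ G.dist u w := IH (G.dist u w) (by omega) u hu w hwc rfl
      have k2 : H.dist w v ≤ G.dist w v := IH (G.dist w v) (by omega) w hwc v hv rfl
      obtain ⟨Q1, hQ1⟩ := (hreach u hu w hwc).exists_walk_length_eq_dist
      obtain ⟨Q2, hQ2⟩ := (hreach w hwc v hv).exists_walk_length_eq_dist
      have htri : H.dist u v ≤ Q1.length + Q2.length := by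
        have := SimpleGraph.dist_le (Q1.append Q2)
        rwa [SimpleGraph.Walk.length_append] at this
      omega
    · push_neg at hmid
      have hPedge : ∀ f ∈ P.edges, f ∉ c.edges := by
        intro f hfP hfc
        induction f with
        | _ x y =>
          have hx : x ∈ c.support := c.fst_mem_support_of_mem_edges hfc
          have hy : y ∈ c.support := c.snd_mem_support_of_mem_edges hfc
          have hxyne : x ≠ y := (c.adj_of_mem_edges hfc).ne
          have hxP : x ∈ P.support := P.fst_mem_support_of_mem_edges hfP
          have hyP : y ∈ P.support := P.snd_mem_support_of_mem_edges hfP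
          have hx' : x = u ∨ x = v := by
            rcases eq_or_ne x u with h | h
            · exact Or.inl h
            · exact Or.inr (hmid x hxP hx h)
          have hy' : y = u ∨ y = v := by
            rcases eq_or_ne y u with h | h
            · exact Or.inl h
            · exact Or.inr (hmid y hyP hy h)
          have hfc' : s(u, v) ∈ c.edges := by
            rcases hx' with h1 | h1 <;> rcases hy' with h2 | h2
            · exact absurd (h1.trans h2.symm) hxyne
            · rwa [h1, h2] at hfc
            · rw [h1, h2] at hfc; rwa [Sym2.eq_swap] at hfc
            · exact absurd (h1.trans h2.symm) hxyne
          have hHadj : H.Adj u v := by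
            rw [hHdef, SimpleGraph.fromEdgeSet_adj]
            exact ⟨hfc', hne⟩
          have : H.dist u v = 1 := SimpleGraph.dist_eq_one_iff_adj.2 hHadj
          omega
      -- rotate the cycle to start at u
      have hvtail : v ∈ c.support.tail := by
        rcases (c.mem_support_iff).1 hv with rfl | h
        · exact aux_end_mem_tail c hc.ne_nil
        · exact h
      have hv2 : v ∈ (c.rotate u hu).support := by
        have : v ∈ (c.rotate u hu).support.tail := ((c.support_rotate u hu).mem_iff).2 hvtail
        exact List.mem_of_mem_tail this
      have hc2cyc : (c.rotate u hu).IsCycle := hc.rotate hu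
      have hc2len : (c.rotate u hu).length = c.length := by
        have hsplit := congrArg SimpleGraph.Walk.length (c.take_spec hu)
        rw [SimpleGraph.Walk.length_append] at hsplit
        show ((c.dropUntil u hu).append (c.takeUntil u hu)).length = c.length
        rw [SimpleGraph.Walk.length_append]
        omega
      have hc2sup : ∀ w ∈ (c.rotate u hu).support, w ∈ c.support := by
        intro w hw
        rcases ((c.rotate u hu).mem_support_iff).1 hw with rfl | h
        · exact hu
        · exact List.mem_of_mem_tail (((c.support_rotate u hu).mem_iff).1 h)
      have hc2edges : ∀ f ∈ (c.rotate u hu).edges, f ∈ c.edges := by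
        intro f hf
        exact ((c.rotate_edges u hu).mem_iff).1 hf
      have hec2 : e ∈ (c.rotate u hu).edges := ((c.rotate_edges u hu).mem_iff).2 hec
      have hspec := (c.rotate u hu).take_spec hv2
      have hlen12 : ((c.rotate u hu).takeUntil v hv2).length
          + ((c.rotate u hu).dropUntil v hv2).length = c.length := by
        have := congrArg SimpleGraph.Walk.length hspec
        rw [SimpleGraph.Walk.length_append] at this
        rw [this, hc2len]
      have hA1path : ((c.rotate u hu).takeUntil v hv2).IsPath :=
        aux_takeUntil_isPath _ hc2cyc hv2 hne.symm
      have hA2path : ((c.rotate u hu).dropUntil v hv2).IsPath :=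
        aux_dropUntil_isPath _ hc2cyc hv2 hne.symm
      have hA1sub : ∀ w ∈ ((c.rotate u hu).takeUntil v hv2).support, w ∈ c.support :=
        fun w hw => hc2sup w (SimpleGraph.Walk.support_takeUntil_subset _ hv2 hw)
      have hA2sub : ∀ w ∈ ((c.rotate u hu).dropUntil v hv2).support, w ∈ c.support :=
        fun w hw => hc2sup w (SimpleGraph.Walk.support_dropUntil_subset _ hv2 hw)
      have hA1edges : ∀ f ∈ ((c.rotate u hu).takeUntil v hv2).edges, f ∈ c.edges :=
        fun f hf => hc2edges f (SimpleGraph.Walk.edges_takeUntil_subset _ hv2 hf)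
      have hA2edges : ∀ f ∈ ((c.rotate u hu).dropUntil v hv2).edges, f ∈ c.edges :=
        fun f hf => hc2edges f (SimpleGraph.Walk.edges_dropUntil_subset _ hv2 hf)
      have hecase : e ∈ ((c.rotate u hu).takeUntil v hv2).edges
          ∨ e ∈ ((c.rotate u hu).dropUntil v hv2).edges := by
        have hEq : ((c.rotate u hu).takeUntil v hv2).edges ++ ((c.rotate u hu).dropUntil v hv2).edges
            = (c.rotate u hu).edges := by rw [← SimpleGraph.Walk.edges_append, hspec]
        rw [← hEq, List.mem_append] at hec2
        exact hec2
      rcases hecase with hcase | hcase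
      · -- e in the arc from u to v; the other arc gives a bound on H.dist
        have hB : H.dist u v ≤ ((c.rotate u hu).dropUntil v hv2).length := by
          have hsub2 : ∀ f ∈ ((c.rotate u hu).dropUntil v hv2).edges, f ∈ H.edgeSet :=
            fun f hf => hsubE f (hA2edges f hf)
          have := SimpleGraph.dist_le (((c.rotate u hu).dropUntil v hv2).transfer H hsub2)
          rw [SimpleGraph.Walk.length_transfer] at this
          rw [SimpleGraph.dist_comm]
          exact this
        have hD : (((c.rotate u hu).takeUntil v hv2).append P.reverse).IsCycle := by
          refine aux_cycle _ _ hA1path hP.reverse hne ?_ ?_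
          · intro w hw1 hw2
            rw [SimpleGraph.Walk.support_reverse, List.mem_reverse] at hw2
            rcases eq_or_ne w u with rfl | hwu
            · exact Or.inl rfl
            · exact Or.inr (hmid w hw2 (hA1sub w hw1) hwu)
          · intro f hf hf'
            rw [SimpleGraph.Walk.edges_reverse, List.mem_reverse] at hf'
            exact hPedge f hf' (hA1edges f hf)
        have heD : e ∈ (((c.rotate u hu).takeUntil v hv2).append P.reverse).edges := by
          rw [SimpleGraph.Walk.edges_append, List.mem_append]
          exact Or.inl hcase
        have hmin' := hmin u _ hD heD
        rw [SimpleGraph.Walk.length_append, SimpleGraph.Walk.length_reverse, hPlen] at hmin'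
        omega
      · -- e in the arc from v to u
        have hB : H.dist u v ≤ ((c.rotate u hu).takeUntil v hv2).length := by
          have hsub2 : ∀ f ∈ ((c.rotate u hu).takeUntil v hv2).edges, f ∈ H.edgeSet :=
            fun f hf => hsubE f (hA1edges f hf)
          have := SimpleGraph.dist_le (((c.rotate u hu).takeUntil v hv2).transfer H hsub2)
          rwa [SimpleGraph.Walk.length_transfer] at this
        have hD : (((c.rotate u hu).dropUntil v hv2).append P).IsCycle := by
          refine aux_cycle _ _ hA2path hP hne.symm ?_ ?_
          · intro w hw1 hw2
            rcases eq_or_ne w u with rfl | hwu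
            · exact Or.inr rfl
            · rcases hmid w hw2 (hA2sub w hw1) hwu with rfl | rfl
              · exact Or.inl rfl
          · intro f hf hf'
            exact hPedge f hf' (hA2edges f hf)
        have heD : e ∈ (((c.rotate u hu).dropUntil v hv2).append P).edges := by
          rw [SimpleGraph.Walk.edges_append, List.mem_append]
          exact Or.inl hcase
        have hmin' := hmin v _ hD heD
        rw [SimpleGraph.Walk.length_append, hPlen] at hmin'
        omega
  refine ⟨hc, fun u hu v hv => ?_⟩
  show H.dist u v = G.dist u v
  have h1 : H.dist u v ≤ G.dist u v := key _ u hu v hv rfl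
  have h2 : G.dist u v ≤ H.dist u v := by
    obtain ⟨Q, hQ⟩ := (hreach u hu v hv).exists_walk_length_eq_dist
    have hsubQ : ∀ f ∈ Q.edges, f ∈ G.edgeSet := by
      intro f hf
      exact (SimpleGraph.edgeSet_subset_edgeSet.2 hHG) (Q.edges_subset_edgeSet hf)
    have := SimpleGraph.dist_le (Q.transfer G hsubQ)
    rwa [SimpleGraph.Walk.length_transfer, hQ] at this
  omega
end

section
/- Let C be a min-cycle in a connected graph G and let v be a vertex of C. Then there exists an edge e of C opposite v — that is, an edge of C whose distance in C from v (the minimum of the C-distances from v to its two endpoints) is at least that of every other edge of C — such that deleting e from G does not change the distance from v to any vertex: d_{G−e}(v,x) = d_G(v,x) for every vertex x. -/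
open SimpleGraph

/-- The distance (along the cycle `c`) from the vertex `v` to an edge, i.e. the minimum of
the cycle-distances from `v` to the two endpoints of the edge. -/
noncomputable def cycleEdgeDistFrom {V : Type*} {G : SimpleGraph V} {a : V}
    (c : G.Walk a a) (v : V) : Sym2 V → ℕ :=
  Sym2.lift ⟨fun x y =>
      min ((SimpleGraph.fromEdgeSet {e | e ∈ c.edges}).dist v x)
          ((SimpleGraph.fromEdgeSet {e | e ∈ c.edges}).dist v y),
    fun x y => min_comm _ _⟩

namespace MinCycleAux

variable {V : Type*} {G : SimpleGraph V}

lemma mem_edges_iff_getVert {u w : V} (p : G.Walk u w) {e : Sym2 V} :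
    e ∈ p.edges ↔ ∃ i, i < p.length ∧ e = s(p.getVert i, p.getVert (i+1)) := by
  induction p with
  | nil => simp
  | cons h q ih =>
    simp only [Walk.edges_cons, List.mem_cons, ih, Walk.length_cons]
    constructor
    · rintro (rfl | ⟨i, hi, rfl⟩)
      · exact ⟨0, by omega, by rw [Walk.getVert_zero, Walk.getVert_cons_succ, Walk.getVert_zero]⟩
      · exact ⟨i+1, by omega, by rw [Walk.getVert_cons_succ, Walk.getVert_cons_succ]⟩
    · rintro ⟨i, hi, rfl⟩
      match i with
      | 0 => exact Or.inl (by rw [Walk.getVert_zero, Walk.getVert_cons_succ, Walk.getVert_zero])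
      | (i+1) => exact Or.inr ⟨i, by omega, by rw [Walk.getVert_cons_succ, Walk.getVert_cons_succ]⟩

lemma exists_decomp_of_mem_edges {u w : V} (p : G.Walk u w) {e : Sym2 V} (he : e ∈ p.edges) :
    ∃ (x y : V) (hxy : G.Adj x y) (p₁ : G.Walk u x) (p₂ : G.Walk y w),
      s(x,y) = e ∧ p = p₁.append (Walk.cons hxy p₂) := by
  induction p with
  | nil => simp at he
  | cons h q ih =>
    rw [Walk.edges_cons, List.mem_cons] at he
    rcases he with rfl | he'
    · exact ⟨_, _, h, Walk.nil, q, rfl, rfl⟩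
    · obtain ⟨x, y, hxy, p₁, p₂, hs, rfl⟩ := ih he'
      exact ⟨x, y, hxy, Walk.cons h p₁, p₂, hs, rfl⟩

lemma exists_prefix_walk {u w : V} (p : G.Walk u w) : ∀ {j : ℕ}, j ≤ p.length →
    ∃ W : G.Walk u (p.getVert j), W.length = j ∧ ∀ f ∈ W.edges, f ∈ p.edges := by
  induction p with
  | nil =>
    intro j hj
    have : j = 0 := by simpa using hj
    subst this
    exact ⟨Walk.nil, rfl, by simp⟩
  | cons h q ih =>
    intro j hj
    match j with
    | 0 => exact ⟨Walk.nil, rfl, by intro f hf; cases hf⟩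
    | j+1 =>
      obtain ⟨W, hl, hs⟩ := ih (by simpa using hj)
      refine ⟨Walk.cons h W, by simp [hl], ?_⟩
      intro f hf
      rw [Walk.edges_cons, List.mem_cons]
      change f ∈ _ :: W.edges at hf
      rw [List.mem_cons] at hf
      rcases hf with rfl | hf
      · exact Or.inl rfl
      · exact Or.inr (hs f hf)

lemma support_getElem_eq_getVert {u w : V} (p : G.Walk u w) :
    ∀ (i : ℕ) (h : i < p.support.length), p.support[i] = p.getVert i := by
  induction p with
  | nil => intro i h; simp at h; subst h; simp
  | cons hadj q ih =>
    intro i h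
    match i with
    | 0 => simp
    | i+1 =>
      have hlt : i < q.support.length := by
        simpa [Walk.support_cons] using h
      have h1 : (Walk.cons hadj q).support[i+1] = q.support[i] := by
        simp [Walk.support_cons]
      rw [h1, Walk.getVert_cons_succ]
      exact ih i hlt


lemma nat_min_step {n a b : ℕ} (h2 : a < n) (hb : b = (a+1) % n) :
    min b (n - b) ≤ min a (n - a) + 1 ∧ min a (n - a) ≤ min b (n - b) + 1 := by
  rcases Nat.lt_or_ge (a+1) n with h | h
  · rw [Nat.mod_eq_of_lt h] at hb; omega
  · have h3 : a + 1 = n := by omega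
    have hb0 : b = 0 := by rw [hb, h3, Nat.mod_self]
    omega

lemma cycle_dist_lower_bound {v : V} (c : G.Walk v v) (hc : c.IsCycle) {j : ℕ}
    (hj : j ≤ c.length) :
    min j (c.length - j) ≤ (fromEdgeSet {e | e ∈ c.edges}).dist v (c.getVert j) := by
  classical
  have hn3 : 3 ≤ c.length := hc.three_le_length
  set n := c.length with hn
  haveI : NeZero n := ⟨by omega⟩
  haveI : Fact (1 < n) := ⟨by omega⟩
  set H := fromEdgeSet {e | e ∈ c.edges} with hH
  have hHe : ∀ f ∈ c.edges, f ∈ H.edgeSet := by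
    intro f hf
    rw [hH, edgeSet_fromEdgeSet]
    exact ⟨hf, G.not_isDiag_of_mem_edgeSet (c.edges_subset_edgeSet hf)⟩
  -- position function
  set pos : V → ZMod n := fun x => ((c.support.tail.idxOf x + 1 : ℕ) : ZMod n) with hposdef
  have htl : c.support.tail.length = n := by
    have := c.length_support
    simp [List.length_tail, this, hn]
  have hposGet : ∀ i ≤ n, pos (c.getVert i) = (i : ZMod n) := by
    have key : ∀ i, 1 ≤ i → i ≤ n → pos (c.getVert i) = (i : ZMod n) := by
      intro i h1 h2
      obtain ⟨i, rfl⟩ : ∃ i', i = i' + 1 := ⟨i - 1, by omega⟩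
      have hi1 : i < c.support.tail.length := by omega
      have hgt : c.support.tail[i] = c.getVert (i+1) := by
        rw [List.getElem_tail]
        exact support_getElem_eq_getVert c (i+1) (by rw [c.length_support]; omega)
      have hidx : c.support.tail.idxOf (c.getVert (i+1)) = i := by
        rw [← hgt]
        exact List.Nodup.idxOf_getElem hc.support_nodup _ _
      rw [hposdef]
      simp only [hidx]
    intro i hi
    rcases Nat.eq_zero_or_pos i with rfl | h1
    · have h0 : c.getVert 0 = c.getVert n := by rw [Walk.getVert_zero, Walk.getVert_length]
      rw [h0, key n (by omega) le_rfl]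
      simp [ZMod.natCast_self]
    · exact key i h1 hi
  -- step along an edge of H
  have hstep : ∀ x y : V, H.Adj x y →
      min (pos y).val (n - (pos y).val) ≤ min (pos x).val (n - (pos x).val) + 1 := by
    intro x y hxy
    rw [hH, fromEdgeSet_adj] at hxy
    obtain ⟨i, hi, hs⟩ := (mem_edges_iff_getVert c).1 hxy.1
    have hpi : pos (c.getVert i) = (i : ZMod n) := hposGet i (by omega)
    have hpi1 : pos (c.getVert (i+1)) = ((i+1 : ℕ) : ZMod n) := hposGet (i+1) (by omega)
    have hvi : ((i : ℕ) : ZMod n).val = i := by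
      rw [ZMod.val_natCast, Nat.mod_eq_of_lt (by omega)]
    have hvi1 : (((i+1 : ℕ)) : ZMod n).val = (i + 1) % n := ZMod.val_natCast _ _
    rcases Sym2.eq_iff.mp hs with ⟨hx, hy⟩ | ⟨hx, hy⟩
    · subst hx; subst hy
      rw [hpi, hpi1, hvi, hvi1]
      exact (nat_min_step (by omega) rfl).1
    · subst hx; subst hy
      rw [hpi, hpi1, hvi, hvi1]
      exact (nat_min_step (by omega) rfl).2
  -- bound along walks
  have hwalk : ∀ (x y : V) (W : H.Walk x y),
      min (pos y).val (n - (pos y).val) ≤ min (pos x).val (n - (pos x).val) + W.length := by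
    intro x y W
    induction W with
    | nil => simp
    | cons hadj q ih =>
      have h1 := hstep _ _ hadj
      rw [Walk.length_cons]
      omega
  -- reachability
  obtain ⟨W0, hW0len, hW0sub⟩ := exists_prefix_walk c hj
  have hreach : H.Reachable v (c.getVert j) :=
    ⟨W0.transfer H (fun f hf => hHe f (hW0sub f hf))⟩
  obtain ⟨W, hWl⟩ := hreach.exists_walk_length_eq_dist
  have hbound := hwalk v (c.getVert j) W
  rw [hWl] at hbound
  have hposv : pos v = ((0 : ℕ) : ZMod n) := by
    have := hposGet 0 (by omega)
    rwa [Walk.getVert_zero] at this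
  have hposj : pos (c.getVert j) = (j : ZMod n) := hposGet j hj
  rw [hposv, hposj] at hbound
  have hv0 : ((0 : ℕ) : ZMod n).val = 0 := by
    rw [ZMod.val_natCast, Nat.zero_mod]
  have hvj : ((j : ℕ) : ZMod n).val = j % n := ZMod.val_natCast _ _
  rw [hv0, hvj] at hbound
  rcases Nat.lt_or_ge j n with h | h
  · rw [Nat.mod_eq_of_lt h] at hbound
    omega
  · have hjn : j = n := by omega
    have : j % n = 0 := by rw [hjn, Nat.mod_self]
    rw [this] at hbound
    omega


lemma cycleEdgeDistFrom_mk {a : V} (c : G.Walk a a) (v x y : V) :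
    cycleEdgeDistFrom c v s(x,y) =
      min ((fromEdgeSet {e | e ∈ c.edges}).dist v x)
          ((fromEdgeSet {e | e ∈ c.edges}).dist v y) := rfl

lemma arc_lemma {a : V} (c : G.Walk a a) (hcyc : c.IsCycle)
    (hdist : ∀ u ∈ c.support, ∀ w ∈ c.support,
      (fromEdgeSet {e | e ∈ c.edges}).dist u w = G.dist u w)
    {v : V} (hv : v ∈ c.support) {e : Sym2 V} (he : e ∈ c.edges)
    (hemax : ∀ f ∈ c.edges, cycleEdgeDistFrom c v f ≤ cycleEdgeDistFrom c v e)
    {p q : V} (hepq : e = s(p, q)) (hdq : G.dist v q = G.dist v p + 1) :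
    ∃ W : (G.deleteEdges {e}).Walk v q, W.length ≤ G.dist v q := by
  classical
  set H := fromEdgeSet {e | e ∈ c.edges} with hH
  set c' := c.rotate v hv with hc'def
  have hc'cyc : c'.IsCycle := hcyc.rotate hv
  have hmemrot : ∀ f : Sym2 V, f ∈ c'.edges ↔ f ∈ c.edges :=
    fun f => (c.rotate_edges v hv).perm.mem_iff
  have hHeq : fromEdgeSet {f : Sym2 V | f ∈ c'.edges} = H := by
    rw [hH]; congr 1; ext f; exact hmemrot f
  have hp_sup : p ∈ c.support := c.fst_mem_support_of_mem_edges (hepq ▸ he)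
  have hq_sup : q ∈ c.support := c.snd_mem_support_of_mem_edges (hepq ▸ he)
  set k := G.dist v p with hk
  have hHp : H.dist v p = k := hdist v hv p hp_sup
  have hHq : H.dist v q = k + 1 := by rw [hdist v hv q hq_sup, ← hdq]
  have hcede : cycleEdgeDistFrom c v e = k := by
    rw [hepq, cycleEdgeDistFrom_mk, ← hH, hHp, hHq]
    omega
  -- decompose c' at e
  have he' : e ∈ c'.edges := (hmemrot e).2 he
  obtain ⟨x, y, hxy, A, B, hsxy, hc'eq⟩ := exists_decomp_of_mem_edges c' he'
  have hnodup : c'.edges.Nodup := hc'cyc.isCircuit.isTrail.edges_nodup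
  have hedgesc' : c'.edges = A.edges ++ (e :: B.edges) := by
    rw [hc'eq, Walk.edges_append, Walk.edges_cons, hsxy]
  have hnod2 := hnodup
  rw [hedgesc', List.nodup_append] at hnod2
  have heB : e ∉ B.edges := (List.nodup_cons.mp hnod2.2.1).1
  have heA : e ∉ A.edges := fun h => (hnod2.2.2 _ h _ List.mem_cons_self) rfl
  set t := A.length with ht
  set m := B.length with hm
  set n := c'.length with hnn
  have hntm : n = t + 1 + m := by
    rw [hnn, hc'eq, Walk.length_append, Walk.length_cons]
    omega
  have hn3 : 3 ≤ n := hc'cyc.three_le_length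
  have hedgeH : ∀ f ∈ c'.edges, f ∈ H.edgeSet := by
    intro f hf
    rw [hH, edgeSet_fromEdgeSet]
    have hfc : f ∈ c.edges := (hmemrot f).1 hf
    exact ⟨hfc, G.not_isDiag_of_mem_edgeSet (c.edges_subset_edgeSet hfc)⟩
  have hAsub : ∀ f ∈ A.edges, f ∈ c'.edges := by
    intro f hf; rw [hedgesc']; exact List.mem_append_left _ hf
  have hBsub : ∀ f ∈ B.edges, f ∈ c'.edges := by
    intro f hf; rw [hedgesc']; exact List.mem_append_right _ (List.mem_cons_of_mem _ hf)
  have hAx : H.dist v x ≤ t := by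
    have h1 := H.dist_le (A.transfer H (fun f hf => hedgeH f (hAsub f hf)))
    rwa [Walk.length_transfer] at h1
  have hBy : H.dist v y ≤ m := by
    have h1 := H.dist_le ((B.reverse).transfer H (fun f hf => by
      rw [Walk.edges_reverse, List.mem_reverse] at hf
      exact hedgeH f (hBsub f hf)))
    rwa [Walk.length_transfer, Walk.length_reverse] at h1
  have hLB : ∀ j, j ≤ n → min j (n - j) ≤ H.dist v (c'.getVert j) := by
    intro j hj
    have h1 := cycle_dist_lower_bound c' hc'cyc hj
    rwa [hHeq] at h1
  have hA_getVert : ∀ j, j ≤ t → c'.getVert j = A.getVert j := by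
    intro j hj
    rw [hc'eq, Walk.getVert_append]
    split_ifs with h
    · rfl
    · have hjt : j = t := by omega
      subst hjt
      rw [← ht]
      simp only [Nat.sub_self, Walk.getVert_zero, Walk.getVert_length]
      exact A.getVert_length.symm
  have hB_getVert : ∀ j : ℕ, c'.getVert (t + 1 + j) = B.getVert j := by
    intro j
    rw [hc'eq, Walk.getVert_append, if_neg (by omega)]
    have h1 : t + 1 + j - t = j + 1 := by omega
    rw [h1, Walk.getVert_cons_succ]
  have hfA : ∀ i, i < t → s(A.getVert i, A.getVert (i+1)) ∈ c.edges := by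
    intro i hi
    exact (hmemrot _).1 (hAsub _ ((mem_edges_iff_getVert A).2 ⟨i, hi, rfl⟩))
  have hfB : ∀ i, i < m → s(B.getVert i, B.getVert (i+1)) ∈ c.edges := by
    intro i hi
    exact (hmemrot _).1 (hBsub _ ((mem_edges_iff_getVert B).2 ⟨i, hi, rfl⟩))
  rcases Sym2.eq_iff.mp (hsxy.trans hepq) with ⟨hxp, hyq⟩ | ⟨hxq, hyp⟩
  · -- cycle traverses e from p to q : use B.reverse (from v to q)
    subst hxp; subst hyq
    have hkt : k ≤ t := hHp ▸ hAx
    have hmk : m ≤ k + 1 := by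
      by_contra hcon
      push_neg at hcon
      have hd1 : k + 1 ≤ H.dist v (B.getVert (m - k - 2)) := by
        have h1 := hLB (t + 1 + (m - k - 2)) (by omega)
        rw [hB_getVert] at h1
        exact le_trans (le_min (by omega) (by omega)) h1
      have hd2 : k + 1 ≤ H.dist v (B.getVert (m - k - 1)) := by
        have h1 := hLB (t + 1 + (m - k - 1)) (by omega)
        rw [hB_getVert] at h1
        exact le_trans (le_min (by omega) (by omega)) h1
      have hfm : s(B.getVert (m - k - 2), B.getVert (m - k - 1)) ∈ c.edges := by
        have h1 : m - k - 2 + 1 = m - k - 1 := by omega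
        have := hfB (m - k - 2) (by omega)
        rwa [h1] at this
      have hcontr := hemax _ hfm
      rw [hcede, cycleEdgeDistFrom_mk, ← hH] at hcontr
      exact absurd (le_trans (le_min hd1 hd2) hcontr) (by omega)
    refine ⟨(B.reverse).transfer (G.deleteEdges {e}) ?_, ?_⟩
    · intro f hf
      rw [Walk.edges_reverse, List.mem_reverse] at hf
      rw [edgeSet_deleteEdges]
      exact ⟨B.edges_subset_edgeSet hf, fun h => heB (h ▸ hf)⟩
    · rw [Walk.length_transfer, Walk.length_reverse, hdq]
      omega
  · -- cycle traverses e from q to p : use A (from v to q)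
    subst hxq; subst hyp
    have hkm : k ≤ m := hHp ▸ hBy
    have htk : t ≤ k + 1 := by
      by_contra hcon
      push_neg at hcon
      have hd1 : k + 1 ≤ H.dist v (A.getVert (k+1)) := by
        have h1 := hLB (k+1) (by omega)
        rw [hA_getVert (k+1) (by omega)] at h1
        exact le_trans (le_min (by omega) (by omega)) h1
      have hd2 : k + 1 ≤ H.dist v (A.getVert (k+2)) := by
        have h1 := hLB (k+2) (by omega)
        rw [hA_getVert (k+2) (by omega)] at h1
        exact le_trans (le_min (by omega) (by omega)) h1
      have hfm : s(A.getVert (k+1), A.getVert (k+2)) ∈ c.edges := hfA (k+1) (by omega)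
      have hcontr := hemax _ hfm
      rw [hcede, cycleEdgeDistFrom_mk, ← hH] at hcontr
      exact absurd (le_trans (le_min hd1 hd2) hcontr) (by omega)
    refine ⟨A.transfer (G.deleteEdges {e}) ?_, ?_⟩
    · intro f hf
      rw [edgeSet_deleteEdges]
      exact ⟨A.edges_subset_edgeSet hf, fun h => heA (h ▸ hf)⟩
    · rw [Walk.length_transfer, hdq]
      omega

end MinCycleAux

open MinCycleAux in
/-- For any vertex `v` of a min-cycle `c` of a connected graph `G` there is an edge `e` of
`c` opposite `v` (at maximal cycle-distance from `v` among edges of `c`) whose deletion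
does not change the distance from `v` to any vertex. -/
theorem opposite_edge_not_needed {V : Type*} [Fintype V]
    (G : SimpleGraph V) (hG : G.Connected)
    (a : V) (c : G.Walk a a) (hmc : IsMinCycle c)
    (v : V) (hv : v ∈ c.support) :
    ∃ e ∈ c.edges,
      (∀ f ∈ c.edges, cycleEdgeDistFrom c v f ≤ cycleEdgeDistFrom c v e) ∧
      ∀ x : V, (G.deleteEdges {e}).dist v x = G.dist v x := by
  classical
  obtain ⟨hcyc, hdist⟩ := hmc
  -- a maximizing edge exists
  have hne : c.edges.toFinset.Nonempty := by
    rw [List.toFinset_nonempty_iff]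
    have h3 := hcyc.three_le_length
    intro h0
    have := c.length_edges
    rw [h0] at this
    simp at this
    omega
  obtain ⟨e, heF, hemax'⟩ := Finset.exists_max_image c.edges.toFinset (cycleEdgeDistFrom c v) hne
  have he : e ∈ c.edges := List.mem_toFinset.mp heF
  have hemax : ∀ f ∈ c.edges, cycleEdgeDistFrom c v f ≤ cycleEdgeDistFrom c v e :=
    fun f hf => hemax' f (List.mem_toFinset.mpr hf)
  refine ⟨e, he, hemax, ?_⟩
  intro x
  -- it suffices to exhibit a short walk in the deleted graph
  suffices hsuff : ∃ W : (G.deleteEdges {e}).Walk v x, W.length ≤ G.dist v x by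
    obtain ⟨W, hW⟩ := hsuff
    refine le_antisymm (le_trans ((G.deleteEdges {e}).dist_le W) hW) ?_
    exact Reachable.dist_anti (G.deleteEdges_le {e}) ⟨W⟩
  obtain ⟨P, hPp, hPl⟩ := hG.exists_path_of_dist v x
  by_cases heP : e ∈ P.edges
  · -- the shortest path uses e : reroute
    obtain ⟨p, q, hpq, W₁, W₂, hs, hPeq⟩ := exists_decomp_of_mem_edges P heP
    have hnod : P.edges.Nodup := hPp.isTrail.edges_nodup
    rw [hPeq, Walk.edges_append, Walk.edges_cons, hs] at hnod
    have heW2 : e ∉ W₂.edges := (List.nodup_cons.mp (List.nodup_append.mp hnod).2.1).1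
    set t := W₁.length with htdef
    have hlen : G.dist v x = t + 1 + W₂.length := by
      rw [← hPl, hPeq, Walk.length_append, Walk.length_cons]
      omega
    -- distance facts
    have hdp_le : G.dist v p ≤ t := G.dist_le W₁
    have hdq_le : G.dist v q ≤ t + 1 := by
      have h1 := G.dist_le (W₁.concat hpq)
      rwa [Walk.length_concat] at h1
    have hdx_le : G.dist v x ≤ G.dist v q + W₂.length := by
      obtain ⟨S, hS⟩ := (hG v q).exists_walk_length_eq_dist
      have h1 := G.dist_le (S.append W₂)
      rwa [Walk.length_append, hS] at h1
    have hdqp_le : G.dist v q ≤ G.dist v p + 1 := by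
      obtain ⟨S, hS⟩ := (hG v p).exists_walk_length_eq_dist
      have h1 := G.dist_le (S.concat hpq)
      rwa [Walk.length_concat, hS] at h1
    have hdq : G.dist v q = t + 1 := by omega
    have hdp : G.dist v p = t := by omega
    have hdq' : G.dist v q = G.dist v p + 1 := by omega
    obtain ⟨Wa, hWa⟩ := arc_lemma c hcyc hdist hv he hemax hs.symm hdq'
    refine ⟨Wa.append (W₂.transfer (G.deleteEdges {e}) ?_), ?_⟩
    · intro f hf
      rw [edgeSet_deleteEdges]
      exact ⟨W₂.edges_subset_edgeSet hf, fun h => heW2 (h ▸ hf)⟩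
    · rw [Walk.length_append, Walk.length_transfer]
      omega
  · -- the shortest path avoids e : transfer it
    refine ⟨P.transfer (G.deleteEdges {e}) ?_, ?_⟩
    · intro f hf
      rw [edgeSet_deleteEdges]
      exact ⟨P.edges_subset_edgeSet hf, fun h => heP (h ▸ hf)⟩
    · rw [Walk.length_transfer, hPl]
end

section
/- Let G be a connected graph, H a biconnected component of G containing at least two vertices, and let k_max be the maximum length of a min-cycle of G all of whose vertices lie in H. Then for every edge e = {u,v} of G with both endpoints in H, the distance from u to v in G with e deleted satisfies d_{G−e}(u,v) ≤ d_G(u,v) + k_max − 2. -/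
open SimpleGraph

/-- There exist two internally vertex-disjoint (distinct) paths between `u` and `v` in `G`. -/
def TwoDisjointPaths {V : Type*} (G : SimpleGraph V) (u v : V) : Prop :=
  ∃ p q : G.Walk u v, p.IsPath ∧ q.IsPath ∧ p ≠ q ∧
    ∀ x, x ∈ p.support → x ∈ q.support → x = u ∨ x = v

/-- `H` is a biconnected component of `G`: a maximal set of vertices such that between
any two distinct vertices of `H` there are two internally vertex-disjoint paths in `G`. -/
def IsBiconnectedComponent {V : Type*} (G : SimpleGraph V) (H : Set V) : Prop :=
  (∀ u ∈ H, ∀ v ∈ H, u ≠ v → TwoDisjointPaths G u v) ∧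
  ∀ H' : Set V, H ⊆ H' → (∀ u ∈ H', ∀ v ∈ H', u ≠ v → TwoDisjointPaths G u v) → H' = H


open SimpleGraph Walk

section AuxLemmas
variable {V : Type*} {G : SimpleGraph V}

lemma aux_list_helper {α : Type*} [DecidableEq α] {l1 l2 : List α} {x y : α}
    (hpre : l1 <+: l2) (h1 : l1 ≠ []) (h2 : l2 ≠ [])
    (hlast2 : l2.getLast h2 = y) (hcount : l2.count y ≤ 1)
    (hmem : y ∈ l1) (hlast1 : l1.getLast h1 = x) (hne : x ≠ y) : False := by
  obtain ⟨r, hr⟩ := hpre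
  rcases List.eq_nil_or_concat r with rfl | ⟨r', z, rfl⟩
  · rw [List.append_nil] at hr
    subst hr
    exact hne (hlast1 ▸ hlast2 ▸ rfl)
  · rw [List.concat_eq_append, ← List.append_assoc] at hr
    subst hr
    have hz : ((l1 ++ r') ++ [z]).getLast (by simp) = z := List.getLast_append _
    rw [List.getLast_congr _ (by simp) rfl] at hlast2
    have hzy : z = y := hz.symm.trans hlast2
    subst hzy
    have hc1 : 1 ≤ l1.count z := List.count_pos_iff.mpr hmem
    have h2c : 2 ≤ ((l1 ++ r') ++ [z]).count z := by
      simp only [List.count_append, List.count_singleton]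
      simp
      omega
    omega

lemma aux_support_getLast {u v : V} (p : G.Walk u v) (h : p.support ≠ []) :
    p.support.getLast h = v := by
  induction p with
  | nil => simp
  | cons ha p ih =>
      have h2 : (Walk.cons ha p).support = _ :: p.support := Walk.support_cons ha p
      rw [List.getLast_congr _ (by simp) h2, List.getLast_cons (by simp [Walk.support_ne_nil])]
      exact ih _

lemma aux_support_takeUntil_prefix [DecidableEq V] {u v w : V} (p : G.Walk u v)
    (h : w ∈ p.support) : (p.takeUntil w h).support <+: p.support :=
  ⟨(p.dropUntil w h).support.tail, by rw [← Walk.support_append, Walk.take_spec]⟩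

lemma aux_support_decomp [DecidableEq V] {u v w : V} (p : G.Walk u v)
    (h : w ∈ p.support) :
    p.support = (p.takeUntil w h).support ++ (p.dropUntil w h).support.tail := by
  rw [← Walk.support_append, Walk.take_spec]

lemma aux_takeUntil_swap [DecidableEq V] {a b w1 w2 : V} (p : G.Walk a b)
    (h1 : w1 ∈ p.support) (h2 : w2 ∈ p.support) (hne : w1 ≠ w2)
    (hmem : w2 ∈ (p.takeUntil w1 h1).support) :
    w1 ∉ (p.takeUntil w2 h2).support := by
  intro hw1
  have P1 := aux_support_takeUntil_prefix p h1
  have P2 := aux_support_takeUntil_prefix p h2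
  have hL1 : (p.takeUntil w1 h1).support.getLast (by simp [Walk.support_ne_nil]) = w1 :=
    aux_support_getLast _ _
  have hL2 : (p.takeUntil w2 h2).support.getLast (by simp [Walk.support_ne_nil]) = w2 :=
    aux_support_getLast _ _
  have hc1 : (p.takeUntil w1 h1).support.count w1 = 1 := p.count_support_takeUntil_eq_one h1
  have hc2 : (p.takeUntil w2 h2).support.count w2 = 1 := p.count_support_takeUntil_eq_one h2
  rcases List.prefix_or_prefix_of_prefix P1 P2 with hp | hp
  · exact aux_list_helper hp (by simp [Walk.support_ne_nil]) (by simp [Walk.support_ne_nil])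
      hL2 (le_of_eq hc2) hmem hL1 hne
  · exact aux_list_helper hp (by simp [Walk.support_ne_nil]) (by simp [Walk.support_ne_nil])
      hL1 (le_of_eq hc1) hw1 hL2 hne.symm

lemma aux_end_not_mem_takeUntil [DecidableEq V] {a b w : V} {p : G.Walk a b} (hp : p.IsPath)
    (h : w ∈ p.support) (hwb : w ≠ b) : b ∉ (p.takeUntil w h).support := by
  intro hb
  have hdec := aux_support_decomp p h
  have hbD : b ∈ (p.dropUntil w h).support := (p.dropUntil w h).end_mem_support
  have hbD' : b ∈ (p.dropUntil w h).support.tail := by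
    rw [(p.dropUntil w h).support_eq_cons] at hbD
    rcases List.mem_cons.mp hbD with h' | h'
    · exact absurd h'.symm hwb
    · exact h'
  have hcount : p.support.count b ≤ 1 := List.nodup_iff_count_le_one.1 hp.support_nodup b
  rw [hdec, List.count_append] at hcount
  have c1 : 1 ≤ (p.takeUntil w h).support.count b := List.count_pos_iff.mpr hb
  have c2 : 1 ≤ (p.dropUntil w h).support.tail.count b := List.count_pos_iff.mpr hbD'
  omega

lemma aux_end_mem_tail_s4 {x : V} (c : G.Walk x x) (hnil : c.support.tail ≠ []) :
    x ∈ c.support.tail := by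
  have h2 : c.support.getLast (by simp [Walk.support_ne_nil]) = x := aux_support_getLast c _
  rw [List.getLast_congr _ (by simp) c.support_eq_cons, List.getLast_cons hnil] at h2
  have h3 := List.getLast_mem hnil
  rwa [h2] at h3

lemma aux_cycle_split [DecidableEq V] {x b : V} {c : G.Walk x x} (hc : c.IsCycle)
    (hb : b ∈ c.support) (hbx : b ≠ x) :
    (c.takeUntil b hb).IsPath ∧ (c.dropUntil b hb).IsPath ∧
    (∀ w, w ∈ (c.takeUntil b hb).support → w ∈ (c.dropUntil b hb).support →
      w = x ∨ w = b) := by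
  set T := c.takeUntil b hb with hT
  set D := c.dropUntil b hb with hD
  have hdec : c.support = T.support ++ D.support.tail := aux_support_decomp c hb
  have hTc : T.support = x :: T.support.tail := T.support_eq_cons
  have hDc : D.support = b :: D.support.tail := D.support_eq_cons
  have hcc : c.support = x :: c.support.tail := c.support_eq_cons
  have htail : c.support.tail = T.support.tail ++ D.support.tail := by
    have h1 : x :: c.support.tail = (x :: T.support.tail) ++ D.support.tail := by
      rw [← hTc, ← hdec, ← hcc]
    simpa only [List.cons_append, List.cons.injEq, true_and] using h1
  have hnd : c.support.tail.Nodup := hc.support_nodup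
  have htail_ne : c.support.tail ≠ [] := by
    have h3 := hc.three_le_length
    intro h0
    have h1 := c.length_support
    rw [hcc, h0] at h1
    simp only [List.length_cons, List.length_nil] at h1
    omega
  have hxtail : x ∈ c.support.tail := aux_end_mem_tail_s4 c htail_ne
  have hcx : c.support.tail.count x = 1 := List.count_eq_one_of_mem hnd hxtail
  have hxD : x ∈ D.support.tail := by
    have h1 : x ∈ D.support := D.end_mem_support
    rw [hDc] at h1
    rcases List.mem_cons.mp h1 with h' | h'
    · exact absurd h'.symm hbx
    · exact h'
  have hxT : x ∉ T.support.tail := by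
    intro hx
    have c1 : 1 ≤ T.support.tail.count x := List.count_pos_iff.mpr hx
    have c2 : 1 ≤ D.support.tail.count x := List.count_pos_iff.mpr hxD
    rw [htail, List.count_append] at hcx
    omega
  have hTnd : T.support.tail.Nodup := by
    rw [htail] at hnd; exact hnd.of_append_left
  have hDnd : D.support.tail.Nodup := by
    rw [htail] at hnd; exact hnd.of_append_right
  have hTpath : T.IsPath := by
    apply Walk.IsPath.mk'
    rw [hTc]
    exact List.nodup_cons.mpr ⟨hxT, hTnd⟩
  have hbTt : b ∈ T.support.tail := by
    have h1 : b ∈ T.support := T.end_mem_support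
    rw [hTc] at h1
    rcases List.mem_cons.mp h1 with h' | h'
    · exact absurd h' hbx
    · exact h'
  have hcbT : T.support.count b = 1 := c.count_support_takeUntil_eq_one hb
  have hcbTt : T.support.tail.count b = 1 := by
    rw [hTc, List.count_cons_of_ne hbx.symm] at hcbT
    exact hcbT
  have hbD : b ∉ D.support.tail := by
    intro hbD
    have hcb : c.support.tail.count b ≤ 1 := List.nodup_iff_count_le_one.1 hnd b
    rw [htail, List.count_append, hcbTt] at hcb
    have : 1 ≤ D.support.tail.count b := List.count_pos_iff.mpr hbD
    omega
  have hDpath : D.IsPath := by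
    apply Walk.IsPath.mk'
    rw [hDc]
    exact List.nodup_cons.mpr ⟨hbD, hDnd⟩
  refine ⟨hTpath, hDpath, fun w hwT hwD => ?_⟩
  by_contra hcon
  push_neg at hcon
  obtain ⟨hwx, hwb⟩ := hcon
  have hwTt : w ∈ T.support.tail := by
    rw [hTc] at hwT
    rcases List.mem_cons.mp hwT with h' | h'
    · exact absurd h' hwx
    · exact h'
  have hwDt : w ∈ D.support.tail := by
    rw [hDc] at hwD
    rcases List.mem_cons.mp hwD with h' | h'
    · exact absurd h' hwb
    · exact h'
  have hcw : c.support.tail.count w ≤ 1 := List.nodup_iff_count_le_one.1 hnd w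
  rw [htail, List.count_append] at hcw
  have c1 : 1 ≤ T.support.tail.count w := List.count_pos_iff.mpr hwTt
  have c2 : 1 ≤ D.support.tail.count w := List.count_pos_iff.mpr hwDt
  omega

lemma aux_arc_pair_aux [DecidableEq V] {x w1 w2 : V} {c : G.Walk x x} (hc : c.IsCycle)
    (h1 : w1 ∈ c.support) (h2 : w2 ∈ c.support) (h12 : w1 ≠ w2)
    (hx1 : w1 ≠ x) (hx2 : w2 ≠ x)
    (hcase : w2 ∉ (c.takeUntil w1 h1).support) :
    ∃ (A1 : G.Walk x w1) (A2 : G.Walk x w2), A1.IsPath ∧ A2.IsPath ∧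
      (∀ w ∈ A1.support, w ∈ c.support) ∧ (∀ w ∈ A2.support, w ∈ c.support) ∧
      (∀ w, w ∈ A1.support → w ∈ A2.support → w = x) := by
  obtain ⟨hTp, hDp, hTD⟩ := aux_cycle_split hc h1 hx1
  set T := c.takeUntil w1 h1 with hT
  set D := c.dropUntil w1 h1 with hD
  have hw2D : w2 ∈ D.support := by
    have := aux_support_decomp c h1
    rw [this] at h2
    rcases List.mem_append.mp h2 with h' | h'
    · exact absurd h' hcase
    · exact List.mem_of_mem_tail h'
  refine ⟨T, (D.dropUntil w2 hw2D).reverse, hTp, (hDp.dropUntil hw2D).reverse, ?_, ?_, ?_⟩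
  · exact fun w hw => c.support_takeUntil_subset h1 hw
  · intro w hw
    rw [Walk.support_reverse, List.mem_reverse] at hw
    exact c.support_dropUntil_subset h1 (D.support_dropUntil_subset hw2D hw)
  · intro w hwT hwA2
    rw [Walk.support_reverse, List.mem_reverse] at hwA2
    have hwD : w ∈ D.support := D.support_dropUntil_subset hw2D hwA2
    rcases hTD w hwT hwD with h' | h'
    · exact h'
    · -- w = w1 impossible: w1 ∉ (D.dropUntil w2).support
      exfalso
      subst h'
      have hw1D : D.support.count w = 1 :=
        List.count_eq_one_of_mem hDp.support_nodup D.start_mem_support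
      have hdecD := aux_support_decomp D hw2D
      have hw1T2 : w ∈ (D.takeUntil w2 hw2D).support := (D.takeUntil w2 hw2D).start_mem_support
      have hw1drop : w ∈ (D.dropUntil w2 hw2D).support.tail := by
        rw [(D.dropUntil w2 hw2D).support_eq_cons] at hwA2
        rcases List.mem_cons.mp hwA2 with h'' | h''
        · exact absurd h'' h12
        · exact h''
      rw [hdecD, List.count_append] at hw1D
      have c1 : 1 ≤ (D.takeUntil w2 hw2D).support.count w := List.count_pos_iff.mpr hw1T2
      have c2 : 1 ≤ (D.dropUntil w2 hw2D).support.tail.count w := List.count_pos_iff.mpr hw1drop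
      omega

lemma aux_arc_pair [DecidableEq V] {x w1 w2 : V} {c : G.Walk x x} (hc : c.IsCycle)
    (h1 : w1 ∈ c.support) (h2 : w2 ∈ c.support) (h12 : w1 ≠ w2)
    (hx1 : w1 ≠ x) (hx2 : w2 ≠ x) :
    ∃ (A1 : G.Walk x w1) (A2 : G.Walk x w2), A1.IsPath ∧ A2.IsPath ∧
      (∀ w ∈ A1.support, w ∈ c.support) ∧ (∀ w ∈ A2.support, w ∈ c.support) ∧
      (∀ w, w ∈ A1.support → w ∈ A2.support → w = x) := by
  by_cases hcase : w2 ∈ (c.takeUntil w1 h1).support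
  · have hcase' := aux_takeUntil_swap c h1 h2 h12 hcase
    obtain ⟨A2, A1, p2, p1, s2, s1, hint⟩ := aux_arc_pair_aux hc h2 h1 h12.symm hx2 hx1 hcase'
    exact ⟨A1, A2, p1, p2, s1, s2, fun w hw1 hw2 => hint w hw2 hw1⟩
  · exact aux_arc_pair_aux hc h1 h2 h12 hx1 hx2 hcase

lemma aux_tdp_symm {a b : V} (h : TwoDisjointPaths G a b) : TwoDisjointPaths G b a := by
  obtain ⟨p, q, hp, hq, hpq, hint⟩ := h
  refine ⟨p.reverse, q.reverse, hp.reverse, hq.reverse, ?_, ?_⟩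
  · intro h
    apply hpq
    rw [← p.reverse_reverse, h, q.reverse_reverse]
  · intro x hx hy
    rw [Walk.support_reverse, List.mem_reverse] at hx hy
    rcases hint x hx hy with h | h
    · exact Or.inr h
    · exact Or.inl h

lemma aux_cycle_tail_ne {x : V} {c : G.Walk x x} (hc : c.IsCycle) : c.support.tail ≠ [] := by
  have h3 := hc.three_le_length
  intro h0
  have h1 := c.length_support
  rw [c.support_eq_cons, h0] at h1
  simp only [List.length_cons, List.length_nil] at h1
  omega

lemma aux_mem_support_tail {z : V} (p : G.Walk z z) (hne : p.support.tail ≠ []) (w : V) :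
    w ∈ p.support ↔ w ∈ p.support.tail := by
  constructor
  · intro h
    rw [p.support_eq_cons] at h
    rcases List.mem_cons.mp h with h | h
    · exact h ▸ aux_end_mem_tail_s4 p hne
    · exact h
  · intro h
    exact List.mem_of_mem_tail h

lemma aux_rotate_mem [DecidableEq V] {r x w : V} {c : G.Walk r r} (h : x ∈ c.support)
    (hne : c.support.tail ≠ []) : w ∈ (c.rotate x h).support ↔ w ∈ c.support := by
  have hperm := c.support_rotate x h
  have hne2 : (c.rotate x h).support.tail ≠ [] := by
    intro h0
    rw [h0] at hperm
    exact hne (List.Perm.eq_nil hperm.perm.symm)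
  rw [aux_mem_support_tail _ hne2, aux_mem_support_tail _ hne, hperm.mem_iff]

lemma aux_append_path {a m b : V} {p : G.Walk a m} {q : G.Walk m b}
    (hp : p.IsPath) (hq : q.IsPath)
    (hint : ∀ w, w ∈ p.support → w ∈ q.support → w = m) : (p.append q).IsPath := by
  apply Walk.IsPath.mk'
  rw [Walk.support_append]
  apply List.Nodup.append hp.support_nodup
  · have := hq.support_nodup
    rw [q.support_eq_cons] at this
    exact (List.nodup_cons.mp this).2
  · intro w hwp hwq
    have hmt : m ∉ q.support.tail := by
      have := hq.support_nodup
      rw [q.support_eq_cons] at this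
      exact (List.nodup_cons.mp this).1
    have := hint w hwp (List.mem_of_mem_tail hwq)
    subst this
    exact hmt hwq

lemma aux_nodup_subset_length {l : List V} {a b : V} (hnd : l.Nodup)
    (hsub : ∀ w ∈ l, w = a ∨ w = b) : l.length ≤ 2 := by
  classical
  rw [← List.toFinset_card_of_nodup hnd]
  have : l.toFinset ⊆ {a, b} := by
    intro w hw
    rcases hsub w (List.mem_toFinset.mp hw) with h | h <;> simp [h]
  calc l.toFinset.card ≤ ({a, b} : Finset V).card := Finset.card_le_card this
    _ ≤ 2 := Finset.card_insert_le a {b} |>.trans (by simp)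

lemma aux_cycle_tdp [DecidableEq V] {r a b : V} {c : G.Walk r r} (hc : c.IsCycle)
    (ha : a ∈ c.support) (hb : b ∈ c.support) (hab : a ≠ b) :
    TwoDisjointPaths G a b := by
  classical
  have hrot := hc.rotate ha
  set rot := c.rotate a ha with hrotdef
  have hb' : b ∈ rot.support := (aux_rotate_mem ha (aux_cycle_tail_ne hc)).mpr hb
  obtain ⟨hTp, hDp, hTD⟩ := aux_cycle_split hrot hb' hab.symm
  refine ⟨rot.takeUntil b hb', (rot.dropUntil b hb').reverse, hTp, hDp.reverse, ?_, ?_⟩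
  · intro heq
    have hTsub : ∀ w ∈ (rot.takeUntil b hb').support, w = a ∨ w = b := by
      intro w hw
      have hw2 : w ∈ (rot.dropUntil b hb').support := by
        rw [heq] at hw
        rw [Walk.support_reverse, List.mem_reverse] at hw
        exact hw
      rcases hTD w hw hw2 with h | h
      · exact Or.inl h
      · exact Or.inr h
    have hDsub : ∀ w ∈ (rot.dropUntil b hb').support, w = a ∨ w = b := by
      intro w hw
      have hw1 : w ∈ (rot.takeUntil b hb').support := by
        rw [heq, Walk.support_reverse, List.mem_reverse]
        exact hw
      rcases hTD w hw1 hw with h | h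
      · exact Or.inl h
      · exact Or.inr h
    have l1 : (rot.takeUntil b hb').support.length ≤ 2 :=
      aux_nodup_subset_length hTp.support_nodup hTsub
    have l2 : (rot.dropUntil b hb').support.length ≤ 2 :=
      aux_nodup_subset_length hDp.support_nodup hDsub
    have hlen : rot.length = (rot.takeUntil b hb').length + (rot.dropUntil b hb').length := by
      rw [← Walk.length_append, Walk.take_spec]
    have e1 := (rot.takeUntil b hb').length_support
    have e2 := (rot.dropUntil b hb').length_support
    have := hrot.three_le_length
    omega
  · intro w hw1 hw2
    rw [Walk.support_reverse, List.mem_reverse] at hw2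
    exact hTD w hw1 hw2

lemma aux_first_hit {a b : V} (p : G.Walk a b) (S : Set V) (hb : b ∈ S) :
    ∃ (z : V) (q : G.Walk a z), z ∈ S ∧ (∀ w ∈ q.support, w ∈ p.support) ∧
      (∀ w, w ∈ q.support → w ∈ S → w = z) ∧ (p.IsPath → q.IsPath) := by
  induction p with
  | @nil a' =>
      refine ⟨a', Walk.nil, hb, by simp, ?_, fun _ => Walk.IsPath.nil⟩
      intro w hw _
      simpa using hw
  | @cons a' c' b' ha p ih =>
      by_cases haS : a' ∈ S
      · refine ⟨a', Walk.nil, haS, by simp, ?_, fun _ => Walk.IsPath.nil⟩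
        intro w hw _
        simpa using hw
      · obtain ⟨z, q, hz, hsub, hfirst, hpath⟩ := ih hb
        refine ⟨z, Walk.cons ha q, hz, ?_, ?_, ?_⟩
        · intro w hw
          rw [Walk.support_cons] at hw ⊢
          rcases List.mem_cons.mp hw with h | h
          · exact h ▸ List.mem_cons_self
          · exact List.mem_cons_of_mem _ (hsub w h)
        · intro w hw hwS
          rw [Walk.support_cons] at hw
          rcases List.mem_cons.mp hw with h | h
          · exact absurd (h ▸ hwS) haS
          · exact hfirst w h hwS
        · intro hp
          rw [Walk.cons_isPath_iff] at hp
          exact (hpath hp.1).cons (fun hc => hp.2 (hsub a' hc))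

lemma aux_bad_fan [DecidableEq V] {u v h w0 : V} {CS : Set V}
    (huv : u ≠ v) (hvCS : v ∈ CS) (huCS : u ∈ CS)
    (r1 r2 : G.Walk h v) (hr1 : r1.IsPath) (hr2 : r2.IsPath)
    (hfir1 : ∀ w, w ∈ r1.support → w ∈ CS → w = v)
    (hfir2 : ∀ w, w ∈ r2.support → w ∈ CS → w = v)
    (hr12 : ∀ w, w ∈ r1.support → w ∈ r2.support → w = h ∨ w = v)
    (s1 : G.Walk h u) (hs1 : s1.IsPath)
    (hfis1 : ∀ w, w ∈ s1.support → w ∈ CS → w = u)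
    (q : G.Walk u w0) (hq : q.IsPath)
    (hqsub : ∀ w ∈ q.support, w ∈ s1.support)
    (hlast : ∀ t, t ∈ q.support → (t ∈ r1.support ∨ t ∈ r2.support) → t = w0)
    (hw0r1 : w0 ∈ r1.support) :
    ∃ (f1 : G.Walk h u) (f2 : G.Walk h v), f1.IsPath ∧ f2.IsPath ∧
      (∀ w, w ∈ f1.support → w ∈ CS → w = u) ∧
      (∀ w, w ∈ f2.support → w ∈ CS → w = v) ∧
      (∀ w, w ∈ f1.support → w ∈ f2.support → w = h) := by
  have hw0v : w0 ≠ v := by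
    intro hw
    subst hw
    have : w0 ∈ s1.support := hqsub w0 q.end_mem_support
    have := hfis1 w0 this hvCS
    exact huv this.symm
  have hvtake : v ∉ (r1.takeUntil w0 hw0r1).support :=
    aux_end_not_mem_takeUntil hr1 hw0r1 hw0v
  refine ⟨(r1.takeUntil w0 hw0r1).append q.reverse, r2, ?_, hr2, ?_, hfir2, ?_⟩
  · apply aux_append_path (hr1.takeUntil hw0r1) hq.reverse
    intro w hw1 hw2
    rw [Walk.support_reverse, List.mem_reverse] at hw2
    exact hlast w hw2 (Or.inl (r1.support_takeUntil_subset hw0r1 hw1))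
  · intro w hw hwCS
    rcases (Walk.mem_support_append_iff _ _).mp hw with h' | h'
    · exact absurd ((hfir1 w (r1.support_takeUntil_subset hw0r1 h') hwCS) ▸ h') hvtake
    · rw [Walk.support_reverse, List.mem_reverse] at h'
      exact hfis1 w (hqsub w h') hwCS
  · intro w hw hw2
    rcases (Walk.mem_support_append_iff _ _).mp hw with h' | h'
    · rcases hr12 w (r1.support_takeUntil_subset hw0r1 h') hw2 with h'' | h''
      · exact h''
      · exact absurd (h'' ▸ h') hvtake
    · rw [Walk.support_reverse, List.mem_reverse] at h'
      have hww0 : w = w0 := hlast w h' (Or.inr hw2)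
      subst hww0
      rcases hr12 w hw0r1 hw2 with h'' | h''
      · exact h''
      · exact absurd h'' hw0v

lemma aux_fan [DecidableEq V] {u v h : V} {c : G.Walk u u}
    (hv : v ∈ c.support) (huv : u ≠ v)
    (hhu : TwoDisjointPaths G h u) (hhv : TwoDisjointPaths G h v)
    (hhC : h ∉ c.support) :
    ∃ (c1 c2 : V) (f1 : G.Walk h c1) (f2 : G.Walk h c2),
      c1 ∈ c.support ∧ c2 ∈ c.support ∧ c1 ≠ c2 ∧ f1.IsPath ∧ f2.IsPath ∧
      (∀ w, w ∈ f1.support → w ∈ c.support → w = c1) ∧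
      (∀ w, w ∈ f2.support → w ∈ c.support → w = c2) ∧
      (∀ w, w ∈ f1.support → w ∈ f2.support → w = h) := by
  classical
  set CS : Set V := {w | w ∈ c.support} with hCS
  have huCS : u ∈ CS := c.start_mem_support
  have hvCS : v ∈ CS := hv
  obtain ⟨S1, S2, hS1, hS2, hS12ne, hS12⟩ := hhu
  obtain ⟨z1, s1, hz1, hs1sub, hfis1, hs1path'⟩ := aux_first_hit S1 CS huCS
  obtain ⟨z2, s2, hz2, hs2sub, hfis2, hs2path'⟩ := aux_first_hit S2 CS huCS
  have hs1path := hs1path' hS1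
  have hs2path := hs2path' hS2
  by_cases hz12 : z1 ≠ z2
  · refine ⟨z1, z2, s1, s2, hz1, hz2, hz12, hs1path, hs2path, hfis1, hfis2, ?_⟩
    intro w hw1 hw2
    rcases hS12 w (hs1sub w hw1) (hs2sub w hw2) with h' | h'
    · exact h'
    · exfalso
      subst h'
      exact hz12 ((hfis1 w hw1 huCS).symm.trans (hfis2 w hw2 huCS))
  · push_neg at hz12
    have hz1u : z1 = u := by
      have hmem : z1 ∈ S2.support := hs2sub z1 (hz12 ▸ s2.end_mem_support)
      rcases hS12 z1 (hs1sub z1 s1.end_mem_support) hmem with h' | h'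
      · exact absurd (h' ▸ hz1) hhC
      · exact h'
    obtain ⟨R1, R2, hR1, hR2, hR12ne, hR12⟩ := hhv
    obtain ⟨y1, r1, hy1, hr1sub, hfir1, hr1path'⟩ := aux_first_hit R1 CS hvCS
    obtain ⟨y2, r2, hy2, hr2sub, hfir2, hr2path'⟩ := aux_first_hit R2 CS hvCS
    have hr1path := hr1path' hR1
    have hr2path := hr2path' hR2
    by_cases hy12 : y1 ≠ y2
    · refine ⟨y1, y2, r1, r2, hy1, hy2, hy12, hr1path, hr2path, hfir1, hfir2, ?_⟩
      intro w hw1 hw2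
      rcases hR12 w (hr1sub w hw1) (hr2sub w hw2) with h' | h'
      · exact h'
      · exfalso
        subst h'
        exact hy12 ((hfir1 w hw1 hvCS).symm.trans (hfir2 w hw2 hvCS))
    · push_neg at hy12
      have hy1v : y1 = v := by
        have hmem : y1 ∈ R2.support := hr2sub y1 (hy12 ▸ r2.end_mem_support)
        rcases hR12 y1 (hr1sub y1 r1.end_mem_support) hmem with h' | h'
        · exact absurd (h' ▸ hy1) hhC
        · exact h'
      have e1 : u = z1 := hz1u.symm
      subst e1
      have e2 : v = y1 := hy1v.symm
      subst e2
      have e3 : v = y2 := hy12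
      subst e3
      -- last hit of s1.reverse on r1 ∪ r2
      have hhR : h ∈ {w | w ∈ r1.support ∨ w ∈ r2.support} := Or.inl r1.start_mem_support
      obtain ⟨w0, q, hw0R, hqsub, hlast, hqpath'⟩ :=
        aux_first_hit s1.reverse {w | w ∈ r1.support ∨ w ∈ r2.support} hhR
      have hqpath := hqpath' hs1path.reverse
      have hqsub' : ∀ w ∈ q.support, w ∈ s1.support := by
        intro w hw
        have := hqsub w hw
        rwa [Walk.support_reverse, List.mem_reverse] at this
      -- first-hit props for r1/r2 with first component = v
      have hfir1' : ∀ w, w ∈ r1.support → w ∈ CS → w = v := hfir1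
      have hfir2' : ∀ w, w ∈ r2.support → w ∈ CS → w = v := hfir2
      have hr12' : ∀ w, w ∈ r1.support → w ∈ r2.support → w = h ∨ w = v := by
        intro w hw1 hw2
        exact hR12 w (hr1sub w hw1) (hr2sub w hw2)
      rcases hw0R with hw0r1 | hw0r2
      · obtain ⟨f1, f2, p1, p2, fi1, fi2, f12⟩ :=
          aux_bad_fan huv hvCS huCS r1 r2 hr1path hr2path hfir1' hfir2' hr12'
            s1 hs1path hfis1 q hqpath hqsub' (fun t ht hor => hlast t ht hor) hw0r1
        exact ⟨u, v, f1, f2, huCS, hvCS, huv, p1, p2, fi1, fi2, f12⟩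
      · obtain ⟨f1, f2, p1, p2, fi1, fi2, f12⟩ :=
          aux_bad_fan huv hvCS huCS r2 r1 hr2path hr1path hfir2' hfir1'
            (fun w hw1 hw2 => hr12' w hw2 hw1)
            s1 hs1path hfis1 q hqpath hqsub' (fun t ht hor => hlast t ht hor.symm) hw0r2
        exact ⟨u, v, f1, f2, huCS, hvCS, huv, p1, p2, fi1, fi2, f12⟩

lemma aux_mixed [DecidableEq V] {u v h x : V} {c : G.Walk u u} (hc : c.IsCycle)
    (hv : v ∈ c.support) (huv : u ≠ v)
    (hhu : TwoDisjointPaths G h u) (hhv : TwoDisjointPaths G h v)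
    (hhC : h ∉ c.support) (hx : x ∈ c.support) :
    TwoDisjointPaths G x h := by
  classical
  obtain ⟨c1, c2, f1, f2, hc1, hc2, hc12, hf1, hf2, hfi1, hfi2, hf12⟩ :=
    aux_fan hv huv hhu hhv hhC
  have hxh : x ≠ h := fun e => hhC (e ▸ hx)
  -- arcs inside the cycle from x
  have harc : ∀ t : V, t ∈ c.support → t ≠ x →
      ∃ A : G.Walk x t, A.IsPath ∧ ∀ w ∈ A.support, w ∈ c.support := by
    intro t ht htx
    have ht' : t ∈ (c.rotate x hx).support := (aux_rotate_mem hx (aux_cycle_tail_ne hc)).mpr ht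
    refine ⟨(c.rotate x hx).takeUntil t ht', (aux_cycle_split (hc.rotate hx) ht' htx).1, ?_⟩
    intro w hw
    exact (aux_rotate_mem hx (aux_cycle_tail_ne hc)).mp
      ((c.rotate x hx).support_takeUntil_subset ht' hw)
  by_cases hxc1 : x = c1
  · subst hxc1
    obtain ⟨A, hA, hAsub⟩ := harc c2 hc2 (fun e => hc12 (e.symm))
    refine ⟨f1.reverse, A.append f2.reverse, hf1.reverse, ?_, ?_, ?_⟩
    · apply aux_append_path hA hf2.reverse
      intro w hw1 hw2
      rw [Walk.support_reverse, List.mem_reverse] at hw2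
      exact hfi2 w hw2 (hAsub w hw1)
    · intro heq
      have hc2p : c2 ∈ (A.append f2.reverse).support :=
        Walk.subset_support_append_left _ _ A.end_mem_support
      rw [← heq, Walk.support_reverse, List.mem_reverse] at hc2p
      exact hc12 (hfi1 c2 hc2p hc2).symm
    · intro w hw1 hw2
      rw [Walk.support_reverse, List.mem_reverse] at hw1
      rcases (Walk.mem_support_append_iff _ _).mp hw2 with h' | h'
      · exact Or.inl (hfi1 w hw1 (hAsub w h'))
      · rw [Walk.support_reverse, List.mem_reverse] at h'
        exact Or.inr (hf12 w hw1 h')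
  · by_cases hxc2 : x = c2
    · subst hxc2
      obtain ⟨A, hA, hAsub⟩ := harc c1 hc1 (fun e => hxc1 e.symm)
      refine ⟨f2.reverse, A.append f1.reverse, hf2.reverse, ?_, ?_, ?_⟩
      · apply aux_append_path hA hf1.reverse
        intro w hw1 hw2
        rw [Walk.support_reverse, List.mem_reverse] at hw2
        exact hfi1 w hw2 (hAsub w hw1)
      · intro heq
        have hc1p : c1 ∈ (A.append f1.reverse).support :=
          Walk.subset_support_append_left _ _ A.end_mem_support
        rw [← heq, Walk.support_reverse, List.mem_reverse] at hc1p
        exact hc12 (hfi2 c1 hc1p hc1)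
      · intro w hw1 hw2
        rw [Walk.support_reverse, List.mem_reverse] at hw1
        rcases (Walk.mem_support_append_iff _ _).mp hw2 with h' | h'
        · exact Or.inl (hfi2 w hw1 (hAsub w h'))
        · rw [Walk.support_reverse, List.mem_reverse] at h'
          exact Or.inr (hf12 w h' hw1)
    · -- x different from both fan ends
      have hne := aux_cycle_tail_ne hc
      have hc1' : c1 ∈ (c.rotate x hx).support := (aux_rotate_mem hx hne).mpr hc1
      have hc2' : c2 ∈ (c.rotate x hx).support := (aux_rotate_mem hx hne).mpr hc2
      obtain ⟨A1, A2, hA1, hA2, hA1sub', hA2sub', hA12⟩ :=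
        aux_arc_pair (hc.rotate hx) hc1' hc2' hc12 (fun e => hxc1 e.symm) (fun e => hxc2 e.symm)
      have hA1sub : ∀ w ∈ A1.support, w ∈ c.support := fun w hw =>
        (aux_rotate_mem hx hne).mp (hA1sub' w hw)
      have hA2sub : ∀ w ∈ A2.support, w ∈ c.support := fun w hw =>
        (aux_rotate_mem hx hne).mp (hA2sub' w hw)
      have hc2A1 : c2 ∉ A1.support := by
        intro hmem
        exact hxc2 (hA12 c2 hmem A2.end_mem_support).symm
      have hc1A2 : c1 ∉ A2.support := by
        intro hmem
        exact hxc1 (hA12 c1 A1.end_mem_support hmem).symm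
      refine ⟨A1.append f1.reverse, A2.append f2.reverse, ?_, ?_, ?_, ?_⟩
      · apply aux_append_path hA1 hf1.reverse
        intro w hw1 hw2
        rw [Walk.support_reverse, List.mem_reverse] at hw2
        exact hfi1 w hw2 (hA1sub w hw1)
      · apply aux_append_path hA2 hf2.reverse
        intro w hw1 hw2
        rw [Walk.support_reverse, List.mem_reverse] at hw2
        exact hfi2 w hw2 (hA2sub w hw1)
      · intro heq
        have hc1p : c1 ∈ (A2.append f2.reverse).support := by
          rw [← heq]
          exact Walk.subset_support_append_left _ _ A1.end_mem_support
        rcases (Walk.mem_support_append_iff _ _).mp hc1p with h' | h'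
        · exact hc1A2 h'
        · rw [Walk.support_reverse, List.mem_reverse] at h'
          exact hc12 (hfi2 c1 h' hc1)
      · intro w hw1 hw2
        rcases (Walk.mem_support_append_iff _ _).mp hw1 with h1' | h1' <;>
          rcases (Walk.mem_support_append_iff _ _).mp hw2 with h2' | h2'
        · exact Or.inl (hA12 w h1' h2')
        · rw [Walk.support_reverse, List.mem_reverse] at h2'
          exact absurd ((hfi2 w h2' (hA1sub w h1')) ▸ h1') hc2A1
        · rw [Walk.support_reverse, List.mem_reverse] at h1'
          exact absurd ((hfi1 w h1' (hA2sub w h2')) ▸ h2') hc1A2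
        · rw [Walk.support_reverse, List.mem_reverse] at h1' h2'
          exact Or.inr (hf12 w h1' h2')

lemma aux_closure {H : Set V} (hH : IsBiconnectedComponent G H) {u v : V} {c : G.Walk u u}
    (hc : c.IsCycle) (hu : u ∈ H) (hvH : v ∈ H) (hvc : v ∈ c.support) (huv : u ≠ v) :
    ∀ x ∈ c.support, x ∈ H := by
  classical
  have hpair : ∀ a ∈ H ∪ {w | w ∈ c.support}, ∀ b ∈ H ∪ {w | w ∈ c.support}, a ≠ b →
      TwoDisjointPaths G a b := by
    intro a ha b hb hab
    by_cases hac : a ∈ c.support <;> by_cases hbc : b ∈ c.support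
    · exact aux_cycle_tdp hc hac hbc hab
    · have hbH : b ∈ H := by
        rcases hb with h | h
        · exact h
        · exact absurd h hbc
      have hbu : b ≠ u := fun e => hbc (e ▸ c.start_mem_support)
      have hbv : b ≠ v := fun e => hbc (e ▸ hvc)
      exact aux_mixed hc hvc huv (hH.1 b hbH u hu hbu) (hH.1 b hbH v hvH hbv) hbc hac
    · have haH : a ∈ H := by
        rcases ha with h | h
        · exact h
        · exact absurd h hac
      have hau : a ≠ u := fun e => hac (e ▸ c.start_mem_support)
      have hav : a ≠ v := fun e => hac (e ▸ hvc)
      exact aux_tdp_symm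
        (aux_mixed hc hvc huv (hH.1 a haH u hu hau) (hH.1 a haH v hvH hav) hac hbc)
    · have haH : a ∈ H := by
        rcases ha with h | h
        · exact h
        · exact absurd h hac
      have hbH : b ∈ H := by
        rcases hb with h | h
        · exact h
        · exact absurd h hbc
      exact hH.1 a haH b hbH hab
  have hHeq := hH.2 (H ∪ {w | w ∈ c.support}) Set.subset_union_left hpair
  intro x hx
  rw [← hHeq]
  exact Or.inr hx

lemma aux_first_edge {a b y : V} (p : G.Walk a y) (hp : p.IsPath)
    (he : s(a, b) ∈ p.edges) :
    ∃ q : G.Walk b y, q.length + 1 = p.length ∧ (∀ f ∈ q.edges, f ∈ p.edges) ∧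
      s(a, b) ∉ q.edges := by
  cases p with
  | nil => simp at he
  | @cons _ w _ ha' p' =>
    rw [Walk.edges_cons] at he
    rw [Walk.cons_isPath_iff] at hp
    rcases List.mem_cons.mp he with h | h
    · have hbw : b = w := by
        rw [Sym2.eq_iff] at h
        rcases h with ⟨-, h⟩ | ⟨h1, h2⟩
        · exact h
        · exact absurd h1 ha'.ne
      subst hbw
      refine ⟨p', by simp, fun f hf => List.mem_cons_of_mem _ hf, ?_⟩
      intro hmem
      exact hp.2 (p'.fst_mem_support_of_mem_edges hmem)
    · exact absurd (p'.fst_mem_support_of_mem_edges h) hp.2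

lemma aux_core {u v x y : V} (hG : G.Connected) (huv : G.Adj u v)
    (P1 : (G.deleteEdges {s(u,v)}).Walk u x) (P2 : (G.deleteEdges {s(u,v)}).Walk x y)
    (P3 : (G.deleteEdges {s(u,v)}).Walk y v)
    (hm : (G.deleteEdges {s(u,v)}).dist u v = P1.length + P2.length + P3.length)
    (GC : SimpleGraph V) (hGCuv : GC.Adj u v)
    (h1 : ∀ f ∈ P1.edges, f ∈ GC.edgeSet) (h2 : ∀ f ∈ P2.edges, f ∈ GC.edgeSet)
    (h3 : ∀ f ∈ P3.edges, f ∈ GC.edgeSet) :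
    GC.dist x y ≤ G.dist x y := by
  classical
  have hmemGd : ∀ (f : Sym2 V), f ∈ G.edgeSet → f ≠ s(u,v) →
      f ∈ (G.deleteEdges {s(u,v)}).edgeSet := by
    intro f hf hne
    rw [edgeSet_deleteEdges]
    exact ⟨hf, hne⟩
  have dA : GC.dist x y ≤ P2.length := by
    have := SimpleGraph.dist_le (P2.transfer GC h2)
    rwa [Walk.length_transfer] at this
  have dB : GC.dist x y ≤ P1.length + P3.length + 1 := by
    have := SimpleGraph.dist_le
      (((P1.transfer GC h1).reverse).append (Walk.cons hGCuv (P3.transfer GC h3).reverse))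
    simp only [Walk.length_append, Walk.length_reverse, Walk.length_cons,
      Walk.length_transfer] at this
    omega
  by_contra hcon
  push_neg at hcon
  obtain ⟨Q, hQpath, hQlen⟩ := hG.exists_path_of_dist x y
  have hd2 : G.dist x y < P2.length := lt_of_lt_of_le hcon dA
  have hd13 : G.dist x y ≤ P1.length + P3.length := by omega
  by_cases he : s(u,v) ∈ Q.edges
  · have hvQ : v ∈ Q.support := Q.snd_mem_support_of_mem_edges he
    set T := Q.takeUntil v hvQ with hT
    set D := Q.dropUntil v hvQ with hD
    have hTD : T.append D = Q := Q.take_spec hvQ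
    have hedges : Q.edges = T.edges ++ D.edges := by
      rw [← hTD, Walk.edges_append]
    have hlensum : T.length + D.length = Q.length := by
      rw [← hTD, Walk.length_append]
    have hnodup : Q.edges.Nodup := hQpath.isTrail.edges_nodup
    have hdisj : T.edges.Disjoint D.edges := by
      rw [hedges] at hnodup
      exact List.disjoint_of_nodup_append hnodup
    rw [hedges] at he
    rcases List.mem_append.mp he with heT | heD
    · -- edge in first part; T : x → v ends at v
      have hTrev : (s(v,u) : Sym2 V) ∈ T.reverse.edges := by
        rw [Walk.edges_reverse, List.mem_reverse, Sym2.eq_swap]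
        exact heT
      obtain ⟨T'', hlen, hsub, hne⟩ := aux_first_edge T.reverse (hQpath.takeUntil hvQ).reverse hTrev
      have hT''Gd : ∀ f ∈ T''.edges, f ∈ (G.deleteEdges {s(u,v)}).edgeSet := by
        intro f hf
        have hfT : f ∈ T.edges := by
          have := hsub f hf
          rwa [Walk.edges_reverse, List.mem_reverse] at this
        refine hmemGd f (Q.edges_subset_edgeSet (hedges ▸ List.mem_append_left _ hfT)) ?_
        intro hfe
        subst hfe
        rw [Sym2.eq_swap] at hne
        exact hne hf
      have hDGd : ∀ f ∈ D.edges, f ∈ (G.deleteEdges {s(u,v)}).edgeSet := by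
        intro f hf
        refine hmemGd f (Q.edges_subset_edgeSet (hedges ▸ List.mem_append_right _ hf)) ?_
        intro hfe
        subst hfe
        exact hdisj heT hf
      have hW := SimpleGraph.dist_le
        ((T''.transfer (G.deleteEdges {s(u,v)}) hT''Gd).append (P2.append (D.transfer (G.deleteEdges {s(u,v)}) hDGd).reverse))
      simp only [Walk.length_append, Walk.length_reverse, Walk.length_transfer] at hW
      rw [hm] at hW
      have : T.reverse.length = T.length := Walk.length_reverse T
      omega
    · -- edge in second part; D : v → y starts at v
      have hDrev : (s(v,u) : Sym2 V) ∈ D.edges := by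
        rw [Sym2.eq_swap]
        exact heD
      obtain ⟨D', hlen, hsub, hne⟩ := aux_first_edge D (hQpath.dropUntil hvQ) hDrev
      have hD'Gd : ∀ f ∈ D'.edges, f ∈ (G.deleteEdges {s(u,v)}).edgeSet := by
        intro f hf
        refine hmemGd f (Q.edges_subset_edgeSet (hedges ▸ List.mem_append_right _ (hsub f hf))) ?_
        intro hfe
        subst hfe
        rw [Sym2.eq_swap] at hne
        exact hne hf
      have hW := SimpleGraph.dist_le ((D'.transfer (G.deleteEdges {s(u,v)}) hD'Gd).append P3)
      simp only [Walk.length_append, Walk.length_transfer] at hW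
      rw [hm] at hW
      omega
  · -- Q avoids the edge entirely
    have hQGd : ∀ f ∈ Q.edges, f ∈ (G.deleteEdges {s(u,v)}).edgeSet := by
      intro f hf
      refine hmemGd f (Q.edges_subset_edgeSet hf) ?_
      intro hfe
      subst hfe
      exact he hf
    have hW := SimpleGraph.dist_le (P1.append ((Q.transfer (G.deleteEdges {s(u,v)}) hQGd).append P3))
    simp only [Walk.length_append, Walk.length_transfer] at hW
    rw [hm] at hW
    omega

end AuxLemmas

/-- Let `H` be a biconnected component (with at least two vertices) of a connected graph
`G` and let `kmax` be the maximum length of a min-cycle of `G` all of whose vertices lie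
in `H`. Then deleting any edge `{u,v}` of `G` with both endpoints in `H` increases the
distance between `u` and `v` by at most `kmax - 2`. -/
theorem delete_edge_dist_increase {V : Type*} [Fintype V]
    (G : SimpleGraph V) (hG : G.Connected)
    (H : Set V) (hH : IsBiconnectedComponent G H)
    (hH2 : ∃ x ∈ H, ∃ y ∈ H, x ≠ y)
    (kmax : ℕ)
    (hkex : ∃ (a : V) (c : G.Walk a a), IsMinCycle c ∧ (∀ x ∈ c.support, x ∈ H) ∧
      c.length = kmax)
    (hkub : ∀ (a : V) (c : G.Walk a a), IsMinCycle c → (∀ x ∈ c.support, x ∈ H) →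
      c.length ≤ kmax)
    (u v : V) (hu : u ∈ H) (hv : v ∈ H) (huv : G.Adj u v) :
    ((G.deleteEdges {s(u,v)}).dist u v : ℝ) ≤ G.dist u v + kmax - 2 := by
  classical
  have hkmax3 : 3 ≤ kmax := by
    obtain ⟨a, c, hmc, _, hlen⟩ := hkex
    exact hlen ▸ hmc.1.three_le_length
  have hG1 : G.dist u v = 1 := SimpleGraph.dist_eq_one_iff_adj.mpr huv
  by_cases hreach : (G.deleteEdges {s(u,v)}).Reachable u v
  · obtain ⟨P, hPpath, hPlen⟩ := hreach.exists_path_of_dist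
    have hPedges : ∀ f ∈ P.edges, f ∈ G.edgeSet := by
      intro f hf
      have := P.edges_subset_edgeSet hf
      rw [edgeSet_deleteEdges] at this
      exact this.1
    have hPnotuv : s(u,v) ∉ P.edges := by
      intro hf
      have := P.edges_subset_edgeSet hf
      rw [edgeSet_deleteEdges] at this
      exact this.2 rfl
    have hnotmem : s(u,v) ∉ (P.transfer G hPedges).reverse.edges := by
      rw [Walk.edges_reverse, List.mem_reverse, Walk.edges_transfer]
      exact hPnotuv
    set c : G.Walk u u := Walk.cons huv (P.transfer G hPedges).reverse with hcdef
    have hcyc : c.IsCycle := by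
      rw [hcdef, Walk.cons_isCycle_iff]
      exact ⟨(hPpath.transfer hPedges).reverse, hnotmem⟩
    have hsupp : ∀ w : V, w ∈ c.support ↔ w ∈ P.support := by
      intro w
      rw [hcdef, Walk.support_cons]
      constructor
      · intro hw
        rcases List.mem_cons.mp hw with h | h
        · exact h ▸ P.start_mem_support
        · rwa [Walk.support_reverse, List.mem_reverse, Walk.support_transfer] at h
      · intro hw
        apply List.mem_cons_of_mem
        rwa [Walk.support_reverse, List.mem_reverse, Walk.support_transfer]
    have hedgec : ∀ f : Sym2 V, f ∈ c.edges ↔ f = s(u,v) ∨ f ∈ P.edges := by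
      intro f
      rw [hcdef, Walk.edges_cons, List.mem_cons, Walk.edges_reverse, List.mem_reverse,
        Walk.edges_transfer]
    have hcGC : ∀ f ∈ c.edges, f ∈ (SimpleGraph.fromEdgeSet {e | e ∈ c.edges}).edgeSet := by
      intro f hf
      rw [edgeSet_fromEdgeSet]
      exact ⟨hf, G.not_isDiag_of_mem_edgeSet (c.edges_subset_edgeSet hf)⟩
    have hGCle : SimpleGraph.fromEdgeSet {e | e ∈ c.edges} ≤ G := by
      intro a b hab
      rw [SimpleGraph.fromEdgeSet_adj] at hab
      exact (SimpleGraph.mem_edgeSet G).mp (c.edges_subset_edgeSet hab.1)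
    have hGCuv : (SimpleGraph.fromEdgeSet {e | e ∈ c.edges}).Adj u v := by
      rw [SimpleGraph.fromEdgeSet_adj]
      exact ⟨(hedgec _).mpr (Or.inl rfl), huv.ne⟩
    have hmin : IsMinCycle c := by
      refine ⟨hcyc, fun a ha b hb => ?_⟩
      refine le_antisymm ?_ ?_
      · -- GC.dist ≤ G.dist via core lemma
        have haP : a ∈ P.support := (hsupp a).mp ha
        have hbP : b ∈ P.support := (hsupp b).mp hb
        have hGCedges : ∀ f ∈ P.edges, f ∈ (SimpleGraph.fromEdgeSet {e | e ∈ c.edges}).edgeSet :=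
          fun f hf => hcGC f ((hedgec f).mpr (Or.inr hf))
        have hbsplit := aux_support_decomp P haP
        rw [hbsplit] at hbP
        rcases List.mem_append.mp hbP with hbT | hbD
        · -- b occurs before a : use pieces to (b, a) and dist_comm
          set Ta := P.takeUntil a haP with hTa
          have hbT' : b ∈ Ta.support := hbT
          have e1 : Ta.length + (P.dropUntil a haP).length = P.length := by
            rw [← Walk.length_append, Walk.take_spec]
          have e2 : (Ta.takeUntil b hbT').length + (Ta.dropUntil b hbT').length = Ta.length := by
            rw [← Walk.length_append, Walk.take_spec]
          have hcore := aux_core hG huv (Ta.takeUntil b hbT') (Ta.dropUntil b hbT')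
            (P.dropUntil a haP) (by omega) _ hGCuv
            (fun f hf => hGCedges f (P.edges_takeUntil_subset haP (Ta.edges_takeUntil_subset hbT' hf)))
            (fun f hf => hGCedges f (P.edges_takeUntil_subset haP (Ta.edges_dropUntil_subset hbT' hf)))
            (fun f hf => hGCedges f (P.edges_dropUntil_subset haP hf))
          rw [SimpleGraph.dist_comm (G := SimpleGraph.fromEdgeSet {e | e ∈ c.edges}),
            SimpleGraph.dist_comm (G := G)] at hcore
          exact hcore
        · have hbD' : b ∈ (P.dropUntil a haP).support := List.mem_of_mem_tail hbD
          set Da := P.dropUntil a haP with hDa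
          have e1 : (P.takeUntil a haP).length + Da.length = P.length := by
            rw [← Walk.length_append, Walk.take_spec]
          have e2 : (Da.takeUntil b hbD').length + (Da.dropUntil b hbD').length = Da.length := by
            rw [← Walk.length_append, Walk.take_spec]
          exact aux_core hG huv (P.takeUntil a haP) (Da.takeUntil b hbD')
            (Da.dropUntil b hbD') (by omega) _ hGCuv
            (fun f hf => hGCedges f (P.edges_takeUntil_subset haP hf))
            (fun f hf => hGCedges f (P.edges_dropUntil_subset haP (Da.edges_takeUntil_subset hbD' hf)))
            (fun f hf => hGCedges f (P.edges_dropUntil_subset haP (Da.edges_dropUntil_subset hbD' hf)))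
      · -- G.dist ≤ GC.dist
        set GC := SimpleGraph.fromEdgeSet {e | e ∈ c.edges} with hGCdef
        have hct : a ∈ (c.transfer GC hcGC).support := by rwa [Walk.support_transfer]
        have hct' : b ∈ (c.transfer GC hcGC).support := by rwa [Walk.support_transfer]
        have hr : GC.Reachable a b :=
          (((c.transfer GC hcGC).takeUntil a hct).reverse.append
            ((c.transfer GC hcGC).takeUntil b hct')).reachable
        exact Reachable.dist_anti hGCle hr
    have hsubH : ∀ x ∈ c.support, x ∈ H := by
      apply aux_closure hH hcyc hu hv ((hsupp v).mpr P.end_mem_support) huv.ne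
    have hlenc : c.length = (G.deleteEdges {s(u,v)}).dist u v + 1 := by
      rw [hcdef, Walk.length_cons, Walk.length_reverse, Walk.length_transfer, hPlen]
    have hle := hkub u c hmin hsubH
    rw [hlenc] at hle
    rw [hG1]
    have h0 : ((G.deleteEdges {s(u,v)}).dist u v : ℝ) ≤ (kmax : ℝ) - 1 := by
      have h1 := (Nat.cast_le (α := ℝ)).mpr hle
      push_cast at h1
      linarith
    push_cast
    linarith
  · rw [SimpleGraph.dist_eq_zero_of_not_reachable hreach, hG1]
    push_cast
    have : (3 : ℝ) ≤ kmax := by exact_mod_cast hkmax3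
    linarith
end

section
/- If H is a biconnected component of a graph G and H contains at least two vertices, then there is a min-cycle of G all of whose vertices lie in H. -/
open SimpleGraph

namespace BCAux

variable {V : Type*} {G : SimpleGraph V}

open SimpleGraph.Walk

/-- A path from `u` to `v` containing the edge `s(u,v)` is the single edge. -/
lemma path_eq_single_edge {u v : V} {p : G.Walk u v} (hp : p.IsPath)
    (he : s(u, v) ∈ p.edges) : ∃ h : G.Adj u v, p = Walk.cons h Walk.nil := by
  cases p with
  | nil => simp at he
  | cons h q =>
    rename_i x
    rw [Walk.edges_cons, List.mem_cons] at he
    rcases he with he | he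
    · have hx : x = v := by
        rcases Sym2.eq_iff.mp he with ⟨-, rfl⟩ | ⟨rfl, rfl⟩
        · rfl
        · exact absurd h (G.irrefl)
      subst hx
      have : q = Walk.nil := (Walk.isPath_iff_eq_nil (p := q)).mp hp.of_cons
      subst this
      exact ⟨h, rfl⟩
    · exfalso
      have hu : u ∈ q.support := q.fst_mem_support_of_mem_edges he
      have := hp.support_nodup
      rw [Walk.support_cons, List.nodup_cons] at this
      exact this.1 hu

lemma start_not_mem_tail {u v : V} {p : G.Walk u v} (hp : p.IsPath) :
    u ∉ p.support.tail := by
  have := hp.support_nodup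
  rw [p.support_eq_cons, List.nodup_cons] at this
  exact this.1

/-- Glue two internally disjoint distinct paths into a cycle. -/
lemma glue2 {u v : V} {p : G.Walk u v} {q : G.Walk v u}
    (hp : p.IsPath) (hq : q.IsPath) (huv : u ≠ v)
    (hdisj : ∀ x, x ∈ p.support → x ∈ q.support → x = u ∨ x = v)
    (hne : p ≠ q.reverse) : (p.append q).IsCycle := by
  rw [Walk.isCycle_def]
  refine ⟨⟨?_⟩, ?_, ?_⟩
  · -- edges nodup
    rw [Walk.edges_append, List.nodup_append]
    refine ⟨hp.edges_nodup, hq.edges_nodup, ?_⟩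
    rintro e hep _ heq rfl
    induction e with
    | h a b =>
      have hab : a ≠ b := (p.adj_of_mem_edges hep).ne
      have hap : a ∈ p.support := p.fst_mem_support_of_mem_edges hep
      have hbp : b ∈ p.support := p.snd_mem_support_of_mem_edges hep
      have haq : a ∈ q.support := q.fst_mem_support_of_mem_edges heq
      have hbq : b ∈ q.support := q.snd_mem_support_of_mem_edges heq
      have ha := hdisj a hap haq
      have hb := hdisj b hbp hbq
      have heuv : s(a, b) = s(u, v) := by
        rcases ha with rfl | rfl <;> rcases hb with rfl | rfl
        · exact absurd rfl hab
        · rfl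
        · rw [Sym2.eq_swap]
        · exact absurd rfl hab
      rw [heuv] at hep heq
      obtain ⟨h1, rfl⟩ := path_eq_single_edge hp hep
      rw [Sym2.eq_swap] at heq
      obtain ⟨h2, rfl⟩ := path_eq_single_edge hq heq
      exact hne rfl
  · -- not nil
    cases p with
    | nil => exact absurd rfl huv
    | cons h q' => simp [Walk.cons_append]
  · -- tail support nodup
    rw [Walk.tail_support_append, List.nodup_append]
    refine ⟨hp.support_nodup.tail, hq.support_nodup.tail, ?_⟩
    rintro x hxp _ hxq rfl
    have hxp' : x ∈ p.support := List.mem_of_mem_tail hxp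
    have hxq' : x ∈ q.support := List.mem_of_mem_tail hxq
    rcases hdisj x hxp' hxq' with rfl | rfl
    · exact start_not_mem_tail hp hxp
    · exact start_not_mem_tail hq hxq

end BCAux

namespace BCAux2
variable {V : Type*} {G : SimpleGraph V}
open BCAux SimpleGraph.Walk

section Arcs

variable [DecidableEq V] {r v : V} {c : G.Walk r r}

lemma arc_support_eq (hc : c.IsCycle) (h : v ∈ c.support) :
    c.support.tail = (c.takeUntil v h).support.tail ++ (c.dropUntil v h).support.tail := by
  have hs : c.support = (c.takeUntil v h).support ++ (c.dropUntil v h).support.tail := by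
    conv_lhs => rw [← c.take_spec h]
    exact Walk.support_append _ _
  have h2 : (c.takeUntil v h).support = r :: (c.takeUntil v h).support.tail :=
    (c.takeUntil v h).support_eq_cons
  rw [h2] at hs
  have := congrArg List.tail hs
  simpa using this

lemma arc_nodup (hc : c.IsCycle) (h : v ∈ c.support) :
    ((c.takeUntil v h).support.tail ++ (c.dropUntil v h).support.tail).Nodup := by
  rw [← arc_support_eq hc h]; exact hc.support_nodup

lemma takeUntil_isPath (hc : c.IsCycle) (h : v ∈ c.support) (hvr : v ≠ r) :
    (c.takeUntil v h).IsPath := by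
  apply Walk.IsPath.mk'
  rw [(c.takeUntil v h).support_eq_cons]
  have hnd := arc_nodup hc h
  rw [List.nodup_append] at hnd
  refine List.nodup_cons.mpr ⟨?_, hnd.1⟩
  intro hr
  have hrd : r ∈ (c.dropUntil v h).support.tail := by
    have : r ∈ (c.dropUntil v h).support := Walk.end_mem_support _
    rw [(c.dropUntil v h).support_eq_cons] at this
    rcases List.mem_cons.mp this with h' | h'
    · exact absurd h' hvr.symm
    · assumption
  exact hnd.2.2 _ hr _ hrd rfl

lemma dropUntil_isPath (hc : c.IsCycle) (h : v ∈ c.support) (hvr : v ≠ r) :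
    (c.dropUntil v h).IsPath := by
  apply Walk.IsPath.mk'
  rw [(c.dropUntil v h).support_eq_cons]
  have hnd := arc_nodup hc h
  rw [List.nodup_append] at hnd
  refine List.nodup_cons.mpr ⟨?_, hnd.2.1⟩
  intro hv
  have hvt : v ∈ (c.takeUntil v h).support.tail := by
    have : v ∈ (c.takeUntil v h).support := Walk.end_mem_support _
    rw [(c.takeUntil v h).support_eq_cons] at this
    rcases List.mem_cons.mp this with h' | h'
    · exact absurd h' hvr
    · assumption
  exact hnd.2.2 _ hvt _ hv rfl

lemma arc_disjoint (hc : c.IsCycle) (h : v ∈ c.support) :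
    ∀ x, x ∈ (c.takeUntil v h).support → x ∈ (c.dropUntil v h).support → x = r ∨ x = v := by
  intro x hxt hxd
  by_contra hx
  push_neg at hx
  have hnd := arc_nodup hc h
  rw [List.nodup_append] at hnd
  have hxt' : x ∈ (c.takeUntil v h).support.tail := by
    rw [(c.takeUntil v h).support_eq_cons] at hxt
    rcases List.mem_cons.mp hxt with h' | h'
    · exact absurd h' hx.1
    · assumption
  have hxd' : x ∈ (c.dropUntil v h).support.tail := by
    rw [(c.dropUntil v h).support_eq_cons] at hxd
    rcases List.mem_cons.mp hxd with h' | h'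
    · exact absurd h' hx.2
    · assumption
  exact hnd.2.2 _ hxt' _ hxd' rfl

lemma arc_length (h : v ∈ c.support) :
    (c.takeUntil v h).length + (c.dropUntil v h).length = c.length := by
  have := congrArg Walk.length (c.take_spec h)
  rwa [Walk.length_append] at this

lemma mem_arc (h : v ∈ c.support) {x : V} (hx : x ∈ c.support) :
    x ∈ (c.takeUntil v h).support ∨ x ∈ (c.dropUntil v h).support := by
  rw [← c.take_spec h, Walk.mem_support_append_iff] at hx
  exact hx

end Arcs

/-- Two vertices lie on a common cycle. -/
def OnCommonCycle (G : SimpleGraph V) (u v : V) : Prop :=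
  ∃ (r : V) (c : G.Walk r r), c.IsCycle ∧ u ∈ c.support ∧ v ∈ c.support

lemma OnCommonCycle.symm {u v : V} (h : OnCommonCycle G u v) : OnCommonCycle G v u := by
  obtain ⟨r, c, hc, h1, h2⟩ := h
  exact ⟨r, c, hc, h2, h1⟩

end BCAux2

namespace BCAux3
variable {V : Type*} {G : SimpleGraph V}
open BCAux BCAux2 SimpleGraph.Walk

lemma TwoDisjointPaths.ne {u v : V} (h : TwoDisjointPaths G u v) : u ≠ v := by
  rintro rfl
  obtain ⟨p, q, hp, hq, hpq, -⟩ := h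
  rw [(Walk.isPath_iff_eq_nil (p := p)).mp hp, (Walk.isPath_iff_eq_nil (p := q)).mp hq] at hpq
  exact hpq rfl

lemma TwoDisjointPaths.onCommonCycle {u v : V} (h : TwoDisjointPaths G u v) :
    OnCommonCycle G u v := by
  obtain ⟨p, q, hp, hq, hpq, hdisj⟩ := h
  have huv : u ≠ v := TwoDisjointPaths.ne ⟨p, q, hp, hq, hpq, hdisj⟩
  refine ⟨u, p.append q.reverse, ?_, Walk.start_mem_support _, ?_⟩
  · apply glue2 hp hq.reverse huv
    · intro x hxp hxq
      rw [Walk.support_reverse, List.mem_reverse] at hxq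
      exact hdisj x hxp hxq
    · rwa [Walk.reverse_reverse]
  · rw [Walk.mem_support_append_iff]
    exact Or.inl (Walk.end_mem_support _)

lemma mem_support_tail_of_closed {r x : V} {c : G.Walk r r} (hn : ¬c.Nil)
    (hx : x ∈ c.support) : x ∈ c.support.tail := by
  cases c with
  | nil => exact absurd Walk.nil_nil hn
  | cons h q =>
    rw [Walk.support_cons, List.tail_cons]
    rw [Walk.support_cons, List.mem_cons] at hx
    rcases hx with rfl | hx
    · exact Walk.end_mem_support q
    · exact hx

lemma mem_support_rotate' [DecidableEq V] {r u x : V} {c : G.Walk r r} (hn : ¬c.Nil)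
    (hu : u ∈ c.support) (hx : x ∈ c.support) : x ∈ (c.rotate u hu).support := by
  have h1 : x ∈ c.support.tail := mem_support_tail_of_closed hn hx
  have h2 := (Walk.support_rotate c u hu).mem_iff (a := x)
  rw [(c.rotate u hu).support_eq_cons, List.mem_cons]
  exact Or.inr (h2.mpr h1)

lemma mem_support_rotate [DecidableEq V] {r u x : V} {c : G.Walk r r} (hc : c.IsCycle)
    (hu : u ∈ c.support) (hx : x ∈ c.support) : x ∈ (c.rotate u hu).support :=
  mem_support_rotate' hc.not_nil hu hx

lemma OnCommonCycle.twoDisjointPaths [DecidableEq V] {u v : V}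
    (h : OnCommonCycle G u v) (huv : u ≠ v) : TwoDisjointPaths G u v := by
  obtain ⟨r, c, hc, hu, hv⟩ := h
  set c' := c.rotate u hu with hc'def
  have hc' : c'.IsCycle := hc.rotate hu
  have hv' : v ∈ c'.support := mem_support_rotate hc hu hv
  set p := c'.takeUntil v hv' with hpdef
  set q := c'.dropUntil v hv' with hqdef
  have hp : p.IsPath := takeUntil_isPath hc' hv' huv.symm
  have hq : q.IsPath := dropUntil_isPath hc' hv' huv.symm
  have hpq : p ≠ q.reverse := by
    intro heq
    have hnd := hc'.isTrail.edges_nodup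
    rw [← c'.take_spec hv', Walk.edges_append, List.nodup_append] at hnd
    have hplen : p.edges ≠ [] := by
      intro h0
      have : p.length = 0 := by rw [← Walk.length_edges, h0]; rfl
      exact huv (Walk.eq_of_length_eq_zero this)
    obtain ⟨e, he⟩ := List.exists_mem_of_ne_nil _ hplen
    have heq' : q = p.reverse := by
      rw [heq, Walk.reverse_reverse]
    have heq2 : e ∈ q.edges := by
      rw [heq', Walk.edges_reverse, List.mem_reverse]
      exact he
    exact hnd.2.2 _ he _ heq2 rfl
  refine ⟨p, q.reverse, hp, hq.reverse, hpq, ?_⟩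
  intro x hxp hxq
  rw [Walk.support_reverse, List.mem_reverse] at hxq
  exact arc_disjoint hc' hv' x hxp hxq

end BCAux3

namespace BCAux4
variable {V : Type*} {G : SimpleGraph V}
open BCAux BCAux2 BCAux3 SimpleGraph.Walk

/-- First-hit decomposition of a walk with respect to a vertex set. -/
lemma firstHit {x y : V} (w : G.Walk x y) (T : Set V) (hT : ∃ z ∈ w.support, z ∈ T) :
    ∃ (z : V) (p : G.Walk x z) (q : G.Walk z y), w = p.append q ∧ z ∈ T ∧
      (∀ t ∈ p.support, t ∈ T → t = z) := by
  induction w with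
  | nil =>
    obtain ⟨z, hz, hzT⟩ := hT
    rw [Walk.mem_support_nil_iff] at hz
    subst hz
    exact ⟨z, Walk.nil, Walk.nil, rfl, hzT, fun t ht _ => by
      rwa [Walk.mem_support_nil_iff] at ht⟩
  | @cons a b c h w' ih =>
    by_cases hxT : a ∈ T
    · exact ⟨a, Walk.nil, Walk.cons h w', rfl, hxT, fun t ht _ => by
        rwa [Walk.mem_support_nil_iff] at ht⟩
    · have hT' : ∃ z ∈ w'.support, z ∈ T := by
        obtain ⟨z, hz, hzT⟩ := hT
        rw [Walk.support_cons, List.mem_cons] at hz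
        rcases hz with rfl | hz
        · exact absurd hzT hxT
        · exact ⟨z, hz, hzT⟩
      obtain ⟨z, p, q, heq, hzT, hmin⟩ := ih hT'
      refine ⟨z, Walk.cons h p, q, by rw [Walk.cons_append, heq], hzT, ?_⟩
      intro t ht htT
      rw [Walk.support_cons, List.mem_cons] at ht
      rcases ht with rfl | ht
      · exact absurd htT hxT
      · exact hmin t ht htT

/-- Last-hit decomposition. -/
lemma lastHit {x y : V} (w : G.Walk x y) (T : Set V) (hT : ∃ z ∈ w.support, z ∈ T) :
    ∃ (z : V) (p : G.Walk x z) (q : G.Walk z y), w = p.append q ∧ z ∈ T ∧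
      (∀ t ∈ q.support, t ∈ T → t = z) := by
  have hT' : ∃ z ∈ w.reverse.support, z ∈ T := by
    obtain ⟨z, hz, hzT⟩ := hT
    exact ⟨z, by rwa [Walk.support_reverse, List.mem_reverse], hzT⟩
  obtain ⟨z, p, q, heq, hzT, hmin⟩ := firstHit w.reverse T hT'
  refine ⟨z, q.reverse, p.reverse, ?_, hzT, ?_⟩
  · have := congrArg Walk.reverse heq
    rwa [Walk.reverse_reverse, Walk.reverse_append] at this
  · intro t ht htT
    rw [Walk.support_reverse, List.mem_reverse] at ht
    exact hmin t ht htT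

/-- Glue three pairwise internally disjoint paths into a cycle. -/
lemma glue3 {a b c : V} {p : G.Walk a b} {q : G.Walk b c} {r : G.Walk c a}
    (hp : p.IsPath) (hq : q.IsPath) (hr : r.IsPath)
    (hab : a ≠ b) (hbc : b ≠ c) (hca : c ≠ a)
    (hpq : ∀ x, x ∈ p.support → x ∈ q.support → x = b)
    (hqr : ∀ x, x ∈ q.support → x ∈ r.support → x = c)
    (hpr : ∀ x, x ∈ p.support → x ∈ r.support → x = a) :
    (p.append (q.append r)).IsCycle := by
  have hQ : (q.append r).IsPath := by
    apply Walk.IsPath.mk'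
    rw [Walk.support_append, List.nodup_append]
    refine ⟨hq.support_nodup, hr.support_nodup.tail, ?_⟩
    rintro x hxq _ hxr rfl
    have := hqr x hxq (List.mem_of_mem_tail hxr)
    subst this
    exact start_not_mem_tail hr hxr
  apply glue2 hp hQ hab
  · intro x hxp hxQ
    rw [Walk.mem_support_append_iff] at hxQ
    rcases hxQ with hxq | hxr
    · exact Or.inr (hpq x hxp hxq)
    · exact Or.inl (hpr x hxp hxr)
  · intro heq
    have hcp : c ∈ p.support := by
      rw [heq, Walk.support_reverse, List.mem_reverse, Walk.mem_support_append_iff]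
      exact Or.inl (Walk.end_mem_support q)
    have := hpq c hcp (Walk.end_mem_support q)
    exact hbc this.symm

end BCAux4

namespace BCAux5
variable {V : Type*} {G : SimpleGraph V}
open BCAux BCAux2 BCAux3 BCAux4 SimpleGraph.Walk

lemma mem_support_of_mem_rotate [DecidableEq V] {r u x : V} {c : G.Walk r r}
    (hu : u ∈ c.support) (hx : x ∈ (c.rotate u hu).support) : x ∈ c.support := by
  rw [(c.rotate u hu).support_eq_cons, List.mem_cons] at hx
  rcases hx with rfl | hx
  · exact hu
  · have := (Walk.support_rotate c u hu).mem_iff (a := x)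
    have hx' : x ∈ c.support.tail := this.mp hx
    exact List.mem_of_mem_tail hx'

/-- If two cycles share two distinct vertices, then any vertex of the first and any
vertex of the second lie on a common cycle. -/
lemma cycles_share_two [DecidableEq V] {r1 r2 : V} {c1 : G.Walk r1 r1} {c2 : G.Walk r2 r2}
    (hc1 : c1.IsCycle) (hc2 : c2.IsCycle) {s0 t0 : V}
    (hs01 : s0 ∈ c1.support) (hs02 : s0 ∈ c2.support)
    (ht01 : t0 ∈ c1.support) (ht02 : t0 ∈ c2.support) (hst0 : s0 ≠ t0)
    {u w : V} (hu : u ∈ c1.support) (hw : w ∈ c2.support) : OnCommonCycle G u w := by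
  by_cases hwc1 : w ∈ c1.support
  · exact ⟨r1, c1, hc1, hu, hwc1⟩
  set c2' := c2.rotate w hw with hc2'def
  have hc2' : c2'.IsCycle := hc2.rotate hw
  have hs02' : s0 ∈ c2'.support := mem_support_rotate hc2 hw hs02
  have ht02' : t0 ∈ c2'.support := mem_support_rotate hc2 hw ht02
  set T : Set V := {x | x ∈ c1.support} with hTdef
  -- first hit
  obtain ⟨s, p1, rest, hsplit1, hsT, hp1hits⟩ := firstHit c2' T ⟨s0, hs02', hs01⟩
  have hsw : s ≠ w := fun h => hwc1 (h ▸ hsT)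
  -- a hit different from s in rest
  have hg : ∃ g ∈ rest.support, g ∈ T ∧ g ≠ s := by
    rcases eq_or_ne s0 s with rfl | hs0s
    · -- use t0
      refine ⟨t0, ?_, ht01, fun h => hst0 h.symm⟩
      have ht0p1 : t0 ∉ p1.support := fun h => hst0 (hp1hits t0 h ht01).symm
      have := ht02'
      rw [hsplit1, Walk.mem_support_append_iff] at this
      rcases this with h | h
      · exact absurd h ht0p1
      · exact h
    · refine ⟨s0, ?_, hs01, hs0s⟩
      have hs0p1 : s0 ∉ p1.support := fun h => hs0s (hp1hits s0 h hs01)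
      have := hs02'
      rw [hsplit1, Walk.mem_support_append_iff] at this
      rcases this with h | h
      · exact absurd h hs0p1
      · exact h
  obtain ⟨g, hgrest, hgT, hgs⟩ := hg
  -- last hit
  obtain ⟨t, m, p2, hsplit2, htT, hp2hits⟩ := lastHit rest T ⟨g, hgrest, hgT⟩
  have htw : t ≠ w := fun h => hwc1 (h ▸ htT)
  -- nodup structure of c2'
  have hnd : (p1.support.tail ++ (m.support.tail ++ p2.support.tail)).Nodup := by
    have h1 := hc2'.support_nodup
    rw [hsplit1, Walk.tail_support_append, hsplit2, Walk.tail_support_append] at h1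
    exact h1
  rw [List.nodup_append] at hnd
  obtain ⟨hnd1, hnd23, hdisj1⟩ := hnd
  rw [List.nodup_append] at hnd23
  obtain ⟨hndm, hnd2, hdisj23⟩ := hnd23
  -- t ≠ s
  have hts : t ≠ s := by
    intro heq
    subst heq
    have hmnotnil : ¬m.Nil := by
      intro hnil
      have hgm : g ∈ m.support ∨ g ∈ p2.support := by
        have := hgrest
        rw [hsplit2, Walk.mem_support_append_iff] at this
        exact this
      rcases hgm with h | h
      · rw [Walk.nil_iff_support_eq.mp hnil] at h
        exact hgs (List.mem_singleton.mp h)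
      · exact hgs (hp2hits g h hgT)
    have hsm : t ∈ m.support.tail := mem_support_tail_of_closed hmnotnil (Walk.end_mem_support m)
    have hsp1 : t ∈ p1.support.tail := Walk.end_mem_tail_support_of_ne hsw.symm p1
    exact hdisj1 _ hsp1 _ (List.mem_append.mpr (Or.inl hsm)) rfl
  -- p1 and p2 are paths
  have hp2nil : ¬p2.Nil := by
    intro h
    exact htw (Walk.Nil.eq h)
  have hwp2 : w ∈ p2.support.tail := Walk.end_mem_tail_support_of_ne htw p2
  have hp1 : p1.IsPath := by
    apply Walk.IsPath.mk'
    rw [p1.support_eq_cons]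
    refine List.nodup_cons.mpr ⟨?_, hnd1⟩
    intro hwp1
    exact hdisj1 _ hwp1 _ (List.mem_append.mpr (Or.inr hwp2)) rfl
  have htm : t ∈ m.support.tail := Walk.end_mem_tail_support_of_ne hts.symm m
  have hp2 : p2.IsPath := by
    apply Walk.IsPath.mk'
    rw [p2.support_eq_cons]
    refine List.nodup_cons.mpr ⟨?_, hnd2⟩
    intro htp2
    exact hdisj23 _ htm _ htp2 rfl
  -- p1 ∩ p2 ⊆ {w}
  have hp1p2 : ∀ x, x ∈ p1.support → x ∈ p2.support → x = w := by
    intro x hx1 hx2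
    rw [p1.support_eq_cons, List.mem_cons] at hx1
    rcases hx1 with rfl | hx1
    · rfl
    rw [p2.support_eq_cons, List.mem_cons] at hx2
    rcases hx2 with rfl | hx2
    · exact absurd (hp1hits x (List.mem_of_mem_tail hx1) htT) hts
    · exact absurd (List.mem_append.mpr (Or.inr hx2)) (fun h => hdisj1 _ hx1 _ h rfl)
  -- hits of p1 / p2 in c1
  have hp1c1 : ∀ x, x ∈ p1.support → x ∈ c1.support → x = s := fun x h1 h2 => hp1hits x h1 h2
  have hp2c1 : ∀ x, x ∈ p2.support → x ∈ c1.support → x = t := fun x h1 h2 => hp2hits x h1 h2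
  -- arcs of c1 between s and t
  have hsc1 : s ∈ c1.support := hsT
  have htc1 : t ∈ c1.support := htT
  set c1' := c1.rotate s hsc1 with hc1'def
  have hc1' : c1'.IsCycle := hc1.rotate hsc1
  have htc1' : t ∈ c1'.support := mem_support_rotate hc1 hsc1 htc1
  have huc1' : u ∈ c1'.support := mem_support_rotate hc1 hsc1 hu
  have hA1path : (c1'.takeUntil t htc1').IsPath := takeUntil_isPath hc1' htc1' hts
  have hA2path : (c1'.dropUntil t htc1').IsPath := dropUntil_isPath hc1' htc1' hts
  have hA1sub : ∀ x, x ∈ (c1'.takeUntil t htc1').support → x ∈ c1.support := fun x hx =>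
    mem_support_of_mem_rotate hsc1 ((Walk.support_takeUntil_subset _ htc1') hx)
  have hA2sub : ∀ x, x ∈ (c1'.dropUntil t htc1').support → x ∈ c1.support := fun x hx =>
    mem_support_of_mem_rotate hsc1 ((Walk.support_dropUntil_subset _ htc1') hx)
  rcases mem_arc htc1' huc1' with huA | huA
  · -- u on arc s → t ; cycle: A1 ++ (p2 ++ p1)
    refine ⟨s, (c1'.takeUntil t htc1').append (p2.append p1), ?_, ?_, ?_⟩
    · apply glue3 hA1path hp2 hp1 hts.symm htw hsw.symm
      · intro x hx1 hx2
        exact hp2c1 x hx2 (hA1sub x hx1)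
      · exact fun x hx2 hx1 => hp1p2 x hx1 hx2
      · intro x hx1 hx2
        exact hp1c1 x hx2 (hA1sub x hx1)
    · rw [Walk.mem_support_append_iff]
      exact Or.inl huA
    · rw [Walk.mem_support_append_iff, Walk.mem_support_append_iff]
      exact Or.inr (Or.inr (Walk.start_mem_support p1))
  · -- u on arc t → s ; cycle: A2 ++ (p1.reverse ++ p2.reverse)
    refine ⟨t, (c1'.dropUntil t htc1').append (p1.reverse.append p2.reverse), ?_, ?_, ?_⟩
    · apply glue3 hA2path hp1.reverse hp2.reverse hts hsw htw.symm
      · intro x hx1 hx2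
        rw [Walk.support_reverse, List.mem_reverse] at hx2
        exact hp1c1 x hx2 (hA2sub x hx1)
      · intro x hx1 hx2
        rw [Walk.support_reverse, List.mem_reverse] at hx1 hx2
        exact hp1p2 x hx1 hx2
      · intro x hx1 hx2
        rw [Walk.support_reverse, List.mem_reverse] at hx2
        exact hp2c1 x hx2 (hA2sub x hx1)
    · rw [Walk.mem_support_append_iff]
      exact Or.inl huA
    · rw [Walk.mem_support_append_iff, Walk.mem_support_append_iff]
      refine Or.inr (Or.inl ?_)
      rw [Walk.support_reverse, List.mem_reverse]
      exact Walk.start_mem_support p1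
end BCAux5

namespace BCAux6
variable {V : Type*} {G : SimpleGraph V}
open BCAux BCAux2 BCAux3 BCAux4 BCAux5 SimpleGraph.Walk

lemma tdp_cycle {a v : V} (h : TwoDisjointPaths G a v) :
    ∃ c : G.Walk a a, c.IsCycle ∧ v ∈ c.support := by
  obtain ⟨p, q, hp, hq, hpq, hdisj⟩ := h
  have hav : a ≠ v := TwoDisjointPaths.ne ⟨p, q, hp, hq, hpq, hdisj⟩
  refine ⟨p.append q.reverse, ?_, ?_⟩
  · apply glue2 hp hq.reverse hav
    · intro x hxp hxq
      rw [Walk.support_reverse, List.mem_reverse] at hxq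
      exact hdisj x hxp hxq
    · rwa [Walk.reverse_reverse]
  · rw [Walk.mem_support_append_iff]
    exact Or.inl (Walk.end_mem_support _)

lemma fan [DecidableEq V] {rD : V} {D : G.Walk rD rD} (hD : D.IsCycle)
    {a b u v : V} (ha : a ∈ D.support) (hb : b ∈ D.support) (hab : a ≠ b)
    (hu : u ∈ D.support) (hvD : v ∉ D.support)
    (hav : TwoDisjointPaths G a v) (hbv : TwoDisjointPaths G b v) :
    OnCommonCycle G u v := by
  obtain ⟨Ca, hCa, hvCa⟩ := tdp_cycle hav
  -- if Ca shares a second vertex with D, done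
  by_cases hx : ∃ x, x ∈ Ca.support ∧ x ∈ D.support ∧ x ≠ a
  · obtain ⟨x, hx1, hx2, hx3⟩ := hx
    exact cycles_share_two hD hCa ha (Walk.start_mem_support Ca) hx2 hx1
      (fun h => hx3 h.symm) hu hvCa
  push_neg at hx
  have hCaD : ∀ x, x ∈ Ca.support → x ∈ D.support → x = a := fun x h1 h2 => hx x h1 h2
  -- a path from v to b avoiding a
  have hanev : a ≠ v := fun h => hvD (h ▸ ha)
  have hw : ∃ w : G.Walk v b, w.IsPath ∧ a ∉ w.support := by
    obtain ⟨q1, q2, hq1, hq2, hq12, hqdisj⟩ := hbv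
    by_cases ha1 : a ∈ q1.support
    · refine ⟨q2.reverse, hq2.reverse, ?_⟩
      rw [Walk.support_reverse, List.mem_reverse]
      intro ha2
      rcases hqdisj a ha1 ha2 with h | h
      · exact hab h
      · exact hanev h
    · refine ⟨q1.reverse, hq1.reverse, ?_⟩
      rwa [Walk.support_reverse, List.mem_reverse]
  obtain ⟨w, hwpath, haw⟩ := hw
  -- first hit of D along w
  obtain ⟨y', T, rest, hsplitw, hy'D, hThits⟩ :=
    firstHit w {x | x ∈ D.support} ⟨b, Walk.end_mem_support w, hb⟩
  have hTpath : T.IsPath := by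
    rw [hsplitw] at hwpath
    exact hwpath.of_append_left
  have hTsub : ∀ x, x ∈ T.support → x ∈ w.support := by
    intro x hxT
    rw [hsplitw, Walk.mem_support_append_iff]
    exact Or.inl hxT
  have hy'a : y' ≠ a := fun h => haw (h ▸ hTsub y' (Walk.end_mem_support T))
  -- last hit of Ca along T
  obtain ⟨z', m, S, hsplitT, hz'Ca, hShits⟩ :=
    lastHit T {x | x ∈ Ca.support} ⟨v, Walk.start_mem_support T, hvCa⟩
  have hSpath : S.IsPath := by
    rw [hsplitT] at hTpath
    exact hTpath.of_append_right
  have hSsub : ∀ x, x ∈ S.support → x ∈ T.support := by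
    intro x hxS
    rw [hsplitT, Walk.mem_support_append_iff]
    exact Or.inr hxS
  have hz'a : z' ≠ a := fun h => haw (h ▸ hTsub z' (hSsub z' (Walk.start_mem_support S)))
  have hSDhits : ∀ x, x ∈ S.support → x ∈ D.support → x = y' := fun x h1 h2 =>
    hThits x (hSsub x h1) h2
  have hz'y' : z' ≠ y' := by
    intro h
    exact hz'a (hCaD z' hz'Ca (h ▸ hy'D))
  -- arc of Ca from a to z' through v
  have harc := mem_arc (c := Ca) hz'Ca hvCa
  have hWex : ∃ W : G.Walk a z', W.IsPath ∧ v ∈ W.support ∧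
      (∀ x, x ∈ W.support → x ∈ Ca.support) := by
    rcases harc with h | h
    · exact ⟨Ca.takeUntil z' hz'Ca, takeUntil_isPath hCa hz'Ca hz'a, h,
        fun x hx => Walk.support_takeUntil_subset _ hz'Ca hx⟩
    · refine ⟨(Ca.dropUntil z' hz'Ca).reverse, (dropUntil_isPath hCa hz'Ca hz'a).reverse, ?_, ?_⟩
      · rwa [Walk.support_reverse, List.mem_reverse]
      · intro x hx
        rw [Walk.support_reverse, List.mem_reverse] at hx
        exact Walk.support_dropUntil_subset _ hz'Ca hx
  obtain ⟨W, hWpath, hvW, hWsub⟩ := hWex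
  -- arc of D from y' to a
  have hy'Dmem : y' ∈ D.support := hy'D
  set D' := D.rotate y' hy'Dmem with hD'def
  have hD' : D'.IsCycle := hD.rotate hy'Dmem
  have haD' : a ∈ D'.support := mem_support_rotate hD hy'Dmem ha
  set Darc := D'.takeUntil a haD' with hDarcdef
  have hDarcpath : Darc.IsPath := takeUntil_isPath hD' haD' hy'a.symm
  have hDarcsub : ∀ x, x ∈ Darc.support → x ∈ D.support := fun x hx =>
    mem_support_of_mem_rotate hy'Dmem ((Walk.support_takeUntil_subset _ haD') hx)
  -- glue
  have hC5 : (W.append (S.append Darc)).IsCycle := by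
    apply glue3 hWpath hSpath hDarcpath hz'a.symm hz'y' hy'a
    · intro x hx1 hx2
      exact hShits x hx2 (hWsub x hx1)
    · intro x hx1 hx2
      exact hSDhits x hx1 (hDarcsub x hx2)
    · intro x hx1 hx2
      exact hCaD x (hWsub x hx1) (hDarcsub x hx2)
  refine cycles_share_two hD hC5 ha (Walk.start_mem_support _) hy'D ?_ hy'a.symm hu ?_
  · rw [Walk.mem_support_append_iff, Walk.mem_support_append_iff]
    exact Or.inr (Or.inl (Walk.end_mem_support S))
  · rw [Walk.mem_support_append_iff]
    exact Or.inl hvW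

end BCAux6

namespace BCAux7
variable {V : Type*} {G : SimpleGraph V}
open BCAux BCAux2 BCAux3 BCAux4 BCAux5 BCAux6 SimpleGraph.Walk

lemma tdp_symm {u v : V} (h : TwoDisjointPaths G u v) : TwoDisjointPaths G v u := by
  obtain ⟨p, q, hp, hq, hpq, hdisj⟩ := h
  refine ⟨p.reverse, q.reverse, hp.reverse, hq.reverse, ?_, ?_⟩
  · intro heq
    apply hpq
    have := congrArg Walk.reverse heq
    rwa [Walk.reverse_reverse, Walk.reverse_reverse] at this
  · intro x hxp hxq
    rw [Walk.support_reverse, List.mem_reverse] at hxp hxq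
    exact (hdisj x hxp hxq).symm

/-- A cycle containing two distinct vertices of a biconnected component lies in it. -/
lemma absorb [DecidableEq V] {H : Set V} (hH : IsBiconnectedComponent G H)
    {rD : V} {D : G.Walk rD rD} (hD : D.IsCycle) {a b : V}
    (ha : a ∈ D.support) (haH : a ∈ H) (hb : b ∈ D.support) (hbH : b ∈ H)
    (hab : a ≠ b) : ∀ x ∈ D.support, x ∈ H := by
  have key : H ∪ {x | x ∈ D.support} = H := by
    apply hH.2 _ Set.subset_union_left
    intro u hu v hv huv
    by_cases huD : u ∈ D.support <;> by_cases hvD : v ∈ D.support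
    · exact OnCommonCycle.twoDisjointPaths ⟨rD, D, hD, huD, hvD⟩ huv
    · have hvH : v ∈ H := by
        rcases hv with h | h
        · exact h
        · exact absurd h hvD
      have hav : a ≠ v := fun h => hvD (h ▸ ha)
      have hbv : b ≠ v := fun h => hvD (h ▸ hb)
      exact OnCommonCycle.twoDisjointPaths
        (fan hD ha hb hab huD hvD (hH.1 a haH v hvH hav) (hH.1 b hbH v hvH hbv)) huv
    · have huH : u ∈ H := by
        rcases hu with h | h
        · exact h
        · exact absurd h huD
      have hau : a ≠ u := fun h => huD (h ▸ ha)
      have hbu : b ≠ u := fun h => huD (h ▸ hb)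
      exact tdp_symm (OnCommonCycle.twoDisjointPaths
        (fan hD ha hb hab hvD huD (hH.1 a haH u huH hau) (hH.1 b hbH u huH hbu)) huv.symm)
    · have hvH : v ∈ H := by
        rcases hv with h | h
        · exact h
        · exact absurd h hvD
      have huH : u ∈ H := by
        rcases hu with h | h
        · exact h
        · exact absurd h huD
      exact hH.1 u huH v hvH huv
  intro x hx
  rw [← key]
  exact Or.inr hx

end BCAux7

namespace BCAux8
variable {V : Type*} {G : SimpleGraph V}
open BCAux BCAux2 BCAux3 BCAux4 BCAux5 BCAux6 BCAux7 SimpleGraph.Walk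

lemma reachable_closed [DecidableEq V] {K : SimpleGraph V} {r u v : V} {c : K.Walk r r}
    (hu : u ∈ c.support) (hv : v ∈ c.support) : K.Reachable u v := by
  by_cases hn : c.Nil
  · rw [Walk.nil_iff_support_eq.mp hn, List.mem_singleton] at hu hv
    rw [hu, hv]
  · have hv' : v ∈ (c.rotate u hu).support := mem_support_rotate' hn hu hv
    exact ⟨(c.rotate u hu).takeUntil v hv'⟩

lemma dist_triangle_reach {K : SimpleGraph V} {u w v : V} (h1 : K.Reachable u w)
    (h2 : K.Reachable w v) : K.dist u v ≤ K.dist u w + K.dist w v := by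
  obtain ⟨p, hp⟩ := h1.exists_walk_length_eq_dist
  obtain ⟨q, hq⟩ := h2.exists_walk_length_eq_dist
  calc K.dist u v ≤ (p.append q).length := SimpleGraph.dist_le _
    _ = K.dist u w + K.dist w v := by rw [Walk.length_append, hp, hq]

lemma dist_le_of_le {K G : SimpleGraph V} (h : K ≤ G) {u v : V} (hr : K.Reachable u v) :
    G.dist u v ≤ K.dist u v := by
  obtain ⟨p, hp⟩ := hr.exists_walk_length_eq_dist
  have hsub : ∀ e ∈ p.edges, e ∈ G.edgeSet := fun e he =>
    SimpleGraph.edgeSet_mono h (Walk.edges_subset_edgeSet p he)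
  calc G.dist u v ≤ (p.transfer G hsub).length := SimpleGraph.dist_le _
    _ = K.dist u v := by rw [Walk.length_transfer, hp]

lemma length_rotate [DecidableEq V] {r u : V} {c : G.Walk r r} (hu : u ∈ c.support) :
    (c.rotate u hu).length = c.length := by
  have h := arc_length (c := c) hu
  rw [Walk.rotate, Walk.length_append]
  omega

end BCAux8

open BCAux BCAux2 BCAux3 BCAux4 BCAux5 BCAux6 BCAux7 BCAux8 SimpleGraph.Walk in
/-- Any biconnected component `H` of a graph `G` containing at least two vertices
contains a min-cycle of `G`. -/
theorem biconnected_component_has_min_cycle {V : Type*} [Fintype V]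
    (G : SimpleGraph V)
    (H : Set V) (hH : IsBiconnectedComponent G H)
    (hH2 : ∃ x ∈ H, ∃ y ∈ H, x ≠ y) :
    ∃ (a : V) (c : G.Walk a a), IsMinCycle c ∧ ∀ x ∈ c.support, x ∈ H := by
  classical
  obtain ⟨x, hxH, y, hyH, hxy⟩ := hH2
  obtain ⟨c0, hc0, hyc0⟩ := tdp_cycle (hH.1 x hxH y hyH hxy)
  have hc0H : ∀ z ∈ c0.support, z ∈ H :=
    absorb hH hc0 (Walk.start_mem_support c0) hxH hyc0 hyH hxy
  -- minimal length cycle contained in H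
  have hPex : ∃ n : ℕ, ∃ (a : V) (c : G.Walk a a), c.IsCycle ∧ (∀ z ∈ c.support, z ∈ H) ∧
      c.length = n := ⟨c0.length, x, c0, hc0, hc0H, rfl⟩
  obtain ⟨a, C, hC, hCH, hClen⟩ := Nat.find_spec hPex
  have hCmin : ∀ (b' : V) (c' : G.Walk b' b'), c'.IsCycle → (∀ z ∈ c'.support, z ∈ H) →
      Nat.find hPex ≤ c'.length := fun b' c' h1 h2 => Nat.find_min' hPex ⟨b', c', h1, h2, rfl⟩
  refine ⟨a, C, ⟨hC, ?_⟩, hCH⟩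
  set K := SimpleGraph.fromEdgeSet {e | e ∈ C.edges} with hKdef
  have hKedges : ∀ e ∈ C.edges, e ∈ K.edgeSet := by
    intro e he
    rw [hKdef, SimpleGraph.edgeSet_fromEdgeSet, Set.mem_diff]
    exact ⟨he, G.not_isDiag_of_mem_edgeSet (Walk.edges_subset_edgeSet C he)⟩
  have hKG : K ≤ G := by
    rw [hKdef]
    intro p q hpq
    rw [SimpleGraph.fromEdgeSet_adj] at hpq
    exact C.adj_of_mem_edges hpq.1
  have hreach : ∀ u ∈ C.support, ∀ v ∈ C.support, K.Reachable u v := by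
    intro u hu v hv
    apply reachable_closed (c := C.transfer K hKedges) <;>
      rwa [Walk.support_transfer]
  have hged : ∀ u ∈ C.support, ∀ v ∈ C.support, G.dist u v ≤ K.dist u v := fun u hu v hv =>
    dist_le_of_le hKG (hreach u hu v hv)
  by_contra hcon
  push_neg at hcon
  obtain ⟨u0, hu0, v0, hv0, hne0⟩ := hcon
  have hQex : ∃ k : ℕ, ∃ u, u ∈ C.support ∧ ∃ v, v ∈ C.support ∧
      G.dist u v < K.dist u v ∧ G.dist u v = k :=
    ⟨G.dist u0 v0, u0, hu0, v0, hv0,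
      lt_of_le_of_ne (hged u0 hu0 v0 hv0) (fun h => hne0 h.symm), rfl⟩
  obtain ⟨u, hu, v, hv, hlt, hk⟩ := Nat.find_spec hQex
  set k0 := Nat.find hQex with hk0def
  have huv : u ≠ v := by
    rintro rfl
    rw [SimpleGraph.dist_self, SimpleGraph.dist_self] at hlt
    exact Nat.lt_irrefl 0 hlt
  have hreachG : G.Reachable u v := (hreach u hu v hv).mono hKG
  obtain ⟨P0, hP0len⟩ := hreachG.exists_walk_length_eq_dist
  set P := P0.bypass with hPdef
  have hPpath : P.IsPath := P0.bypass_isPath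
  have hPlen : P.length = G.dist u v :=
    le_antisymm (hP0len ▸ P0.length_bypass_le) (SimpleGraph.dist_le _)
  -- internal vertices of P avoid C
  have hint : ∀ z ∈ P.support, z ≠ u → z ≠ v → z ∉ C.support := by
    intro z hz hzu hzv hzC
    have hsum : (P.takeUntil z hz).length + (P.dropUntil z hz).length = P.length := by
      have := congrArg Walk.length (P.take_spec hz)
      rwa [Walk.length_append] at this
    have h1pos : 0 < (P.takeUntil z hz).length :=
      Nat.pos_of_ne_zero (fun h0 => hzu (Walk.eq_of_length_eq_zero h0).symm)
    have h2pos : 0 < (P.dropUntil z hz).length :=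
      Nat.pos_of_ne_zero (fun h0 => hzv (Walk.eq_of_length_eq_zero h0))
    have hd1 : G.dist u z ≤ (P.takeUntil z hz).length := SimpleGraph.dist_le _
    have hd2 : G.dist z v ≤ (P.dropUntil z hz).length := SimpleGraph.dist_le _
    have hK1 : K.dist u z ≤ G.dist u z := by
      by_contra hcon2
      push_neg at hcon2
      have : G.dist u z < k0 := by omega
      exact Nat.find_min hQex this ⟨u, hu, z, hzC, hcon2, rfl⟩
    have hK2 : K.dist z v ≤ G.dist z v := by
      by_contra hcon2
      push_neg at hcon2
      have : G.dist z v < k0 := by omega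
      exact Nat.find_min hQex this ⟨z, hzC, v, hv, hcon2, rfl⟩
    have htri : K.dist u v ≤ K.dist u z + K.dist z v :=
      dist_triangle_reach (hreach u hu z hzC) (hreach z hzC v hv)
    omega
  -- arcs of C between u and v
  have hC' : (C.rotate u hu).IsCycle := hC.rotate hu
  have hv' : v ∈ (C.rotate u hu).support := mem_support_rotate hC hu hv
  set A1 := (C.rotate u hu).takeUntil v hv' with hA1def
  set A2 := (C.rotate u hu).dropUntil v hv' with hA2def
  have hA2path : A2.IsPath := dropUntil_isPath hC' hv' huv.symm
  have hE1 : ∀ e ∈ A1.edges, e ∈ K.edgeSet := fun e he =>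
    hKedges e (((C.rotate_edges u hu).mem_iff).mp (Walk.edges_takeUntil_subset _ hv' he))
  have hE2 : ∀ e ∈ A2.edges, e ∈ K.edgeSet := fun e he =>
    hKedges e (((C.rotate_edges u hu).mem_iff).mp (Walk.edges_dropUntil_subset _ hv' he))
  have hKd1 : K.dist u v ≤ A1.length := by
    have := SimpleGraph.dist_le (A1.transfer K hE1)
    rwa [Walk.length_transfer] at this
  have hKd2 : K.dist u v ≤ A2.length := by
    have := SimpleGraph.dist_le (A2.transfer K hE2)
    rw [Walk.length_transfer] at this
    rwa [SimpleGraph.dist_comm] at this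
  -- new shorter cycle
  have hdisjPA : ∀ z, z ∈ P.support → z ∈ A2.support → z = u ∨ z = v := by
    intro z hzP hzA
    by_contra hcon3
    push_neg at hcon3
    refine hint z hzP hcon3.1 hcon3.2 ?_
    exact mem_support_of_mem_rotate hu (Walk.support_dropUntil_subset _ hv' hzA)
  have hPA2ne : P ≠ A2.reverse := by
    intro heq
    have := congrArg Walk.length heq
    rw [Walk.length_reverse] at this
    omega
  have hCnew : (P.append A2).IsCycle := glue2 hPpath hA2path huv hdisjPA hPA2ne
  have hvCnew : v ∈ (P.append A2).support := by
    rw [Walk.mem_support_append_iff]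
    exact Or.inr (Walk.start_mem_support A2)
  have hCnewH : ∀ z ∈ (P.append A2).support, z ∈ H :=
    absorb hH hCnew (Walk.start_mem_support _) (hCH u hu) hvCnew (hCH v hv) huv
  have hlen : (P.append A2).length < C.length := by
    have harc : A1.length + A2.length = (C.rotate u hu).length := arc_length hv'
    have hrot : (C.rotate u hu).length = C.length := length_rotate hu
    rw [Walk.length_append]
    omega
  have := hCmin _ _ hCnew hCnewH
  omega
end

section
/- Suppose α > 2(n−1) and the strategy profile is a Nash equilibrium whose induced graph G contains a cycle. Then the girth of G (the length of its shortest cycle) is at least 2α/(n−1) + 2. -/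
open SimpleGraph Finset

/-- The undirected graph induced by a strategy profile `buy`:
`u` and `v` are adjacent iff they are distinct and one of them buys an edge to the other. -/
def inducedGraph {n : ℕ} (buy : Fin n → Finset (Fin n)) : SimpleGraph (Fin n) where
  Adj u v := u ≠ v ∧ (u ∈ buy v ∨ v ∈ buy u)
  symm := ⟨fun u v h => ⟨h.1.symm, h.2.symm⟩⟩
  loopless := ⟨fun v h => h.1 rfl⟩

/-- The connection cost `D(v) = Σ_{u ≠ v} d(v,u)` of a vertex. -/
noncomputable def connCost {n : ℕ} (buy : Fin n → Finset (Fin n)) (v : Fin n) : ℕ :=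
  ∑ u ∈ Finset.univ \ {v}, (inducedGraph buy).dist v u

/-- The total cost of vertex `v`: building cost plus connection cost. -/
noncomputable def gameCost {n : ℕ} (α : ℝ) (buy : Fin n → Finset (Fin n)) (v : Fin n) : ℝ :=
  α * (buy v).card + connCost buy v

/-- A strategy profile is a Nash equilibrium if its graph is connected (otherwise some
vertex has infinite cost and can improve by deviating) and no vertex can strictly decrease
its cost by changing its strategy; a deviation yielding a disconnected graph has infinite
cost, so only deviations yielding connected graphs are constrained. -/
def IsNashEq {n : ℕ} (α : ℝ) (buy : Fin n → Finset (Fin n)) : Prop :=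
  (inducedGraph buy).Connected ∧
  ∀ (v : Fin n) (s : Finset (Fin n)), v ∉ s →
    (inducedGraph (Function.update buy v s)).Connected →
    gameCost α buy v ≤ gameCost α (Function.update buy v s) v

/-! ### Auxiliary material -/

section WalkAux

variable {V : Type*} [DecidableEq V] {G : SimpleGraph V}

/-- If an edge `s(v,u)` incident to the start of a path occurs among its edges,
then it is the first edge; in particular there is a walk from `u` of one smaller length. -/
lemma first_edge_aux {v x u : V} (p : G.Walk v x) (hp : p.IsPath)
    (he : s(v, u) ∈ p.edges) : ∃ q : G.Walk u x, q.length + 1 = p.length := by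
  cases p with
  | nil => simp at he
  | @cons _ w _ h q =>
    rw [SimpleGraph.Walk.edges_cons, List.mem_cons] at he
    rcases he with he | he
    · rw [Sym2.eq_iff] at he
      rcases he with ⟨-, rfl⟩ | ⟨rfl, rfl⟩
      · exact ⟨q, by simp⟩
      · exact absurd rfl h.ne
    · exfalso
      have hv := SimpleGraph.Walk.fst_mem_support_of_mem_edges q he
      rw [SimpleGraph.Walk.cons_isPath_iff] at hp
      exact hp.2 hv

/-- Two edges of a path that are both incident to the starting vertex coincide. -/
lemma first_edge_unique {v x u₁ u₂ : V} (p : G.Walk v x) (hp : p.IsPath)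
    (h1 : s(v, u₁) ∈ p.edges) (h2 : s(v, u₂) ∈ p.edges) : u₁ = u₂ := by
  cases p with
  | nil => simp at h1
  | @cons _ w _ h q =>
    rw [SimpleGraph.Walk.cons_isPath_iff] at hp
    have key : ∀ z : V, s(v, z) ∈ (SimpleGraph.Walk.cons h q).edges → z = w := by
      intro z hz
      rw [SimpleGraph.Walk.edges_cons, List.mem_cons] at hz
      rcases hz with hz | hz
      · rw [Sym2.eq_iff] at hz
        rcases hz with ⟨-, rfl⟩ | ⟨rfl, rfl⟩
        · rfl
        · exact absurd rfl h.ne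
      · exact absurd (SimpleGraph.Walk.fst_mem_support_of_mem_edges q hz) hp.2
    rw [key u₁ h1, key u₂ h2]

/-- If a vertex `m ≠ a` lies on a walk from `a` to `b`, the walk has length at least
`1 + dist m b`. -/
lemma length_ge_of_mem_support {a b m : V} (p : G.Walk a b) (hm : m ∈ p.support)
    (hma : m ≠ a) : G.dist m b + 1 ≤ p.length := by
  have hspec := p.take_spec hm
  have hlen : (p.takeUntil m hm).length + (p.dropUntil m hm).length = p.length := by
    rw [← SimpleGraph.Walk.length_append, hspec]
  have h1 : 1 ≤ (p.takeUntil m hm).length := by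
    rcases Nat.eq_zero_or_pos (p.takeUntil m hm).length with h0 | h0
    · exact absurd (SimpleGraph.Walk.eq_of_length_eq_zero h0).symm hma
    · exact h0
  have h2 : G.dist m b ≤ (p.dropUntil m hm).length := SimpleGraph.dist_le _
  omega

/-- Distances only grow when passing to a subgraph (provided the subgraph is connected). -/
lemma dist_le_dist_of_le {G' : SimpleGraph V} (hle : G' ≤ G) (hconn : G'.Connected)
    (a b : V) : G.dist a b ≤ G'.dist a b := by
  obtain ⟨p, hp⟩ := hconn.exists_walk_length_eq_dist a b
  calc G.dist a b ≤ (p.mapLe hle).length := SimpleGraph.dist_le _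
    _ = p.length := SimpleGraph.Walk.length_map _ _
    _ = G'.dist a b := hp

/-- Deleting one edge whose endpoints remain reachable keeps the graph connected. -/
lemma delete_edge_connected {v u : V} (hG : G.Connected)
    (hre : (G.deleteEdges {s(v, u)}).Reachable v u) :
    (G.deleteEdges {s(v, u)}).Connected := by
  have key : ∀ {a b : V}, G.Adj a b → (G.deleteEdges {s(v, u)}).Reachable a b := by
    intro a b hab
    by_cases he : s(a, b) = s(v, u)
    · rw [Sym2.eq_iff] at he
      rcases he with ⟨rfl, rfl⟩ | ⟨rfl, rfl⟩
      · exact hre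
      · exact hre.symm
    · exact SimpleGraph.Adj.reachable (by simp [SimpleGraph.deleteEdges_adj, hab, he])
  have walkreach : ∀ {a b : V} (_ : G.Walk a b), (G.deleteEdges {s(v, u)}).Reachable a b := by
    intro a b p
    induction p with
    | nil => exact SimpleGraph.Reachable.refl _
    | cons h q ih => exact (key h).trans ih
  rw [SimpleGraph.connected_iff] at hG ⊢
  exact ⟨fun a b => walkreach (hG.1 a b).some, hG.2⟩

/-- `getVert` in terms of the support list. -/
lemma getVert_eq_support_getElem {a b : V} (p : G.Walk a b) :
    ∀ {i : ℕ} (h : i ≤ p.length),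
      p.getVert i = p.support[i]'(by rw [SimpleGraph.Walk.length_support]; omega) := by
  induction p with
  | nil =>
    intro i h
    simp only [SimpleGraph.Walk.length_nil] at h
    have : i = 0 := by omega
    subst this
    simp
  | cons hadj q ih =>
    intro i h
    cases i with
    | zero => simp
    | succ i =>
      rw [SimpleGraph.Walk.length_cons] at h
      rw [SimpleGraph.Walk.getVert_cons_succ]
      simpa [SimpleGraph.Walk.support_cons] using ih (by omega)

/-- The first `length` vertices of a cycle are pairwise distinct. -/
lemma cycle_getVert_inj {a : V} {c : G.Walk a a} (hc : c.IsCycle)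
    {i j : ℕ} (hi : i < c.length) (hj : j < c.length) (hij : c.getVert i = c.getVert j) :
    i = j := by
  have hnd := hc.support_nodup
  have h3 := hc.three_le_length
  have hTlen : c.support.tail.length = c.length := by
    have h := SimpleGraph.Walk.length_support c
    rw [SimpleGraph.Walk.support_eq_cons] at h
    simpa using h
  have hgv : ∀ {m : ℕ} (hm : m < c.length),
      c.getVert (m + 1) = c.support.tail[m]'(by omega) := by
    intro m hm
    rw [getVert_eq_support_getElem c (by omega : m + 1 ≤ c.length)]
    rw [List.getElem_of_eq (SimpleGraph.Walk.support_eq_cons c)]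
    simp
  have hlast : c.support.tail[c.length - 1]'(by omega) = a := by
    have h := hgv (m := c.length - 1) (by omega)
    rw [show c.length - 1 + 1 = c.length by omega, SimpleGraph.Walk.getVert_length] at h
    exact h.symm
  by_cases hi0 : i = 0 <;> by_cases hj0 : j = 0
  · rw [hi0, hj0]
  · exfalso
    subst hi0
    rw [SimpleGraph.Walk.getVert_zero] at hij
    rw [show j = (j - 1) + 1 by omega, hgv (by omega : j - 1 < c.length)] at hij
    have := hnd.getElem_inj_iff.mp (hlast.trans hij)
    omega
  · exfalso
    subst hj0
    rw [SimpleGraph.Walk.getVert_zero] at hij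
    rw [show i = (i - 1) + 1 by omega, hgv (by omega : i - 1 < c.length)] at hij
    have := hnd.getElem_inj_iff.mp (hij.trans hlast.symm)
    omega
  · rw [show i = (i - 1) + 1 by omega, hgv (by omega : i - 1 < c.length),
      show j = (j - 1) + 1 by omega, hgv (by omega : j - 1 < c.length)] at hij
    have := hnd.getElem_inj_iff.mp hij
    omega

end WalkAux

/-- What happens to the graph after deleting one edge: the two facts about vertices whose
distance from `v` increases when the bought edge `s(v,u)` is deleted. -/
lemma del_facts {V : Type*} [DecidableEq V] {G : SimpleGraph V} (hG : G.Connected)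
    {v u x : V} (hadj : G.Adj v u)
    (hd : G.dist v x < (G.deleteEdges {s(v, u)}).dist v x) :
    G.dist v x = G.dist u x + 1 ∧
      (G.deleteEdges {s(v, u)}).dist u x ≤ G.dist u x := by
  obtain ⟨p, hp, hlen⟩ := (hG.preconnected v x).exists_path_of_dist
  have he : s(v, u) ∈ p.edges := by
    by_contra he
    have hq : ∀ e ∈ p.edges, e ∉ ({s(v, u)} : Set (Sym2 V)) := by
      intro e hep hmem
      rw [Set.mem_singleton_iff] at hmem
      exact he (hmem ▸ hep)
    have hd2 := SimpleGraph.dist_le (p.toDeleteEdges {s(v, u)} hq)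
    rw [SimpleGraph.Walk.length_transfer] at hd2
    omega
  obtain ⟨q, hql⟩ := first_edge_aux p hp he
  have h1 : G.dist u x + 1 ≤ G.dist v x := by
    have := SimpleGraph.dist_le q
    omega
  have h2 : G.dist v x ≤ G.dist u x + 1 := by
    have htri := hG.dist_triangle (u := v) (v := u) (w := x)
    have hone : G.dist v u = 1 := SimpleGraph.dist_eq_one_iff_adj.mpr hadj
    omega
  refine ⟨by omega, ?_⟩
  obtain ⟨r, hr, hrlen⟩ := (hG.preconnected u x).exists_path_of_dist
  have hre : s(v, u) ∉ r.edges := by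
    intro hre
    have hre' : s(u, v) ∈ r.edges := by rwa [Sym2.eq_swap] at hre
    obtain ⟨q', hq'⟩ := first_edge_aux r hr hre'
    have := SimpleGraph.dist_le q'
    omega
  have hq : ∀ e ∈ r.edges, e ∉ ({s(v, u)} : Set (Sym2 V)) := by
    intro e hep hmem
    rw [Set.mem_singleton_iff] at hmem
    exact hre (hmem ▸ hep)
  have hd2 := SimpleGraph.dist_le (r.toDeleteEdges {s(v, u)} hq)
  rw [SimpleGraph.Walk.length_transfer] at hd2
  omega

section Game

variable {n : ℕ} {buy : Fin n → Finset (Fin n)}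

lemma inducedGraph_adj {a b : Fin n} :
    (inducedGraph buy).Adj a b ↔ a ≠ b ∧ (a ∈ buy b ∨ b ∈ buy a) := Iff.rfl

lemma inducedGraph_update_self {v u : Fin n} (hvu : v ≠ u) (hrev : v ∈ buy u) :
    inducedGraph (Function.update buy v (buy v \ {u})) = inducedGraph buy := by
  ext a b
  show a ≠ b ∧ (a ∈ Function.update buy v (buy v \ {u}) b ∨
      b ∈ Function.update buy v (buy v \ {u}) a) ↔ a ≠ b ∧ (a ∈ buy b ∨ b ∈ buy a)
  by_cases hav : a = v <;> by_cases hbv : b = v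
  · subst hav; subst hbv; tauto
  · subst hav
    by_cases hbu : b = u <;>
      simp_all [Function.update_apply, Finset.mem_sdiff, Finset.mem_singleton] <;> tauto
  · subst hbv
    by_cases hau : a = u <;>
      simp_all [Function.update_apply, Finset.mem_sdiff, Finset.mem_singleton] <;> tauto
  · simp_all [Function.update_apply]

lemma inducedGraph_update_delete {v u : Fin n} (hvu : v ≠ u) (hrev : v ∉ buy u) :
    inducedGraph (Function.update buy v (buy v \ {u})) =
      (inducedGraph buy).deleteEdges {s(v, u)} := by
  ext a b
  rw [SimpleGraph.deleteEdges_adj]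
  show a ≠ b ∧ (a ∈ Function.update buy v (buy v \ {u}) b ∨
      b ∈ Function.update buy v (buy v \ {u}) a) ↔
      (a ≠ b ∧ (a ∈ buy b ∨ b ∈ buy a)) ∧ ¬(s(a, b) ∈ ({s(v, u)} : Set (Sym2 (Fin n))))
  simp only [Set.mem_singleton_iff, Sym2.eq_iff]
  by_cases hav : a = v <;> by_cases hbv : b = v
  · subst hav; subst hbv; tauto
  · subst hav
    by_cases hbu : b = u <;>
      simp_all [Function.update_apply, Finset.mem_sdiff, Finset.mem_singleton] <;> tauto
  · subst hbv
    by_cases hau : a = u <;>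
      simp_all [Function.update_apply, Finset.mem_sdiff, Finset.mem_singleton] <;> tauto
  · by_cases hau : a = u <;> by_cases hbu : b = u <;>
      simp_all [Function.update_apply, Finset.mem_sdiff, Finset.mem_singleton] <;> tauto

variable {α : ℝ}

lemma no_mutual (hα0 : 0 < α) (hlegal : ∀ v, v ∉ buy v) (hNE : IsNashEq α buy)
    {v u : Fin n} (hb : u ∈ buy v) : v ∉ buy u := by
  intro hrev
  have hvu : v ≠ u := fun h => hlegal u (h ▸ hb)
  have hgr := inducedGraph_update_self (buy := buy) hvu hrev
  have hcon : (inducedGraph (Function.update buy v (buy v \ {u}))).Connected := by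
    rw [hgr]; exact hNE.1
  have hle := hNE.2 v (buy v \ {u}) (by simp [hlegal v]) hcon
  rw [gameCost, gameCost] at hle
  have hcc : connCost (Function.update buy v (buy v \ {u})) v = connCost buy v := by
    unfold connCost
    rw [hgr]
  rw [Function.update_self, hcc] at hle
  have hpos : 1 ≤ (buy v).card := Finset.card_pos.mpr ⟨u, hb⟩
  have hcard : ((buy v \ {u}).card : ℝ) = ((buy v).card : ℝ) - 1 := by
    rw [Finset.card_sdiff_of_subset (by simpa using hb), Finset.card_singleton, Nat.cast_sub hpos,
      Nat.cast_one]
  rw [hcard] at hle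
  nlinarith

/-- The key consequence of Nash optimality for deleting a bought edge `s(v,u)` that lies
on a cycle of length `k`. -/
lemma del_key {k : ℕ} (hk : 3 ≤ k) (hα0 : 0 < α) (hlegal : ∀ v, v ∉ buy v)
    (hNE : IsNashEq α buy) {v u : Fin n} (hb : u ∈ buy v)
    (hconn' : ((inducedGraph buy).deleteEdges {s(v, u)}).Connected)
    (hdist' : ((inducedGraph buy).deleteEdges {s(v, u)}).dist v u ≤ k - 1) :
    α ≤ ((k : ℝ) - 2) * ((Finset.univ \ {v}).filter (fun x =>
      (inducedGraph buy).dist v x <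
        ((inducedGraph buy).deleteEdges {s(v, u)}).dist v x)).card := by
  set G := inducedGraph buy with hGdef
  set Gd := G.deleteEdges {s(v, u)} with hGddef
  have hvu : v ≠ u := fun h => hlegal u (h ▸ hb)
  have hrev : v ∉ buy u := no_mutual hα0 hlegal hNE hb
  have hadj : G.Adj v u := ⟨hvu, Or.inr hb⟩
  have hgr := inducedGraph_update_delete (buy := buy) hvu hrev
  have hcon : (inducedGraph (Function.update buy v (buy v \ {u}))).Connected := by
    rw [hgr]; exact hconn'
  have hle := hNE.2 v (buy v \ {u}) (by simp [hlegal v]) hcon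
  rw [gameCost, gameCost] at hle
  have hcc : connCost (Function.update buy v (buy v \ {u})) v =
      ∑ x ∈ Finset.univ \ {v}, Gd.dist v x := by
    unfold connCost
    rw [hgr]
  rw [Function.update_self, hcc] at hle
  have hpos : 1 ≤ (buy v).card := Finset.card_pos.mpr ⟨u, hb⟩
  have hcard : ((buy v \ {u}).card : ℝ) = ((buy v).card : ℝ) - 1 := by
    rw [Finset.card_sdiff_of_subset (by simpa using hb), Finset.card_singleton, Nat.cast_sub hpos,
      Nat.cast_one]
  rw [hcard] at hle
  have hmain : α ≤ (∑ x ∈ Finset.univ \ {v}, (Gd.dist v x : ℝ)) -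
      ∑ x ∈ Finset.univ \ {v}, (G.dist v x : ℝ) := by
    unfold connCost at hle
    push_cast at hle
    nlinarith
  -- pointwise bound
  have hpt : ∀ x ∈ Finset.univ \ {v}, (Gd.dist v x : ℝ) - (G.dist v x : ℝ) ≤
      (if G.dist v x < Gd.dist v x then ((k : ℝ) - 2) else 0) := by
    intro x hx
    by_cases hlt : G.dist v x < Gd.dist v x
    · rw [if_pos hlt]
      obtain ⟨heq, hux⟩ := del_facts hNE.1 hadj hlt
      rw [← hGdef] at heq hux
      rw [← hGddef] at hux
      have htri : Gd.dist v x ≤ Gd.dist v u + Gd.dist u x := hconn'.dist_triangle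
      have hbound : Gd.dist v x + 2 ≤ k + G.dist v x := by omega
      have : (Gd.dist v x : ℝ) + 2 ≤ (k : ℝ) + (G.dist v x : ℝ) := by exact_mod_cast hbound
      linarith
    · rw [if_neg hlt]
      have hmono : G.dist v x ≤ Gd.dist v x :=
        dist_le_dist_of_le (SimpleGraph.deleteEdges_le _) hconn' v x
      have : G.dist v x = Gd.dist v x := le_antisymm hmono (by omega)
      rw [this]
      simp
  calc α ≤ (∑ x ∈ Finset.univ \ {v}, (Gd.dist v x : ℝ)) -
      ∑ x ∈ Finset.univ \ {v}, (G.dist v x : ℝ) := hmain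
    _ = ∑ x ∈ Finset.univ \ {v}, ((Gd.dist v x : ℝ) - (G.dist v x : ℝ)) := by
        rw [Finset.sum_sub_distrib]
    _ ≤ ∑ x ∈ Finset.univ \ {v}, (if G.dist v x < Gd.dist v x then ((k : ℝ) - 2) else 0) :=
        Finset.sum_le_sum hpt
    _ = ∑ x ∈ (Finset.univ \ {v}).filter (fun x => G.dist v x < Gd.dist v x),
          ((k : ℝ) - 2) := (Finset.sum_filter _ _).symm
    _ = ((k : ℝ) - 2) * ((Finset.univ \ {v}).filter (fun x =>
          G.dist v x < Gd.dist v x)).card := by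
        rw [Finset.sum_const, nsmul_eq_mul, mul_comm]

end Game

section ZModAux

variable {k : ℕ}

lemma zmod_closure [NeZero k] (P : ZMod k → Prop) (i₀ : ZMod k) (h0 : P i₀)
    (hs : ∀ j, P j → P (j + 1)) : ∀ j, P j := by
  have key : ∀ m : ℕ, P (i₀ + m) := by
    intro m
    induction m with
    | zero => simpa using h0
    | succ m ih =>
      have h := hs _ ih
      rwa [show ((m + 1 : ℕ) : ZMod k) = ((m : ℕ) : ZMod k) + 1 by push_cast; ring,
        ← add_assoc]
  intro j
  have h := key (j - i₀).val
  rwa [ZMod.natCast_zmod_val, add_sub_cancel] at h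

lemma zmod_cast_ne_zero (hk : 3 ≤ k) {m : ℕ} (h0 : 0 < m) (hm : m < k) :
    ((m : ℕ) : ZMod k) ≠ 0 := by
  haveI : NeZero k := ⟨by omega⟩
  intro h
  have hdvd := (ZMod.natCast_eq_zero_iff m k).mp h
  have := Nat.le_of_dvd h0 hdvd
  omega

/-- The combinatorial counting lemma: on a cyclic sequence `t` of naturals, the number of
indices where the "descent with no ascent before" pattern `a` can hold is less than `k/2`. -/
lemma cyclic_count [NeZero k] (hk : 3 ≤ k) (t : ZMod k → ℕ) (a : ZMod k → Prop)
    [DecidablePred a]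
    (h1 : ∀ i, a i → t i = t (i + 1) + 1)
    (h2 : ∀ i, a i → t i ≤ t (i - 1))
    (hlip : ∀ i, t (i + 1) ≤ t i + 1) :
    2 * (Finset.univ.filter a).card ≤ k - 1 := by
  set s : ZMod k → ℤ := fun i => (t i : ℤ) - t (i + 1) with hs
  have hsum : ∑ i : ZMod k, s i = 0 := by
    rw [Finset.sum_sub_distrib, sub_eq_zero]
    exact (Fintype.sum_equiv (Equiv.addRight (1 : ZMod k))
      (fun i => (t (i + 1) : ℤ)) (fun j => (t j : ℤ)) (fun i => rfl)).symm
  set A := Finset.univ.filter a with hA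
  set U := Finset.univ.filter (fun i => s i = -1) with hU
  have hsA : ∀ i ∈ A, s i = (1 : ℤ) := by
    intro i hi
    have := h1 i (Finset.mem_filter.mp hi).2
    simp only [hs]
    omega
  have hAU : Disjoint A U := by
    rw [Finset.disjoint_left]
    intro i hiA hiU
    have h1' := hsA i hiA
    have h2' := (Finset.mem_filter.mp hiU).2
    omega
  have hslb : ∀ i, (-1 : ℤ) ≤ s i := by
    intro i
    have := hlip i
    simp only [hs]
    omega
  have hAleU : (A.card : ℤ) ≤ U.card := by
    have hUsum : ∑ i ∈ U, s i = -(U.card : ℤ) := by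
      rw [Finset.sum_congr rfl (fun i hi => (Finset.mem_filter.mp hi).2)]
      simp [hU]
    have hsplit : ∑ i ∈ U, s i + ∑ i ∈ Uᶜ, s i = 0 := by
      rw [Finset.sum_add_sum_compl]
      exact hsum
    have hArest : (A.card : ℤ) ≤ ∑ i ∈ Uᶜ, s i := by
      have hA_sub : A ⊆ Uᶜ := by
        intro i hi
        rw [Finset.mem_compl]
        exact fun hiU => (Finset.disjoint_left.mp hAU hi) hiU
      have hnn : ∀ i ∈ Uᶜ, i ∉ A → 0 ≤ s i := by
        intro i hi _
        have hiU : i ∉ U := Finset.mem_compl.mp hi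
        have hne : s i ≠ -1 := fun h => hiU (Finset.mem_filter.mpr ⟨Finset.mem_univ _, h⟩)
        have := hslb i
        omega
      calc (A.card : ℤ) = ∑ i ∈ A, s i := by
            rw [Finset.sum_congr rfl hsA]; simp
        _ ≤ ∑ i ∈ Uᶜ, s i := Finset.sum_le_sum_of_subset_of_nonneg hA_sub hnn
    linarith [hsplit, hUsum, hArest]
  by_cases hA0 : A.card = 0
  · rw [hA0]
    omega
  have hUne : U.Nonempty := by
    rw [← Finset.card_pos]
    omega
  obtain ⟨u₀, hu₀⟩ := hUne
  have htrans : ∃ j : ZMod k, s (j - 1) = -1 ∧ s j ≠ -1 := by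
    by_contra hno
    push_neg at hno
    have hall : ∀ j, s j = -1 := by
      apply zmod_closure (fun j => s j = -1) u₀ ((Finset.mem_filter.mp hu₀).2)
      intro j hj
      exact hno (j + 1) (by rwa [add_sub_cancel_right])
    have hbad : ∑ i : ZMod k, s i = -(k : ℤ) := by
      rw [Finset.sum_congr rfl (fun i _ => hall i)]
      simp [Finset.card_univ, ZMod.card]
    rw [hsum] at hbad
    omega
  obtain ⟨j, hj1, hj2⟩ := htrans
  have hjA : j ∉ A := by
    intro hj
    have hle := h2 j (Finset.mem_filter.mp hj).2
    simp only [hs] at hj1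
    rw [sub_add_cancel] at hj1
    omega
  have hjU : j ∉ U := fun h => hj2 (Finset.mem_filter.mp h).2
  have hsub : A ∪ U ⊆ Finset.univ.erase j := by
    intro i hi
    rw [Finset.mem_erase]
    refine ⟨?_, Finset.mem_univ _⟩
    rintro rfl
    rcases Finset.mem_union.mp hi with h | h
    exacts [hjA h, hjU h]
  have hcard : A.card + U.card ≤ k - 1 := by
    have hle := Finset.card_le_card hsub
    rw [Finset.card_union_of_disjoint hAU] at hle
    rwa [Finset.card_erase_of_mem (Finset.mem_univ _), Finset.card_univ, ZMod.card] at hle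
  have : A.card ≤ U.card := by exact_mod_cast hAleU
  omega

end ZModAux

section Core

variable {n k : ℕ} {buy : Fin n → Finset (Fin n)} {α : ℝ}

/-- Walking around the cycle avoiding the deleted edge `s(vert i, vert (i+1))`. -/
lemma around_walk (hk : 3 ≤ k) (vert : ZMod k → Fin n) (hinj : Function.Injective vert)
    (hadj : ∀ i, (inducedGraph buy).Adj (vert i) (vert (i + 1))) (i : ZMod k) :
    ∀ m : ℕ, m ≤ k - 1 →
      ∃ w : ((inducedGraph buy).deleteEdges {s(vert i, vert (i + 1))}).Walk
        (vert (i + 1)) (vert (i + 1 + (m : ZMod k))), w.length = m := by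
  haveI : NeZero k := ⟨by omega⟩
  intro m
  induction m with
  | zero =>
    intro _
    exact ⟨SimpleGraph.Walk.nil.copy rfl (by norm_num), by simp⟩
  | succ m ih =>
    intro hm
    obtain ⟨w, hw⟩ := ih (by omega)
    have hadjd : ((inducedGraph buy).deleteEdges {s(vert i, vert (i + 1))}).Adj
        (vert (i + 1 + (m : ZMod k))) (vert (i + 1 + (m : ZMod k) + 1)) := by
      rw [SimpleGraph.deleteEdges_adj]
      refine ⟨hadj _, ?_⟩
      rw [Set.mem_singleton_iff, Sym2.eq_iff]
      rintro (⟨h1, h2⟩ | ⟨h1, h2⟩)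
      · apply hinj at h1
        have hcast : ((m + 1 : ℕ) : ZMod k) = 0 := by
          push_cast
          linear_combination h1
        exact zmod_cast_ne_zero hk (by omega) (by omega) hcast
      · apply hinj at h1
        apply hinj at h2
        have hm0 : ((m : ℕ) : ZMod k) = 0 := by linear_combination h1
        have hmeq : m = 0 := by
          by_contra hne
          exact zmod_cast_ne_zero hk (by omega) (by omega) hm0
        subst hmeq
        have h2' : ((2 : ℕ) : ZMod k) = 0 := by
          push_cast
          push_cast at h2
          linear_combination h2
        exact zmod_cast_ne_zero hk (by omega) (by omega) h2'
    refine ⟨(w.concat hadjd).copy rfl (by congr 1; push_cast; ring), ?_⟩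
    rw [SimpleGraph.Walk.length_copy, SimpleGraph.Walk.length_concat, hw]

lemma around_dist (hk : 3 ≤ k) (vert : ZMod k → Fin n) (hinj : Function.Injective vert)
    (hadj : ∀ i, (inducedGraph buy).Adj (vert i) (vert (i + 1))) (i : ZMod k) :
    ((inducedGraph buy).deleteEdges {s(vert i, vert (i + 1))}).Reachable
        (vert i) (vert (i + 1)) ∧
      ((inducedGraph buy).deleteEdges {s(vert i, vert (i + 1))}).dist
        (vert (i + 1)) (vert i) ≤ k - 1 := by
  haveI : NeZero k := ⟨by omega⟩
  obtain ⟨w, hw⟩ := around_walk hk vert hinj hadj i (k - 1) le_rfl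
  have hend : vert (i + 1 + ((k - 1 : ℕ) : ZMod k)) = vert i := by
    congr 1
    have hcast : ((k - 1 : ℕ) : ZMod k) = -1 := by
      rw [Nat.cast_sub (by omega : 1 ≤ k), ZMod.natCast_self, Nat.cast_one]
      ring
    rw [hcast]
    ring
  refine ⟨SimpleGraph.Reachable.symm ⟨w.copy rfl hend⟩, ?_⟩
  calc ((inducedGraph buy).deleteEdges {s(vert i, vert (i + 1))}).dist (vert (i + 1)) (vert i)
      ≤ (w.copy rfl hend).length := SimpleGraph.dist_le _
    _ = k - 1 := by rw [SimpleGraph.Walk.length_copy, hw]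

/-- The distance from `vert i` cannot increase by deleting the cycle edge `e_i` if the
predecessor `vert (i-1)` is strictly closer to `x`. -/
lemma aset_prev (hk : 3 ≤ k) (hG : (inducedGraph buy).Connected)
    (vert : ZMod k → Fin n) (hinj : Function.Injective vert)
    (hadj : ∀ i, (inducedGraph buy).Adj (vert i) (vert (i + 1))) (i : ZMod k) (x : Fin n)
    (hconn' : ((inducedGraph buy).deleteEdges {s(vert i, vert (i + 1))}).Connected)
    (hx : (inducedGraph buy).dist (vert i) x <
      ((inducedGraph buy).deleteEdges {s(vert i, vert (i + 1))}).dist (vert i) x) :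
    (inducedGraph buy).dist (vert i) x ≤ (inducedGraph buy).dist (vert (i - 1)) x := by
  haveI : NeZero k := ⟨by omega⟩
  by_contra hlt
  push_neg at hlt
  obtain ⟨p, hp, hlen⟩ := (hG.preconnected (vert (i - 1)) x).exists_path_of_dist
  have hsub1 : (1 : ZMod k) ≠ 0 := by
    have := zmod_cast_ne_zero hk (m := 1) (by omega) (by omega)
    simpa using this
  have hne_i : vert i ≠ vert (i - 1) := by
    intro h
    apply hinj at h
    apply hsub1
    linear_combination h
  have hnotin : s(vert i, vert (i + 1)) ∉ p.edges := by
    intro hmem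
    have hsup : vert i ∈ p.support := SimpleGraph.Walk.fst_mem_support_of_mem_edges p hmem
    have := length_ge_of_mem_support p hsup hne_i
    omega
  have hq : ∀ e ∈ p.edges, e ∉ ({s(vert i, vert (i + 1))} : Set (Sym2 (Fin n))) := by
    intro e hep hmem
    rw [Set.mem_singleton_iff] at hmem
    exact hnotin (hmem ▸ hep)
  have h1 := SimpleGraph.dist_le (p.toDeleteEdges {s(vert i, vert (i + 1))} hq)
  rw [SimpleGraph.Walk.length_transfer, hlen] at h1
  have hadjd : ((inducedGraph buy).deleteEdges {s(vert i, vert (i + 1))}).Adj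
      (vert i) (vert (i - 1)) := by
    rw [SimpleGraph.deleteEdges_adj]
    constructor
    · have h := hadj (i - 1)
      rw [sub_add_cancel] at h
      exact h.symm
    · rw [Set.mem_singleton_iff, Sym2.eq_iff]
      rintro (⟨h1', h2'⟩ | ⟨h1', h2'⟩)
      · apply hinj at h2'
        have h2c : ((2 : ℕ) : ZMod k) = 0 := by
          push_cast
          linear_combination -h2'
        exact zmod_cast_ne_zero hk (by omega) (by omega) h2c
      · apply hinj at h1'
        apply hsub1
        linear_combination -h1'
  have hone : ((inducedGraph buy).deleteEdges {s(vert i, vert (i + 1))}).dist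
      (vert i) (vert (i - 1)) = 1 := SimpleGraph.dist_eq_one_iff_adj.mpr hadjd
  have htri := hconn'.dist_triangle (u := vert i) (v := vert (i - 1)) (w := x)
  have hmono : ((inducedGraph buy).deleteEdges {s(vert i, vert (i + 1))}).dist
      (vert (i - 1)) x ≤ (inducedGraph buy).dist (vert (i - 1)) x := h1
  omega

end Core

section Main

variable {n k : ℕ} {buy : Fin n → Finset (Fin n)} {α : ℝ}

lemma case_oriented [NeZero k] (hk : 3 ≤ k) (hn : 2 ≤ n) (hα0 : 0 < α)
    (hlegal : ∀ v, v ∉ buy v) (hNE : IsNashEq α buy)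
    (vert : ZMod k → Fin n) (hinj : Function.Injective vert)
    (hadj : ∀ i, (inducedGraph buy).Adj (vert i) (vert (i + 1)))
    (hbuy : ∀ i, vert (i + 1) ∈ buy (vert i)) :
    2 * α ≤ ((k : ℝ) - 2) * ((n : ℝ) - 1) := by
  have hkn : k ≤ n := by
    have h := Fintype.card_le_of_injective vert hinj
    rwa [ZMod.card, Fintype.card_fin] at h
  have hconn' : ∀ i : ZMod k,
      ((inducedGraph buy).deleteEdges {s(vert i, vert (i + 1))}).Connected :=
    fun i => delete_edge_connected hNE.1 (around_dist hk vert hinj hadj i).1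
  have hkey : ∀ i : ZMod k, α ≤ ((k : ℝ) - 2) * (((Finset.univ \ {vert i}).filter (fun x =>
      (inducedGraph buy).dist (vert i) x <
        ((inducedGraph buy).deleteEdges {s(vert i, vert (i + 1))}).dist (vert i) x)).card : ℝ) := by
    intro i
    apply del_key hk hα0 hlegal hNE (hbuy i) (hconn' i)
    rw [SimpleGraph.dist_comm]
    exact (around_dist hk vert hinj hadj i).2
  set A : ZMod k → Finset (Fin n) := fun i => (Finset.univ \ {vert i}).filter (fun x =>
      (inducedGraph buy).dist (vert i) x <
        ((inducedGraph buy).deleteEdges {s(vert i, vert (i + 1))}).dist (vert i) x) with hA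
  have hcount : ∀ x : Fin n,
      2 * (Finset.univ.filter (fun i : ZMod k => x ∈ A i)).card ≤ k - 1 := by
    intro x
    apply cyclic_count hk (fun i => (inducedGraph buy).dist (vert i) x)
    · intro i hi
      simp only [hA, Finset.mem_filter] at hi
      exact (del_facts hNE.1 (hadj i) hi.2).1
    · intro i hi
      simp only [hA, Finset.mem_filter] at hi
      exact aset_prev hk hNE.1 vert hinj hadj i x (hconn' i) hi.2
    · intro i
      have htri := hNE.1.dist_triangle (u := vert (i + 1)) (v := vert i) (w := x)
      have hone : (inducedGraph buy).dist (vert (i + 1)) (vert i) = 1 :=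
        SimpleGraph.dist_eq_one_iff_adj.mpr (hadj i).symm
      omega
  have hdc : ∑ i : ZMod k, (A i).card =
      ∑ x : Fin n, (Finset.univ.filter (fun i : ZMod k => x ∈ A i)).card := by
    calc ∑ i : ZMod k, (A i).card
        = ∑ i : ZMod k, ∑ x : Fin n, (if x ∈ A i then 1 else 0) := by
          refine Finset.sum_congr rfl fun i _ => ?_
          rw [Finset.sum_ite_mem, Finset.univ_inter, Finset.card_eq_sum_ones]
      _ = ∑ x : Fin n, ∑ i : ZMod k, (if x ∈ A i then 1 else 0) := Finset.sum_comm
      _ = ∑ x : Fin n, (Finset.univ.filter (fun i : ZMod k => x ∈ A i)).card := by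
          refine Finset.sum_congr rfl fun x _ => ?_
          rw [Finset.card_eq_sum_ones, Finset.sum_filter]
  have hsum2 : 2 * ∑ i : ZMod k, (A i).card ≤ k * (n - 1) := by
    have e1 : n * (k - 1) + n = n * k := by
      rw [← Nat.mul_succ, show (k - 1).succ = k from by omega]
    have e2 : k * (n - 1) + k = n * k := by
      rw [← Nat.mul_succ, show (n - 1).succ = n from by omega, Nat.mul_comm]
    have hup : 2 * ∑ i : ZMod k, (A i).card ≤ n * (k - 1) := by
      calc 2 * ∑ i : ZMod k, (A i).card
          = ∑ x : Fin n, 2 * (Finset.univ.filter (fun i : ZMod k => x ∈ A i)).card := by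
            rw [hdc, Finset.mul_sum]
        _ ≤ ∑ _x : Fin n, (k - 1) := Finset.sum_le_sum fun x _ => hcount x
        _ = n * (k - 1) := by
            rw [Finset.sum_const, Finset.card_univ, Fintype.card_fin, smul_eq_mul]
    omega
  have hk0 : (0 : ℝ) < (k : ℝ) := by exact_mod_cast (by omega : 0 < k)
  have hk2 : (0 : ℝ) ≤ (k : ℝ) - 2 := by
    have : (3 : ℝ) ≤ (k : ℝ) := by exact_mod_cast hk
    linarith
  have hsumreal : (k : ℝ) * α ≤ ((k : ℝ) - 2) * (∑ i : ZMod k, ((A i).card : ℝ)) := by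
    calc (k : ℝ) * α = ∑ _i : ZMod k, α := by
          rw [Finset.sum_const, Finset.card_univ, ZMod.card, nsmul_eq_mul]
      _ ≤ ∑ i : ZMod k, ((k : ℝ) - 2) * ((A i).card : ℝ) :=
          Finset.sum_le_sum fun i _ => hkey i
      _ = ((k : ℝ) - 2) * ∑ i : ZMod k, ((A i).card : ℝ) := by rw [Finset.mul_sum]
  have hcastsum : (2 : ℝ) * ∑ i : ZMod k, ((A i).card : ℝ) ≤ (k : ℝ) * ((n : ℝ) - 1) := by
    have h := (Nat.cast_le (α := ℝ)).mpr hsum2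
    push_cast [Nat.cast_sub (by omega : 1 ≤ n)] at h
    linarith
  rw [← mul_le_mul_iff_right₀ hk0]
  nlinarith [hsumreal, hcastsum, hk2, mul_le_mul_of_nonneg_left hcastsum hk2]

lemma case_double [NeZero k] (hk : 3 ≤ k) (hn : 2 ≤ n) (hα0 : 0 < α)
    (hlegal : ∀ v, v ∉ buy v) (hNE : IsNashEq α buy)
    (vert : ZMod k → Fin n) (hinj : Function.Injective vert)
    (hadj : ∀ i, (inducedGraph buy).Adj (vert i) (vert (i + 1))) (i : ZMod k)
    (hb1 : vert i ∈ buy (vert (i + 1))) (hb2 : vert (i + 2) ∈ buy (vert (i + 1))) :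
    2 * α ≤ ((k : ℝ) - 2) * ((n : ℝ) - 1) := by
  have hd1 := around_dist hk vert hinj hadj i
  have hd2 := around_dist hk vert hinj hadj (i + 1)
  rw [show i + 1 + 1 = i + 2 from by ring] at hd2
  have hc1 := delete_edge_connected hNE.1 hd1.1
  have hc2 := delete_edge_connected hNE.1 hd2.1
  have hswap : ({s(vert (i + 1), vert i)} : Set (Sym2 (Fin n))) =
      {s(vert i, vert (i + 1))} := by rw [Sym2.eq_swap]
  have hkey1 : α ≤ ((k : ℝ) - 2) * (((Finset.univ \ {vert (i + 1)}).filter (fun x =>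
      (inducedGraph buy).dist (vert (i + 1)) x <
        ((inducedGraph buy).deleteEdges {s(vert (i + 1), vert i)}).dist
          (vert (i + 1)) x)).card : ℝ) := by
    apply del_key hk hα0 hlegal hNE hb1
    · rw [hswap]; exact hc1
    · rw [hswap]; exact hd1.2
  have hkey2 : α ≤ ((k : ℝ) - 2) * (((Finset.univ \ {vert (i + 1)}).filter (fun x =>
      (inducedGraph buy).dist (vert (i + 1)) x <
        ((inducedGraph buy).deleteEdges {s(vert (i + 1), vert (i + 2))}).dist
          (vert (i + 1)) x)).card : ℝ) := by
    apply del_key hk hα0 hlegal hNE hb2 hc2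
    rw [SimpleGraph.dist_comm]
    exact hd2.2
  set A1 : Finset (Fin n) := (Finset.univ \ {vert (i + 1)}).filter (fun x =>
      (inducedGraph buy).dist (vert (i + 1)) x <
        ((inducedGraph buy).deleteEdges {s(vert (i + 1), vert i)}).dist
          (vert (i + 1)) x) with hA1
  set A2 : Finset (Fin n) := (Finset.univ \ {vert (i + 1)}).filter (fun x =>
      (inducedGraph buy).dist (vert (i + 1)) x <
        ((inducedGraph buy).deleteEdges {s(vert (i + 1), vert (i + 2))}).dist
          (vert (i + 1)) x) with hA2
  have hdisj : Disjoint A1 A2 := by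
    rw [Finset.disjoint_left]
    intro x hx1 hx2
    rw [hA1, Finset.mem_filter] at hx1
    rw [hA2, Finset.mem_filter] at hx2
    obtain ⟨p, hp, hlen⟩ := (hNE.1.preconnected (vert (i + 1)) x).exists_path_of_dist
    have he1 : s(vert (i + 1), vert i) ∈ p.edges := by
      by_contra he
      have hq : ∀ e ∈ p.edges, e ∉ ({s(vert (i + 1), vert i)} : Set (Sym2 (Fin n))) := by
        intro e hep hmem
        rw [Set.mem_singleton_iff] at hmem
        exact he (hmem ▸ hep)
      have hd := SimpleGraph.dist_le (p.toDeleteEdges _ hq)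
      rw [SimpleGraph.Walk.length_transfer, hlen] at hd
      omega
    have he2 : s(vert (i + 1), vert (i + 2)) ∈ p.edges := by
      by_contra he
      have hq : ∀ e ∈ p.edges, e ∉ ({s(vert (i + 1), vert (i + 2))} : Set (Sym2 (Fin n))) := by
        intro e hep hmem
        rw [Set.mem_singleton_iff] at hmem
        exact he (hmem ▸ hep)
      have hd := SimpleGraph.dist_le (p.toDeleteEdges _ hq)
      rw [SimpleGraph.Walk.length_transfer, hlen] at hd
      omega
    have heq := first_edge_unique p hp he1 he2
    apply hinj at heq
    have h2c : ((2 : ℕ) : ZMod k) = 0 := by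
      push_cast
      linear_combination -heq
    exact zmod_cast_ne_zero hk (by omega) (by omega) h2c
  have hcards : A1.card + A2.card ≤ n - 1 := by
    have hsub : A1 ∪ A2 ⊆ Finset.univ \ {vert (i + 1)} := by
      rw [hA1, hA2]
      exact Finset.union_subset (Finset.filter_subset _ _) (Finset.filter_subset _ _)
    have hle := Finset.card_le_card hsub
    rw [Finset.card_union_of_disjoint hdisj] at hle
    have hcardsd : (Finset.univ \ {vert (i + 1)} : Finset (Fin n)).card = n - 1 := by
      rw [Finset.card_sdiff_of_subset (by simp), Finset.card_univ, Fintype.card_fin,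
        Finset.card_singleton]
    omega
  have hk2 : (0 : ℝ) ≤ (k : ℝ) - 2 := by
    have : (3 : ℝ) ≤ (k : ℝ) := by exact_mod_cast hk
    linarith
  have hcast : ((A1.card : ℝ) + (A2.card : ℝ)) ≤ (n : ℝ) - 1 := by
    have h := (Nat.cast_le (α := ℝ)).mpr hcards
    push_cast [Nat.cast_sub (by omega : 1 ≤ n)] at h
    linarith
  have := mul_le_mul_of_nonneg_left hcast hk2
  linarith [hkey1, hkey2]

end Main

/-- Suppose `α > 2(n-1)` and the strategy profile is a Nash equilibrium whose induced
graph contains a cycle. Then the girth of the induced graph is at least `2α/(n-1) + 2`,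
i.e. every cycle has length at least `2α/(n-1) + 2`. -/
theorem girth_lower_bound (n : ℕ) (α : ℝ) (hn : 2 ≤ n) (hα0 : 0 < α)
    (buy : Fin n → Finset (Fin n)) (hlegal : ∀ v, v ∉ buy v)
    (hα : α > 2 * ((n : ℝ) - 1))
    (hNE : IsNashEq α buy)
    (hcyc : ∃ (a : Fin n) (c : (inducedGraph buy).Walk a a), c.IsCycle) :
    ∀ (a : Fin n) (c : (inducedGraph buy).Walk a a), c.IsCycle →
      2 * α / ((n : ℝ) - 1) + 2 ≤ (c.length : ℝ) := by
  intro a c hc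
  have hk3 : 3 ≤ c.length := hc.three_le_length
  haveI : NeZero c.length := ⟨by omega⟩
  set vert : ZMod c.length → Fin n := fun i => c.getVert i.val with hvert
  have hvs : ∀ i : ZMod c.length, c.getVert ((i + 1).val) = c.getVert (i.val + 1) := by
    intro i
    by_cases hiv : i.val + 1 = c.length
    · have hi1 : (i + 1 : ZMod c.length) = 0 := by
        conv_lhs => rw [← ZMod.natCast_zmod_val i]
        rw [← Nat.cast_one, ← Nat.cast_add, hiv, ZMod.natCast_self]
      rw [hi1, ZMod.val_zero, SimpleGraph.Walk.getVert_zero, hiv,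
        SimpleGraph.Walk.getVert_length]
    · have hlt : i.val + 1 < c.length := by
        have := ZMod.val_lt i
        omega
      have hval : (i + 1 : ZMod c.length).val = i.val + 1 := by
        conv_lhs => rw [show (i + 1 : ZMod c.length) = ((i.val + 1 : ℕ) : ZMod c.length) from by
          rw [Nat.cast_add, ZMod.natCast_zmod_val, Nat.cast_one]]
        rw [ZMod.val_cast_of_lt hlt]
      rw [hval]
  have hadj : ∀ i : ZMod c.length, (inducedGraph buy).Adj (vert i) (vert (i + 1)) := by
    intro i
    show (inducedGraph buy).Adj (c.getVert i.val) (c.getVert ((i + 1).val))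
    rw [hvs i]
    exact c.adj_getVert_succ (ZMod.val_lt i)
  have hinj : Function.Injective vert := by
    intro i j hij
    have heq := cycle_getVert_inj hc (ZMod.val_lt i) (ZMod.val_lt j) hij
    conv_lhs => rw [← ZMod.natCast_zmod_val i]
    conv_rhs => rw [← ZMod.natCast_zmod_val j]
    rw [heq]
  have hmain : 2 * α ≤ ((c.length : ℝ) - 2) * ((n : ℝ) - 1) := by
    by_cases hdouble : ∃ i : ZMod c.length,
        vert i ∈ buy (vert (i + 1)) ∧ vert (i + 2) ∈ buy (vert (i + 1))
    · obtain ⟨i, h1, h2⟩ := hdouble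
      exact case_double hk3 hn hα0 hlegal hNE vert hinj hadj i h1 h2
    · push_neg at hdouble
      by_cases hF : ∀ i : ZMod c.length, vert (i + 1) ∈ buy (vert i)
      · exact case_oriented hk3 hn hα0 hlegal hNE vert hinj hadj hF
      · push_neg at hF
        obtain ⟨i₀, hi₀⟩ := hF
        have hB0 : vert i₀ ∈ buy (vert (i₀ + 1)) := by
          rcases (hadj i₀).2 with h | h
          exacts [h, absurd h hi₀]
        have hBall : ∀ j, vert j ∈ buy (vert (j + 1)) := by
          apply zmod_closure (fun j => vert j ∈ buy (vert (j + 1))) i₀ hB0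
          intro j hj
          have hnotF : vert (j + 1 + 1) ∉ buy (vert (j + 1)) := fun h =>
            hdouble j hj (by rwa [show j + 1 + 1 = j + 2 from by ring] at h)
          rcases (hadj (j + 1)).2 with h | h
          exacts [h, absurd h hnotF]
        have hinj' : Function.Injective (fun i : ZMod c.length => vert (-i)) :=
          fun i j h => neg_injective (hinj h)
        have hadj' : ∀ i : ZMod c.length,
            (inducedGraph buy).Adj (vert (-i)) (vert (-(i + 1))) := by
          intro i
          have h := hadj (-(i + 1))
          rw [show -(i + 1) + 1 = -i from by ring] at h
          exact h.symm
        have hbuy' : ∀ i : ZMod c.length, vert (-(i + 1)) ∈ buy (vert (-i)) := by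
          intro i
          have h := hBall (-(i + 1))
          rw [show -(i + 1) + 1 = -i from by ring] at h
          exact h
        exact case_oriented hk3 hn hα0 hlegal hNE (fun i => vert (-i)) hinj' hadj' hbuy'
  have hn1 : (0 : ℝ) < (n : ℝ) - 1 := by
    have : (2 : ℝ) ≤ (n : ℝ) := by exact_mod_cast hn
    linarith
  have hdiv : 2 * α / ((n : ℝ) - 1) ≤ (c.length : ℝ) - 2 := by
    rw [div_le_iff₀ hn1]
    linarith [hmain]
  linarith
end

section
/- Let G be a connected graph, let C = v_0, v_1, …, v_{k−1}, v_k = v_0 be a cycle in G, let e_i denote the edge {v_i, v_{i+1}} (indices mod k), and let u be any vertex of G. Then the number of indices i ∈ {0,…,k−1} for which every shortest path from v_i to u uses the edge e_i (equivalently, d_{G−e_i}(v_i,u) > d_G(v_i,u)) is at most (k−1)/2. -/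
open SimpleGraph

section Aux
variable {V : Type*} {G : SimpleGraph V}

private lemma getElem_succ_eq_tail {α : Type*} {l : List α} {n : ℕ} (h : n + 1 < l.length)
    (h' : n < l.tail.length) : l[n + 1] = l.tail[n] := by
  cases l with
  | nil => simp at h
  | cons a t => simp

private lemma getVert_eq_support_getElem' {v w : V} (p : G.Walk v w) (i : ℕ)
    (h : i < p.support.length) : p.getVert i = p.support[i] := by
  induction p generalizing i with
  | nil => simp at h; simp [h]
  | cons hadj q ih =>
    cases i with
    | zero => simp [SimpleGraph.Walk.getVert_zero]
    | succ n =>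
      simp only [SimpleGraph.Walk.support_cons, List.getElem_cons_succ]
      exact ih n (by simpa [SimpleGraph.Walk.support_cons] using h)

private lemma cycle_getVert_inj_s11 {a : V} {p : G.Walk a a} (hp : p.IsCycle)
    {i j : ℕ} (hi1 : 1 ≤ i) (hi2 : i ≤ p.length) (hj1 : 1 ≤ j) (hj2 : j ≤ p.length)
    (h : p.getVert i = p.getVert j) : i = j := by
  have hnd := hp.support_nodup
  have hlen : p.support.length = p.length + 1 := SimpleGraph.Walk.length_support p
  have htaillen : p.support.tail.length = p.length := by
    rw [List.length_tail, hlen]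
    omega
  have htail : ∀ n : ℕ, 1 ≤ n → n ≤ p.length →
      ∀ (hb : n - 1 < p.support.tail.length), p.getVert n = p.support.tail[n - 1] := by
    intro n h1 h2 hb
    obtain ⟨n', rfl⟩ : ∃ n', n = n' + 1 := ⟨n - 1, by omega⟩
    rw [getVert_eq_support_getElem' p (n' + 1) (by omega)]
    have := getElem_succ_eq_tail (l := p.support) (n := n') (by omega) (by simpa using hb)
    simpa using this
  have hbi : i - 1 < p.support.tail.length := by omega
  have hbj : j - 1 < p.support.tail.length := by omega
  rw [htail i hi1 hi2 hbi, htail j hj1 hj2 hbj] at h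
  have := (List.Nodup.getElem_inj_iff hnd).mp h
  omega
end Aux

section Aux2
variable {V : Type*} [DecidableEq V] {G : SimpleGraph V}

private lemma dist_le_of_mem_support {v u x : V} {p : G.Walk v u}
    (hp : p.length = G.dist v u) (hx : x ∈ p.support) : G.dist x u ≤ G.dist v u := by
  calc G.dist x u ≤ (p.dropUntil x hx).length := SimpleGraph.dist_le _
    _ ≤ p.length := SimpleGraph.Walk.length_dropUntil_le p hx
    _ = G.dist v u := hp

private lemma delete_dist_le_of_ge (hG : G.Connected) {v w u : V} (h : G.Adj v w)
    (hd : G.dist v u ≤ G.dist w u) :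
    (G.deleteEdges {s(v, w)}).dist v u ≤ G.dist v u := by
  obtain ⟨p, hp⟩ := hG.exists_walk_length_eq_dist v u
  have hbl : p.bypass.length = G.dist v u :=
    le_antisymm (hp ▸ SimpleGraph.Walk.length_bypass_le p) (SimpleGraph.dist_le _)
  have hbp : p.bypass.IsPath := SimpleGraph.Walk.bypass_isPath p
  set q := p.bypass with hq
  clear_value q
  cases q with
  | nil => simp [SimpleGraph.dist_self]
  | @cons _ x _ h' r =>
    rw [SimpleGraph.Walk.cons_isPath_iff] at hbp
    by_cases hxw : x = w
    · subst hxw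
      exfalso
      have h1 : G.dist x u ≤ r.length := SimpleGraph.dist_le r
      have h2 : (SimpleGraph.Walk.cons h' r).length = r.length + 1 := by simp
      omega
    · have hne : ∀ e ∈ (SimpleGraph.Walk.cons h' r).edges, e ∉ ({s(v, w)} : Set (Sym2 V)) := by
        intro e he
        simp only [Set.mem_singleton_iff]
        rcases List.mem_cons.mp (by simpa using he) with rfl | he'
        · intro hcontra
          rw [Sym2.eq_iff] at hcontra
          rcases hcontra with ⟨-, rfl⟩ | ⟨rfl, rfl⟩
          · exact hxw rfl
          · exact G.irrefl h
        · intro hcontra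
          subst hcontra
          exact hbp.2 (SimpleGraph.Walk.fst_mem_support_of_mem_edges r he')
      calc (G.deleteEdges {s(v, w)}).dist v u
          ≤ ((SimpleGraph.Walk.cons h' r).toDeleteEdges _ hne).length := SimpleGraph.dist_le _
        _ = (SimpleGraph.Walk.cons h' r).length := SimpleGraph.Walk.length_transfer _ _
        _ = G.dist v u := hbl

private lemma delete_dist_le_of_detour (hG : G.Connected) {v w w' u : V} (h : G.Adj v w)
    (h' : G.Adj v w') (hne : w' ≠ w) (hd : G.dist w' u < G.dist v u) :
    (G.deleteEdges {s(v, w)}).dist v u ≤ G.dist v u := by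
  obtain ⟨p, hp⟩ := hG.exists_walk_length_eq_dist w' u
  have hnomem : ∀ e ∈ (SimpleGraph.Walk.cons h' p).edges, e ∉ ({s(v, w)} : Set (Sym2 V)) := by
    intro e he
    simp only [Set.mem_singleton_iff]
    rcases List.mem_cons.mp (by simpa using he) with rfl | he'
    · intro hcontra
      rw [Sym2.eq_iff] at hcontra
      rcases hcontra with ⟨-, rfl⟩ | ⟨rfl, rfl⟩
      · exact hne rfl
      · exact G.irrefl h
    · intro hcontra
      subst hcontra
      have hmem : v ∈ p.support := SimpleGraph.Walk.fst_mem_support_of_mem_edges p he'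
      have := dist_le_of_mem_support hp hmem
      omega
  calc (G.deleteEdges {s(v, w)}).dist v u
      ≤ ((SimpleGraph.Walk.cons h' p).toDeleteEdges _ hnomem).length := SimpleGraph.dist_le _
    _ = (SimpleGraph.Walk.cons h' p).length := SimpleGraph.Walk.length_transfer _ _
    _ = G.dist w' u + 1 := by simp [hp]
    _ ≤ G.dist v u := hd

private lemma bad_step (hG : G.Connected) {v w u : V} (h : G.Adj v w)
    (hb : G.dist v u < (G.deleteEdges {s(v, w)}).dist v u) :
    G.dist w u + 1 = G.dist v u := by
  have h1 : G.dist v u ≤ G.dist v w + G.dist w u := hG.dist_triangle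
  have h2 : G.dist v w ≤ 1 := by
    simpa using SimpleGraph.dist_le (SimpleGraph.Walk.cons h SimpleGraph.Walk.nil)
  have h3 : ¬ (G.dist v u ≤ G.dist w u) := by
    intro hle
    exact absurd (delete_dist_le_of_ge hG h hle) (by omega)
  omega
end Aux2

/-- Let `c = v_0, v_1, …, v_k = v_0` be a cycle in a finite connected graph `G` and `u` any
vertex. Then the number of indices `i ∈ {0,…,k-1}` such that every shortest path from `v_i`
to `u` uses the edge `e_i = {v_i, v_{i+1}}` (equivalently, deleting `e_i` strictly increases
the distance from `v_i` to `u`) is at most `(k-1)/2`. -/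
theorem few_indices_need_cycle_edge {V : Type*} [Fintype V]
    (G : SimpleGraph V) (hG : G.Connected)
    (a : V) (c : G.Walk a a) (hc : c.IsCycle) (u : V) :
    (({i : Fin c.length |
        G.dist (c.getVert i) u <
          (G.deleteEdges {s(c.getVert i, c.getVert (i + 1))}).dist (c.getVert i) u} :
        Set (Fin c.length)).ncard : ℝ) ≤ ((c.length : ℝ) - 1) / 2 := by
  classical
  set k := c.length with hk
  have hk3 : 3 ≤ k := hc.three_le_length
  set P : Fin k → Prop := fun i =>
    G.dist (c.getVert i) u <
      (G.deleteEdges {s(c.getVert i, c.getVert ((i : ℕ) + 1))}).dist (c.getVert i) u with hP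
  set B : Finset (Fin k) := Finset.univ.filter P with hBdef
  have hset : ({i : Fin k | P i} : Set (Fin k)) = ↑B := by
    ext i; simp [hBdef]
  rw [hset, Set.ncard_coe_finset]
  set g : ℕ → ℤ := fun j => (G.dist (c.getVert j) u : ℤ) with hg
  set f : Fin k → ℤ := fun i => g ((i : ℕ) + 1) - g i with hf
  have hgklem : c.getVert k = a := by rw [hk]; exact c.getVert_length
  have hg0lem : c.getVert 0 = a := c.getVert_zero
  have hgk : g k = g 0 := by simp only [hg, hgklem, hg0lem]
  have hsum : ∑ i : Fin k, f i = 0 := by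
    rw [hf, Fin.sum_univ_eq_sum_range (fun j => g (j + 1) - g j) k, Finset.sum_range_sub g k, hgk]
    ring
  have hadj : ∀ i : Fin k, G.Adj (c.getVert i) (c.getVert ((i : ℕ) + 1)) :=
    fun i => c.adj_getVert_succ i.isLt
  have hle1 : ∀ i : Fin k, f i ≤ 1 := by
    intro i
    have h1 : G.dist (c.getVert ((i : ℕ) + 1)) u ≤
        G.dist (c.getVert ((i : ℕ) + 1)) (c.getVert i) + G.dist (c.getVert i) u :=
      hG.dist_triangle
    have h2 : G.dist (c.getVert ((i : ℕ) + 1)) (c.getVert i) ≤ 1 := by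
      simpa using SimpleGraph.dist_le (SimpleGraph.Walk.cons (hadj i).symm SimpleGraph.Walk.nil)
    simp only [hf, hg]
    push_cast
    omega
  have hBneg : ∀ i ∈ B, f i = -1 := by
    intro i hi
    have hPi : P i := (Finset.mem_filter.mp hi).2
    have := bad_step hG (hadj i) hPi
    simp only [hf, hg]
    push_cast
    omega
  have hex : ∃ j, j ∉ B ∧ f j ≤ 0 := by
    obtain ⟨m, -, hm⟩ := Finset.exists_max_image Finset.univ (fun i : Fin k => g i)
      ⟨⟨0, by omega⟩, Finset.mem_univ _⟩
    have hmax : ∀ j : ℕ, j ≤ k → g j ≤ g m := by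
      intro j hj
      rcases eq_or_lt_of_le hj with rfl | hlt
      · rw [hgk]; exact hm ⟨0, by omega⟩ (Finset.mem_univ _)
      · exact hm ⟨j, hlt⟩ (Finset.mem_univ _)
    set pidx : ℕ := if (m : ℕ) = 0 then k - 1 else (m : ℕ) - 1 with hpidx
    have hpm : ((m : ℕ) = 0 ∧ pidx = k - 1) ∨ (1 ≤ (m : ℕ) ∧ pidx + 1 = (m : ℕ)) := by
      rw [hpidx]; split <;> omega
    have hpidx_lt : pidx < k := by
      rcases hpm with ⟨-, h⟩ | ⟨-, h⟩ <;> (have := m.isLt; omega)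
    have hpvert : c.getVert (pidx + 1) = c.getVert (m : ℕ) := by
      rcases hpm with ⟨h0, h1⟩ | ⟨h0, h1⟩
      · rw [h1, show k - 1 + 1 = k by omega, hgklem, h0, hg0lem]
      · rw [h1]
    by_cases hcase : g pidx = g m
    · refine ⟨⟨pidx, hpidx_lt⟩, ?_, ?_⟩
      · intro hmem
        have hval := hBneg _ hmem
        simp only [hf, hg, Fin.val_mk] at hval
        rw [hpvert] at hval
        simp only [hg] at hcase
        omega
      · simp only [hf, Fin.val_mk]
        simp only [hg]
        rw [hpvert]
        simp only [hg] at hcase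
        omega
    · have hlt : g pidx < g m := lt_of_le_of_ne (hmax pidx (by omega)) hcase
      refine ⟨m, ?_, ?_⟩
      · intro hmem
        have hPm : P m := (Finset.mem_filter.mp hmem).2
        have hadjm : G.Adj (c.getVert (m : ℕ)) (c.getVert ((m : ℕ) + 1)) := hadj m
        have hadjp : G.Adj (c.getVert (m : ℕ)) (c.getVert pidx) := by
          have h1 := c.adj_getVert_succ (i := pidx) (by rw [← hk]; omega)
          rw [hpvert] at h1
          exact h1.symm
        have hne : c.getVert pidx ≠ c.getVert ((m : ℕ) + 1) := by
          intro hcontra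
          set i₁ : ℕ := if pidx = 0 then k else pidx with hi₁
          have hi₁fact : (i₁ = pidx ∧ 1 ≤ pidx) ∨ (pidx = 0 ∧ i₁ = k) := by
            rw [hi₁]; split <;> omega
          have hv₁ : c.getVert i₁ = c.getVert pidx := by
            rcases hi₁fact with ⟨h1, -⟩ | ⟨h1, h2⟩
            · rw [h1]
            · rw [h2, hgklem, h1, hg0lem]
          have heq : c.getVert i₁ = c.getVert ((m : ℕ) + 1) := by rw [hv₁, hcontra]
          have h1 : 1 ≤ i₁ := by rcases hi₁fact with ⟨h1, h2⟩ | ⟨-, h2⟩ <;> omega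
          have h2 : i₁ ≤ k := by
            rcases hi₁fact with ⟨h1', -⟩ | ⟨-, h2'⟩ <;> omega
          have h3 : 1 ≤ (m : ℕ) + 1 := by omega
          have h4 : (m : ℕ) + 1 ≤ k := m.isLt
          have hinj := cycle_getVert_inj_s11 hc h1 (by rw [← hk]; exact h2) h3
            (by rw [← hk]; exact h4) heq
          rcases hi₁fact with ⟨h1', h2'⟩ | ⟨h1', h2'⟩ <;> rcases hpm with ⟨ha', hb'⟩ | ⟨ha', hb'⟩ <;>
            omega
        have hd : G.dist (c.getVert pidx) u < G.dist (c.getVert (m : ℕ)) u := by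
          simp only [hg] at hlt
          exact_mod_cast hlt
        have hcon := delete_dist_le_of_detour hG hadjm hadjp hne hd
        simp only [hP] at hPm
        omega
      · simp only [hf]
        have := hmax ((m : ℕ) + 1) m.isLt
        omega
  obtain ⟨j, hjB, hj0⟩ := hex
  have hsplit : ∑ i ∈ B, f i + ∑ i ∈ Bᶜ, f i = 0 := by
    rw [Finset.sum_add_sum_compl]; exact hsum
  have hBsum : ∑ i ∈ B, f i = -(B.card : ℤ) := by
    rw [Finset.sum_congr rfl hBneg]
    simp
  have hjmem : j ∈ Bᶜ := Finset.mem_compl.mpr hjB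
  have hCsum : ∑ i ∈ Bᶜ, f i ≤ (Bᶜ.card : ℤ) - 1 := by
    rw [← Finset.add_sum_erase _ f hjmem]
    have h1 : ∑ i ∈ Bᶜ.erase j, f i ≤ ((Bᶜ.erase j).card : ℤ) * 1 := by
      apply Finset.sum_le_card_nsmul
      intro x _
      exact hle1 x
    have h2 : (Bᶜ.erase j).card = Bᶜ.card - 1 := Finset.card_erase_of_mem hjmem
    have h3 : 1 ≤ Bᶜ.card := Finset.card_pos.mpr ⟨j, hjmem⟩
    have h4 : ((Bᶜ.erase j).card : ℤ) = (Bᶜ.card : ℤ) - 1 := by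
      rw [h2]; push_cast [h3]; omega
    omega
  have hcompl : (Bᶜ.card : ℤ) = k - B.card := by
    have h1 := Finset.card_compl B
    have hle : B.card ≤ Fintype.card (Fin k) := Finset.card_le_univ B
    simp only [Fintype.card_fin] at h1 hle
    rw [h1]
    push_cast
    omega
  have hfinal : 2 * (B.card : ℤ) + 1 ≤ k := by omega
  have hgoal : (B.card : ℝ) ≤ ((k : ℝ) - 1) / 2 := by
    have h5 : ((2 * (B.card : ℤ) + 1 : ℤ) : ℝ) ≤ ((k : ℤ) : ℝ) := by exact_mod_cast hfinal
    push_cast at h5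
    linarith
  exact hgoal
end
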